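/- arXiv:1706.07456 — 13 statements merged into one kernel-verified Lean document; each statement's English description precedes it below -/
import Mathlib

section
/- Let h : ℂ → ℂ be C^∞-smooth on a neighborhood of 0 with h(0) ≠ 0, and define ψ(z) := z·h(z). Then the map Ψ : ℂ × ℂ → ℂ × ℂ defined by Ψ(u,v) := (u, v·h(u·v)) is C^∞-smooth on a neighborhood of (0,0), satisfies Ψ(0,0) = (0,0), has invertible real Fréchet derivative at (0,0), and satisfies that the product of the two components of Ψ(u,v) equals ψ(u·v) for all (u,v) in a neighborhood of (0,0). In particular, ψ is liftable. -/
open Complex Filter Topology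

/-- A map `ψ : ℂ → ℂ`, smooth near `0` with `ψ 0 = 0`, is *liftable* if there is a
map `Ψ : ℂ × ℂ → ℂ × ℂ`, smooth near `(0,0)`, with `Ψ (0,0) = (0,0)`, invertible real
Fréchet derivative at `(0,0)`, such that near `(0,0)` the product of the two
components of `Ψ (u,v)` equals `ψ (u·v)`. -/
def Liftable (ψ : ℂ → ℂ) : Prop :=
  ∃ Ψ : ℂ × ℂ → ℂ × ℂ,
    ContDiffAt ℝ (⊤ : ℕ∞) Ψ 0 ∧ Ψ 0 = 0 ∧ IsUnit (fderiv ℝ Ψ 0) ∧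
    ∀ᶠ p : ℂ × ℂ in 𝓝 0, (Ψ p).1 * (Ψ p).2 = ψ (p.1 * p.2)

/-- If `h` is smooth near `0` with `h 0 ≠ 0` and `ψ z = z·h z`, then
`Ψ (u,v) = (u, v·h (u·v))` is smooth near `(0,0)`, fixes the origin, has invertible
real Fréchet derivative there, and lifts `ψ` through `(u,v) ↦ u·v`.
In particular `ψ` is liftable. -/
theorem statement1 (h : ℂ → ℂ) (hsm : ContDiffAt ℝ (⊤ : ℕ∞) h 0) (h0 : h 0 ≠ 0)
    (ψ : ℂ → ℂ) (hψ : ∀ z, ψ z = z * h z)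
    (Ψ : ℂ × ℂ → ℂ × ℂ) (hΨ : ∀ u v : ℂ, Ψ (u, v) = (u, v * h (u * v))) :
    ContDiffAt ℝ (⊤ : ℕ∞) Ψ 0 ∧ Ψ 0 = 0 ∧ IsUnit (fderiv ℝ Ψ 0) ∧
    (∀ᶠ p : ℂ × ℂ in 𝓝 0, (Ψ p).1 * (Ψ p).2 = ψ (p.1 * p.2)) ∧
    Liftable ψ := by
  have hΨeq : Ψ = fun p : ℂ × ℂ => (p.1, p.2 * h (p.1 * p.2)) := by
    funext p
    rw [← Prod.mk.eta (p := p), hΨ]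
  have hmul : ContDiffAt ℝ (⊤:ℕ∞) (fun p : ℂ × ℂ => p.1 * p.2) 0 :=
    (contDiff_fst.mul contDiff_snd).contDiffAt
  have hsm' : ContDiffAt ℝ (⊤:ℕ∞) h ((0:ℂ × ℂ).1 * (0:ℂ × ℂ).2) := by simpa using hsm
  have hh : ContDiffAt ℝ (⊤:ℕ∞) (fun p : ℂ × ℂ => h (p.1 * p.2)) 0 :=
    ContDiffAt.comp (g := h) (f := fun p : ℂ × ℂ => p.1 * p.2) 0 hsm' hmul
  have hsmooth : ContDiffAt ℝ (⊤:ℕ∞) Ψ 0 := by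
    rw [hΨeq]
    exact ContDiffAt.prodMk contDiffAt_fst (contDiffAt_snd.mul hh)
  set L : (ℂ × ℂ) →L[ℝ] ℂ × ℂ :=
    (ContinuousLinearMap.id ℝ ℂ).prodMap (h 0 • ContinuousLinearMap.id ℝ ℂ) with hL
  obtain ⟨D, hD⟩ : ∃ D, HasFDerivAt (fun p : ℂ × ℂ => h (p.1*p.2)) D 0 :=
    ⟨_, (hh.differentiableAt (by simp)).hasFDerivAt⟩
  have hg : HasFDerivAt (fun p : ℂ × ℂ => p.2 * h (p.1*p.2))
      ((h 0 • ContinuousLinearMap.id ℝ ℂ).comp (ContinuousLinearMap.snd ℝ ℂ ℂ)) 0 := by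
    have := (hasFDerivAt_snd (𝕜 := ℝ) (E := ℂ) (F := ℂ) (p := (0:ℂ × ℂ))).mul hD
    refine HasFDerivAt.congr_fderiv this ?_
    ext p <;> simp [mul_comm]
  have hF : HasFDerivAt Ψ L 0 := by
    rw [hΨeq]
    exact HasFDerivAt.prodMk hasFDerivAt_fst hg
  set L' : (ℂ × ℂ) →L[ℝ] ℂ × ℂ :=
    (ContinuousLinearMap.id ℝ ℂ).prodMap ((h 0)⁻¹ • ContinuousLinearMap.id ℝ ℂ) with hL'
  have h1 : L * L' = 1 := by
    ext p <;> simp [hL, hL', smul_smul, mul_inv_cancel_left₀ h0]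
  have h2 : L' * L = 1 := by
    ext p <;> simp [hL, hL', smul_smul, inv_mul_cancel_left₀ h0]
  have hunit : IsUnit (fderiv ℝ Ψ 0) := by
    rw [hF.fderiv]
    exact ⟨⟨L, L', h1, h2⟩, rfl⟩
  have h00 : Ψ 0 = 0 := by
    rw [show (0:ℂ × ℂ) = ((0:ℂ), (0:ℂ)) from rfl, hΨ]
    simp
  have hev : ∀ᶠ p : ℂ × ℂ in 𝓝 0, (Ψ p).1 * (Ψ p).2 = ψ (p.1 * p.2) := by
    refine Eventually.of_forall fun p => ?_
    rw [hΨeq, hψ]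
    ring
  exact ⟨hsmooth, h00, hunit, hev, ⟨Ψ, hsmooth, h00, hunit, hev⟩⟩
end

section
/- Let ψ be a formal power series in two variables z, w over ℂ with zero constant coefficient, and let a be the coefficient of z in ψ and b the coefficient of w in ψ, with |a| > |b|. Let f and g be formal power series in four variables x₀, x₁, x₂, x₃ over ℂ, each with zero constant coefficient. If the power series obtained from ψ by substituting z := x₀·x₂ and w := x₁·x₃ equals the product f·g in ℂ[[x₀, x₁, x₂, x₃]], then ψ is divisible by z; equivalently, for every k ≥ 0 the coefficient of the monomial w^k in ψ is zero. -/
open MvPowerSeries Finsupp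

/-- The formal power series in four variables `x₀, x₁, x₂, x₃` obtained from a
formal power series `ψ` in two variables `z, w` by substituting `z := x₀·x₂` and
`w := x₁·x₃`: the monomial `z^j·w^k` becomes `x₀^j·x₁^k·x₂^j·x₃^k`, so the
coefficient of the substituted series at an exponent `d` with `d 0 = d 2` and
`d 1 = d 3` equals the coefficient of `ψ` at `z^(d 0)·w^(d 1)`, and all other
coefficients vanish. -/
noncomputable def substZW (ψ : MvPowerSeries (Fin 2) ℂ) : MvPowerSeries (Fin 4) ℂ :=
  fun d : Fin 4 →₀ ℕ =>
    if d 0 = d 2 ∧ d 1 = d 3 then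
      MvPowerSeries.coeff (Finsupp.single 0 (d 0) + Finsupp.single 1 (d 1)) ψ
    else 0

namespace Aux2

/-- total degree of an exponent -/
def D (v : Fin 4 →₀ ℕ) : ℕ := v 0 + v 1 + v 2 + v 3

lemma D_add (u v : Fin 4 →₀ ℕ) : D (u + v) = D u + D v := by
  simp only [D, Finsupp.add_apply]; ring

lemma D_single (i : Fin 4) (n : ℕ) : D (Finsupp.single i n) = n := by
  fin_cases i <;> simp [D, Finsupp.single_apply]

lemma eq_zero_of_D (v : Fin 4 →₀ ℕ) (h : D v = 0) : v = 0 := by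
  ext a
  fin_cases a <;> simp only [D] at h <;> simp <;> omega

lemma eq_single_of_D (v : Fin 4 →₀ ℕ) (h : D v = 1) : ∃ i, v = Finsupp.single i 1 := by
  simp only [D] at h
  have h0 : v 0 = 1 ∨ v 1 = 1 ∨ v 2 = 1 ∨ v 3 = 1 := by omega
  rcases h0 with h0 | h0 | h0 | h0
  · exact ⟨0, by ext a; fin_cases a <;> simp [Finsupp.single_apply] <;> omega⟩
  · exact ⟨1, by ext a; fin_cases a <;> simp [Finsupp.single_apply] <;> omega⟩
  · exact ⟨2, by ext a; fin_cases a <;> simp [Finsupp.single_apply] <;> omega⟩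
  · exact ⟨3, by ext a; fin_cases a <;> simp [Finsupp.single_apply] <;> omega⟩

end Aux2
namespace Aux2

lemma coeff_mul_two_ne (f g : MvPowerSeries (Fin 4) ℂ)
    (hf0 : MvPowerSeries.coeff (0 : Fin 4 →₀ ℕ) f = 0)
    (hg0 : MvPowerSeries.coeff (0 : Fin 4 →₀ ℕ) g = 0)
    (i j : Fin 4) (hij : i ≠ j) :
    MvPowerSeries.coeff (Finsupp.single i 1 + Finsupp.single j 1) (f * g) =
      MvPowerSeries.coeff (Finsupp.single i 1) f *
        MvPowerSeries.coeff (Finsupp.single j 1) g +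
      MvPowerSeries.coeff (Finsupp.single j 1) f *
        MvPowerSeries.coeff (Finsupp.single i 1) g := by
  rw [MvPowerSeries.coeff_mul]
  set d := Finsupp.single i 1 + Finsupp.single j 1 with hd
  apply Finset.sum_eq_add_of_mem (Finsupp.single i 1, Finsupp.single j 1)
    (Finsupp.single j 1, Finsupp.single i 1)
  · rw [Finset.HasAntidiagonal.mem_antidiagonal]
  · rw [Finset.HasAntidiagonal.mem_antidiagonal]; exact add_comm _ _
  · intro h
    have := congrArg (fun p => p.1 i) h
    simp [Finsupp.single_apply, Ne.symm hij] at this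
  · rintro ⟨u, v⟩ hm ⟨h1, h2⟩
    rw [Finset.HasAntidiagonal.mem_antidiagonal] at hm
    have hD : D u + D v = 2 := by
      rw [← D_add, hm, hd, D_add, D_single, D_single]
    rcases Nat.lt_or_ge (D u) 1 with hu | hu
    · have : u = 0 := eq_zero_of_D u (by omega)
      simp [this, hf0]
    rcases Nat.lt_or_ge (D v) 1 with hv | hv
    · have : v = 0 := eq_zero_of_D v (by omega)
      simp [this, hg0]
    have hu1 : D u = 1 := by omega
    have hv1 : D v = 1 := by omega
    obtain ⟨k, rfl⟩ := eq_single_of_D u hu1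
    obtain ⟨l, rfl⟩ := eq_single_of_D v hv1
    exfalso
    have hki := congrArg (fun w => w i) hm
    have hkj := congrArg (fun w => w j) hm
    have hkk := congrArg (fun w => w k) hm
    simp only [Finsupp.add_apply, Finsupp.single_apply, hd] at hki hkj hkk
    by_cases hki' : k = i
    · subst hki'
      have : l = j := by
        by_contra hlj
        simp [hij, hlj, Ne.symm hij] at hkj
      subst this; exact h1 rfl
    · by_cases hkj' : k = j
      · subst hkj'
        have : l = i := by
          by_contra hli
          simp [hij, hli, Ne.symm hij, hki'] at hki
        subst this; exact h2 rfl
      · simp [hki', hkj', Ne.symm hki', Ne.symm hkj'] at hkk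

lemma coeff_mul_two_eq (f g : MvPowerSeries (Fin 4) ℂ)
    (hf0 : MvPowerSeries.coeff (0 : Fin 4 →₀ ℕ) f = 0)
    (hg0 : MvPowerSeries.coeff (0 : Fin 4 →₀ ℕ) g = 0)
    (i : Fin 4) :
    MvPowerSeries.coeff (Finsupp.single i 2) (f * g) =
      MvPowerSeries.coeff (Finsupp.single i 1) f *
        MvPowerSeries.coeff (Finsupp.single i 1) g := by
  rw [MvPowerSeries.coeff_mul]
  apply Finset.sum_eq_single_of_mem (Finsupp.single i 1, Finsupp.single i 1)
  · rw [Finset.HasAntidiagonal.mem_antidiagonal, ← Finsupp.single_add]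
  · rintro ⟨u, v⟩ hm hne
    rw [Finset.HasAntidiagonal.mem_antidiagonal] at hm
    have hD : D u + D v = 2 := by
      rw [← D_add, hm, D_single]
    rcases Nat.lt_or_ge (D u) 1 with hu | hu
    · have : u = 0 := eq_zero_of_D u (by omega)
      simp [this, hf0]
    rcases Nat.lt_or_ge (D v) 1 with hv | hv
    · have : v = 0 := eq_zero_of_D v (by omega)
      simp [this, hg0]
    obtain ⟨k, rfl⟩ := eq_single_of_D u (by omega)
    obtain ⟨l, rfl⟩ := eq_single_of_D v (by omega)
    exfalso
    have hkk := congrArg (fun w => w k) hm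
    have hll := congrArg (fun w => w l) hm
    simp only [Finsupp.add_apply, Finsupp.single_apply] at hkk hll
    by_cases hki : k = i
    · subst hki
      by_cases hli : l = k
      · subst hli; exact hne rfl
      · simp [hli] at hkk
    · rw [if_neg (Ne.symm hki)] at hkk
      split at hkk <;> simp_all

end Aux2
namespace Aux2

/-- Key step: if `f` has no linear part in `x₁,x₂,x₃`, `g` has no linear part in
`x₁,x₃` but a nonzero coefficient at `x₂`, and every coefficient of `f*g` at an
exponent with different `x₀`- and `x₂`-exponents vanishes, then every coefficient
of `f` at an exponent with zero `x₀`-exponent vanishes. -/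
lemma key (f g : MvPowerSeries (Fin 4) ℂ)
    (hf0 : MvPowerSeries.coeff (0 : Fin 4 →₀ ℕ) f = 0)
    (hg0 : MvPowerSeries.coeff (0 : Fin 4 →₀ ℕ) g = 0)
    (hg1 : MvPowerSeries.coeff (Finsupp.single 1 1) g = 0)
    (hg3 : MvPowerSeries.coeff (Finsupp.single 3 1) g = 0)
    (hg2 : MvPowerSeries.coeff (Finsupp.single 2 1) g ≠ 0)
    (hF : ∀ d : Fin 4 →₀ ℕ, d 0 ≠ d 2 → MvPowerSeries.coeff d (f * g) = 0) :
    ∀ e : Fin 4 →₀ ℕ, e 0 = 0 → MvPowerSeries.coeff e f = 0 := by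
  suffices H : ∀ n : ℕ, ∀ e : Fin 4 →₀ ℕ, D e = n → e 0 = 0 →
      MvPowerSeries.coeff e f = 0 by
    intro e he; exact H (D e) e rfl he
  intro n
  induction n using Nat.strong_induction_on with
  | _ n IH =>
    intro e hDe he0
    rcases Nat.eq_zero_or_pos n with hn | hn
    · have : e = 0 := eq_zero_of_D e (by omega)
      subst this; exact hf0
    · -- consider d = e + x₂
      set d : Fin 4 →₀ ℕ := e + Finsupp.single 2 1 with hd
      have hd0 : d 0 = 0 := by
        simp [hd, Finsupp.add_apply, Finsupp.single_apply, he0]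
      have hd2 : d 2 = e 2 + 1 := by
        simp [hd, Finsupp.add_apply, Finsupp.single_apply]
      have hcoeff : MvPowerSeries.coeff d (f * g) = 0 := by
        apply hF; omega
      rw [MvPowerSeries.coeff_mul] at hcoeff
      have hsum : ∑ p ∈ Finset.HasAntidiagonal.antidiagonal d,
          MvPowerSeries.coeff p.1 f * MvPowerSeries.coeff p.2 g =
          MvPowerSeries.coeff e f * MvPowerSeries.coeff (Finsupp.single 2 1) g := by
        apply Finset.sum_eq_single_of_mem (e, Finsupp.single 2 1)
        · rw [Finset.HasAntidiagonal.mem_antidiagonal]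
        · rintro ⟨u, v⟩ hm hne
          rw [Finset.HasAntidiagonal.mem_antidiagonal] at hm
          have hu0 : u 0 = 0 ∧ v 0 = 0 := by
            have := congrArg (fun w => w (0 : Fin 4)) hm
            simp only [Finsupp.add_apply] at this
            rw [hd0] at this  -- careful direction
            constructor <;> omega
          have hDuv : D u + D v = n + 1 := by
            rw [← D_add, hm, hd, D_add, D_single, hDe]
          rcases Nat.lt_or_ge (D v) 1 with hv | hv
          · have : v = 0 := eq_zero_of_D v (by omega)
            simp [this, hg0]
          rcases Nat.lt_or_ge (D v) 2 with hv2 | hv2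
          · obtain ⟨l, rfl⟩ := eq_single_of_D v (by omega)
            have hl0 : l ≠ 0 := by
              intro h; subst h; simp [Finsupp.single_apply] at hu0
            by_cases hl2 : l = 2
            · subst hl2
              exfalso; apply hne
              have : u = e := by
                have := add_right_cancel (a := u) (b := Finsupp.single (2 : Fin 4) 1)
                  (c := e) (by rw [hm, hd])
                exact this
              rw [this]
            · fin_cases l <;> simp_all [hg1, hg3]
          · have hu : D u < n := by omega
            have hu00 : u 0 = 0 := hu0.1
            rw [IH (D u) hu u rfl hu00, zero_mul]
      rw [hsum] at hcoeff
      rcases mul_eq_zero.mp hcoeff with h | h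
      · exact h
      · exact absurd h hg2

end Aux2
namespace Aux2

lemma prod_zero (f g : MvPowerSeries (Fin 4) ℂ)
    (h : ∀ e : Fin 4 →₀ ℕ, e 0 = 0 → MvPowerSeries.coeff e f = 0) :
    ∀ d : Fin 4 →₀ ℕ, d 0 = 0 → MvPowerSeries.coeff d (f * g) = 0 := by
  intro d hd
  rw [MvPowerSeries.coeff_mul]
  apply Finset.sum_eq_zero
  rintro ⟨u, v⟩ hm
  rw [Finset.HasAntidiagonal.mem_antidiagonal] at hm
  have : u 0 = 0 := by
    have := congrArg (fun w => w (0 : Fin 4)) hm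
    simp only [Finsupp.add_apply] at this
    omega
  rw [h u this, zero_mul]

end Aux2

/-- If `ψ ∈ ℂ[[z,w]]` has zero constant term, its coefficient `a` of `z` dominates
its coefficient `b` of `w` in absolute value, and the series obtained from `ψ` by
substituting `z := x₀·x₂`, `w := x₁·x₃` factors as a product `f·g` of two power
series with zero constant term, then `ψ` is divisible by `z`; equivalently, the
coefficient of `w^k` in `ψ` vanishes for every `k`. -/
theorem statement2 (ψ : MvPowerSeries (Fin 2) ℂ)
    (hψ0 : MvPowerSeries.constantCoeff ψ = 0)
    (a b : ℂ)
    (ha : a = MvPowerSeries.coeff (Finsupp.single 0 1) ψ)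
    (hb : b = MvPowerSeries.coeff (Finsupp.single 1 1) ψ)
    (hab : ‖b‖ < ‖a‖)
    (f g : MvPowerSeries (Fin 4) ℂ)
    (hf0 : MvPowerSeries.constantCoeff f = 0)
    (hg0 : MvPowerSeries.constantCoeff g = 0)
    (heq : substZW ψ = f * g) :
    (MvPowerSeries.X 0 : MvPowerSeries (Fin 2) ℂ) ∣ ψ ∧
      ∀ k : ℕ, MvPowerSeries.coeff (Finsupp.single 1 k) ψ = 0 := by
  have hf0' : MvPowerSeries.coeff (0 : Fin 4 →₀ ℕ) f = 0 := by
    rwa [MvPowerSeries.coeff_zero_eq_constantCoeff]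
  have hg0' : MvPowerSeries.coeff (0 : Fin 4 →₀ ℕ) g = 0 := by
    rwa [MvPowerSeries.coeff_zero_eq_constantCoeff]
  have hc : ∀ d : Fin 4 →₀ ℕ, MvPowerSeries.coeff d (f * g) = substZW ψ d := by
    intro d; rw [← heq]; rfl
  have ha' : a ≠ 0 := by
    intro h
    rw [h, norm_zero] at hab
    exact absurd hab (not_lt.mpr (norm_nonneg b))
  set α : Fin 4 → ℂ := fun i => MvPowerSeries.coeff (Finsupp.single i 1) f with hα
  set β : Fin 4 → ℂ := fun i => MvPowerSeries.coeff (Finsupp.single i 1) g with hβ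
  -- the coefficient of x₀x₂ in f*g is a
  have hA : α 0 * β 2 + α 2 * β 0 = a := by
    rw [hα, hβ]
    rw [← Aux2.coeff_mul_two_ne f g hf0' hg0' 0 2 (by decide), hc]
    have h1 : ((Finsupp.single (0 : Fin 4) 1 + Finsupp.single 2 1) : Fin 4 →₀ ℕ) 0 = 1 := by
      simp [Finsupp.single_apply]
    have h2 : ((Finsupp.single (0 : Fin 4) 1 + Finsupp.single 2 1) : Fin 4 →₀ ℕ) 1 = 0 := by
      simp [Finsupp.single_apply]
    have h3 : ((Finsupp.single (0 : Fin 4) 1 + Finsupp.single 2 1) : Fin 4 →₀ ℕ) 2 = 1 := by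
      simp [Finsupp.single_apply]
    have h4 : ((Finsupp.single (0 : Fin 4) 1 + Finsupp.single 2 1) : Fin 4 →₀ ℕ) 3 = 0 := by
      simp [Finsupp.single_apply]
    simp only [substZW, h1, h2, h3, h4]
    rw [ha]
    simp
  -- coefficients at other degree-2 monomials with unequal exponents vanish
  have hvan : ∀ i j : Fin 4, i ≠ j →
      ((Finsupp.single i 1 + Finsupp.single j 1 : Fin 4 →₀ ℕ) 0 ≠
        (Finsupp.single i 1 + Finsupp.single j 1 : Fin 4 →₀ ℕ) 2) →
      α i * β j + α j * β i = 0 := by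
    intro i j hij hne
    rw [hα, hβ, ← Aux2.coeff_mul_two_ne f g hf0' hg0' i j hij, hc]
    simp only [substZW]
    rw [if_neg]
    intro hcon
    exact hne hcon.1
  have hdiag : ∀ i : Fin 4, α i * β i = 0 := by
    intro i
    rw [hα, hβ, ← Aux2.coeff_mul_two_eq f g hf0' hg0' i, hc]
    have : (Finsupp.single i 2 : Fin 4 →₀ ℕ) = Finsupp.single i 1 + Finsupp.single i 1 := by
      rw [← Finsupp.single_add]
    by_cases hi0 : i = 0
    · subst hi0
      simp only [substZW]
      rw [if_neg]
      simp [Finsupp.single_apply]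
    · by_cases hi2 : i = 2
      · subst hi2
        simp only [substZW]
        rw [if_neg]
        simp [Finsupp.single_apply]
      · by_cases hi1 : i = 1
        · subst hi1
          simp only [substZW]
          rw [if_neg]
          simp [Finsupp.single_apply]
        · have hi3 : i = 3 := by omega
          subst hi3
          simp only [substZW]
          rw [if_neg]
          simp [Finsupp.single_apply]
  have h01 : α 0 * β 1 + α 1 * β 0 = 0 := by
    apply hvan 0 1 (by decide); simp [Finsupp.single_apply]
  have h03 : α 0 * β 3 + α 3 * β 0 = 0 := by
    apply hvan 0 3 (by decide); simp [Finsupp.single_apply]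
  have h12 : α 1 * β 2 + α 2 * β 1 = 0 := by
    apply hvan 1 2 (by decide); simp [Finsupp.single_apply]
  have h23 : α 2 * β 3 + α 3 * β 2 = 0 := by
    apply hvan 2 3 (by decide); simp [Finsupp.single_apply]
  have hF : ∀ d : Fin 4 →₀ ℕ, d 0 ≠ d 2 → MvPowerSeries.coeff d (f * g) = 0 := by
    intro d hd
    rw [hc]
    simp only [substZW]
    rw [if_neg]
    intro hcon
    exact hd hcon.1
  -- the main dichotomy
  have hzero : ∀ d : Fin 4 →₀ ℕ, d 0 = 0 → MvPowerSeries.coeff d (f * g) = 0 := by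
    have hcase : α 0 * β 2 ≠ 0 ∨ α 2 * β 0 ≠ 0 := by
      by_contra h
      push_neg at h
      rw [h.1, h.2, add_zero] at hA
      exact ha' hA.symm
    rcases hcase with hcase | hcase
    · have hα0 : α 0 ≠ 0 := fun h => hcase (by rw [h, zero_mul])
      have hβ2 : β 2 ≠ 0 := fun h => hcase (by rw [h, mul_zero])
      have hβ0 : β 0 = 0 := by
        rcases mul_eq_zero.mp (hdiag 0) with h | h
        · exact absurd h hα0
        · exact h
      have hβ1 : β 1 = 0 := by
        rw [hβ0, mul_zero, add_zero] at h01
        rcases mul_eq_zero.mp h01 with h | h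
        · exact absurd h hα0
        · exact h
      have hβ3 : β 3 = 0 := by
        rw [hβ0, mul_zero, add_zero] at h03
        rcases mul_eq_zero.mp h03 with h | h
        · exact absurd h hα0
        · exact h
      exact Aux2.prod_zero f g (Aux2.key f g hf0' hg0' hβ1 hβ3 hβ2 hF)
    · have hα2 : α 2 ≠ 0 := fun h => hcase (by rw [h, zero_mul])
      have hβ0 : β 0 ≠ 0 := fun h => hcase (by rw [h, mul_zero])
      have hα0 : α 0 = 0 := by
        rcases mul_eq_zero.mp (hdiag 0) with h | h
        · exact h
        · exact absurd h hβ0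
      have hα1 : α 1 = 0 := by
        rw [hα0, zero_mul, zero_add] at h01
        rcases mul_eq_zero.mp h01 with h | h
        · exact h
        · exact absurd h hβ0
      have hα3 : α 3 = 0 := by
        rw [hα0, zero_mul, zero_add] at h03
        rcases mul_eq_zero.mp h03 with h | h
        · exact h
        · exact absurd h hβ0
      intro d hd
      rw [mul_comm]
      exact Aux2.prod_zero g f
        (Aux2.key g f hg0' hf0' hα1 hα3 hα2
          (fun d hd => by rw [mul_comm]; exact hF d hd)) d hd
  have part2 : ∀ k : ℕ, MvPowerSeries.coeff (Finsupp.single 1 k) ψ = 0 := by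
    intro k
    set d : Fin 4 →₀ ℕ := Finsupp.single 1 k + Finsupp.single 3 k with hd
    have h0 : d 0 = 0 := by simp [hd, Finsupp.single_apply]
    have h1 : d 1 = k := by simp [hd, Finsupp.single_apply]
    have h2 : d 2 = 0 := by simp [hd, Finsupp.single_apply]
    have h3 : d 3 = k := by simp [hd, Finsupp.single_apply]
    have := hzero d h0
    rw [hc] at this
    simp only [substZW, h0, h1, h2, h3, if_pos (And.intro rfl rfl)] at this
    rwa [Finsupp.single_zero, zero_add] at this
  refine ⟨?_, part2⟩
  rw [MvPowerSeries.X_dvd_iff]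
  intro m hm
  have : m = Finsupp.single 1 (m 1) := by
    ext i
    fin_cases i
    · simp [Finsupp.single_apply, hm]
    · simp [Finsupp.single_apply]
  rw [this]
  exact part2 (m 1)
end

section
/- Let n ≥ 2 and let μ₁, …, μ_{n−1} ∈ ℂ and μ'₁, …, μ'_{n−1} ∈ ℂ satisfy |μᵢ| < 1 and |μ'ᵢ| < 1 for all i. Let c₀, c₁, …, c_{n−1} be nonzero complex numbers, and suppose that either ψⱼ(z) = cⱼ·z for every j = 0, …, n−1, or ψⱼ(z) = cⱼ·conj(z) for every j = 0, …, n−1. If for every i ∈ {1, …, n−1} and every z ∈ ℂ one has ψᵢ(z) + μ'ᵢ·conj(ψᵢ(z)) = ψ₀(z + μᵢ·conj(z)), then there exists c ∈ ℂ with |c| = 1 such that either μ'ᵢ = c·μᵢ for all i, or μ'ᵢ = c·conj(μᵢ) for all i. -/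
/-- Uniqueness of the normal form of `1`-jets of gluing maps of an `n`-pinched
focus-focus singularity: if a tuple of liftable `1`-jets `ψⱼ` (all complex-linear
`z ↦ cⱼ·z`, or all antilinear `z ↦ cⱼ·conj z`) transforms the tuple of normal forms
`z + μᵢ·conj z` into the tuple `z + μ'ᵢ·conj z` (i.e. `ψᵢ` followed by the second
normal form equals the first normal form followed by `ψ₀`), then there is `c` of
absolute value `1` with `μ'ᵢ = c·μᵢ` for all `i`, or `μ'ᵢ = c·conj μᵢ` for all `i`. -/
theorem statement4 (n : ℕ) (hn : 2 ≤ n) (μ μ' : ℕ → ℂ)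
    (hμ : ∀ i, 1 ≤ i → i ≤ n - 1 → ‖μ i‖ < 1)
    (hμ' : ∀ i, 1 ≤ i → i ≤ n - 1 → ‖μ' i‖ < 1)
    (c : ℕ → ℂ) (hc : ∀ j, j ≤ n - 1 → c j ≠ 0)
    (ψ : ℕ → ℂ → ℂ)
    (hψ : (∀ j, j ≤ n - 1 → ∀ z, ψ j z = c j * z) ∨
          (∀ j, j ≤ n - 1 → ∀ z, ψ j z = c j * (starRingEnd ℂ) z))
    (heq : ∀ i, 1 ≤ i → i ≤ n - 1 → ∀ z : ℂ,
      ψ i z + μ' i * (starRingEnd ℂ) (ψ i z) = ψ 0 (z + μ i * (starRingEnd ℂ) z)) :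
    ∃ c₀ : ℂ, ‖c₀‖ = 1 ∧
      ((∀ i, 1 ≤ i → i ≤ n - 1 → μ' i = c₀ * μ i) ∨
       (∀ i, 1 ≤ i → i ≤ n - 1 → μ' i = c₀ * (starRingEnd ℂ) (μ i))) := by
  have h0le : (0:ℕ) ≤ n - 1 := Nat.zero_le _
  have hc0 : c 0 ≠ 0 := hc 0 h0le
  have hcc0 : (starRingEnd ℂ) (c 0) ≠ 0 := by
    simp [map_eq_zero, hc0]
  refine ⟨c 0 / (starRingEnd ℂ) (c 0), ?_, ?_⟩
  · rw [norm_div, Complex.norm_conj, div_self]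
    exact (norm_ne_zero_iff.mpr hc0)
  rcases hψ with hψ | hψ
  · left
    intro i hi1 hi2
    have h1 := heq i hi1 hi2 1
    have hI := heq i hi1 hi2 Complex.I
    rw [hψ i hi2, hψ 0 h0le] at h1 hI
    simp only [map_mul, Complex.conj_I, map_one, mul_one] at h1 hI
    have hI' : c i - μ' i * (starRingEnd ℂ) (c i) = c 0 - c 0 * μ i :=
      mul_left_cancel₀ Complex.I_ne_zero (by linear_combination hI)
    have hci : c i = c 0 := by linear_combination (h1 + hI') / 2
    have key : μ' i * (starRingEnd ℂ) (c i) = c 0 * μ i := by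
      linear_combination (h1 - hI') / 2
    rw [hci] at key
    field_simp
    linear_combination key
  · right
    intro i hi1 hi2
    have h1 := heq i hi1 hi2 1
    have hI := heq i hi1 hi2 Complex.I
    rw [hψ i hi2, hψ 0 h0le] at h1 hI
    simp only [map_mul, map_add, map_neg, Complex.conj_I, neg_neg, map_one, mul_one] at h1 hI
    have hI' : c i - μ' i * (starRingEnd ℂ) (c i)
        = c 0 - c 0 * (starRingEnd ℂ) (μ i) :=
      mul_left_cancel₀ Complex.I_ne_zero (by linear_combination -hI)
    have hci : c i = c 0 := by linear_combination (h1 + hI') / 2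
    have key : μ' i * (starRingEnd ℂ) (c i) = c 0 * (starRingEnd ℂ) (μ i) := by
      linear_combination (h1 - hI') / 2
    rw [hci] at key
    field_simp
    linear_combination key
end

section
/- Let n ≥ 2 and let aᵢ, bᵢ, a'ᵢ, b'ᵢ ∈ ℂ (for i = 1, …, n−1) satisfy |aᵢ| > |bᵢ| and |a'ᵢ| > |b'ᵢ|. Set μᵢ := bᵢ / conj(aᵢ) and μ'ᵢ := b'ᵢ / conj(a'ᵢ). Then the following are equivalent: (1) there exist nonzero complex numbers c₀, …, c_{n−1} and maps ψⱼ : ℂ → ℂ with either ψⱼ(z) = cⱼ·z for every j, or ψⱼ(z) = cⱼ·conj(z) for every j, such that for every i ∈ {1, …, n−1} and every z ∈ ℂ: a'ᵢ·ψᵢ(z) + b'ᵢ·conj(ψᵢ(z)) = ψ₀(aᵢ·z + bᵢ·conj(z)); (2) there exists c ∈ ℂ with |c| = 1 such that either μ'ᵢ = c·μᵢ for all i, or μ'ᵢ = c·conj(μᵢ) for all i. -/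
/-- Classification of orbits of tuples of orientation-preserving `1`-jets
`z ↦ aᵢ·z + bᵢ·conj z` (with `|aᵢ| > |bᵢ|`) under the left-right action of liftable
`1`-jets: two tuples lie in the same orbit if and only if their first order
invariants `μᵢ = bᵢ/conj aᵢ` agree up to multiplication by a common unimodular
constant and simultaneous complex conjugation. -/
theorem statement5 (n : ℕ) (hn : 2 ≤ n) (a b a' b' : ℕ → ℂ)
    (hab : ∀ i, 1 ≤ i → i ≤ n - 1 → ‖b i‖ < ‖a i‖)
    (hab' : ∀ i, 1 ≤ i → i ≤ n - 1 → ‖b' i‖ < ‖a' i‖)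
    (μ μ' : ℕ → ℂ)
    (hμ : ∀ i, μ i = b i / (starRingEnd ℂ) (a i))
    (hμ' : ∀ i, μ' i = b' i / (starRingEnd ℂ) (a' i)) :
    (∃ (c : ℕ → ℂ) (ψ : ℕ → ℂ → ℂ),
        (∀ j, j ≤ n - 1 → c j ≠ 0) ∧
        ((∀ j, j ≤ n - 1 → ∀ z, ψ j z = c j * z) ∨
         (∀ j, j ≤ n - 1 → ∀ z, ψ j z = c j * (starRingEnd ℂ) z)) ∧
        (∀ i, 1 ≤ i → i ≤ n - 1 → ∀ z : ℂ,
          a' i * ψ i z + b' i * (starRingEnd ℂ) (ψ i z) =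
            ψ 0 (a i * z + b i * (starRingEnd ℂ) z))) ↔
    (∃ c₀ : ℂ, ‖c₀‖ = 1 ∧
      ((∀ i, 1 ≤ i → i ≤ n - 1 → μ' i = c₀ * μ i) ∨
       (∀ i, 1 ≤ i → i ≤ n - 1 → μ' i = c₀ * (starRingEnd ℂ) (μ i)))) := by
  have hane : ∀ i, 1 ≤ i → i ≤ n - 1 → a i ≠ 0 := by
    intro i h1 h2 h
    have hi := hab i h1 h2
    rw [h] at hi
    simp at hi
    exact (norm_nonneg _).not_gt hi
  have hane' : ∀ i, 1 ≤ i → i ≤ n - 1 → a' i ≠ 0 := by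
    intro i h1 h2 h
    have hi := hab' i h1 h2
    rw [h] at hi
    simp at hi
    exact (norm_nonneg _).not_gt hi
  constructor
  · rintro ⟨c, ψ, hc, hψ | hψ, heq⟩
    · -- linear case
      have hc0 : c 0 ≠ 0 := hc 0 (Nat.zero_le _)
      have hc0c : (starRingEnd ℂ) (c 0) ≠ 0 := by simpa using hc0
      refine ⟨c 0 / (starRingEnd ℂ) (c 0), by
        rw [norm_div, Complex.norm_conj, div_self (norm_ne_zero_iff.mpr hc0)], Or.inl ?_⟩
      intro i h1 h2
      have ha := hane i h1 h2
      have ha' := hane' i h1 h2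
      have hac : (starRingEnd ℂ) (a i) ≠ 0 := by simpa using ha
      have hac' : (starRingEnd ℂ) (a' i) ≠ 0 := by simpa using ha'
      have e1 := heq i h1 h2 1
      have e2 := heq i h1 h2 Complex.I
      rw [hψ i h2, hψ 0 (Nat.zero_le _)] at e1 e2
      simp only [map_mul, Complex.conj_I, map_one, mul_one] at e1 e2
      have eq1 : a' i * c i = c 0 * a i := by
        linear_combination (e1 - Complex.I * e2) / 2 +
          ((a' i * c i - b' i * (starRingEnd ℂ) (c i) - c 0 * a i + c 0 * b i) / 2) *
            Complex.I_sq
      have eq2 : b' i * (starRingEnd ℂ) (c i) = c 0 * b i := by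
        linear_combination (e1 + Complex.I * e2) / 2 +
          ((b' i * (starRingEnd ℂ) (c i) - c 0 * b i - a' i * c i + c 0 * a i) / 2) *
            Complex.I_sq
      have eq1' : (starRingEnd ℂ) (a' i) * (starRingEnd ℂ) (c i)
          = (starRingEnd ℂ) (c 0) * (starRingEnd ℂ) (a i) := by
        rw [← map_mul, ← map_mul, eq1]
      rw [hμ, hμ']
      field_simp
      linear_combination (starRingEnd ℂ) (a' i) * eq2 - b' i * eq1'
    · -- antilinear case
      have hc0 : c 0 ≠ 0 := hc 0 (Nat.zero_le _)
      have hc0c : (starRingEnd ℂ) (c 0) ≠ 0 := by simpa using hc0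
      refine ⟨c 0 / (starRingEnd ℂ) (c 0), by
        rw [norm_div, Complex.norm_conj, div_self (norm_ne_zero_iff.mpr hc0)], Or.inr ?_⟩
      intro i h1 h2
      have ha := hane i h1 h2
      have ha' := hane' i h1 h2
      have hac : (starRingEnd ℂ) (a i) ≠ 0 := by simpa using ha
      have hac' : (starRingEnd ℂ) (a' i) ≠ 0 := by simpa using ha'
      have e1 := heq i h1 h2 1
      have e2 := heq i h1 h2 Complex.I
      rw [hψ i h2, hψ 0 (Nat.zero_le _)] at e1 e2
      simp only [map_mul, map_add, map_neg, Complex.conj_I, Complex.conj_conj, neg_neg, map_one, mul_one] at e1 e2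
      have eq1 : a' i * c i = c 0 * (starRingEnd ℂ) (a i) := by
        linear_combination (e1 + Complex.I * e2) / 2 +
          ((a' i * c i - b' i * (starRingEnd ℂ) (c i) - c 0 * (starRingEnd ℂ) (a i)
            + c 0 * (starRingEnd ℂ) (b i)) / 2) * Complex.I_sq
      have eq2 : b' i * (starRingEnd ℂ) (c i) = c 0 * (starRingEnd ℂ) (b i) := by
        linear_combination (e1 - Complex.I * e2) / 2 +
          ((b' i * (starRingEnd ℂ) (c i) - a' i * c i + c 0 * (starRingEnd ℂ) (a i)
            - c 0 * (starRingEnd ℂ) (b i)) / 2) * Complex.I_sq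
      have eq1' : (starRingEnd ℂ) (a' i) * (starRingEnd ℂ) (c i)
          = (starRingEnd ℂ) (c 0) * a i := by
        rw [← map_mul, eq1, map_mul, Complex.conj_conj]
      rw [hμ, hμ', map_div₀, Complex.conj_conj]
      field_simp
      linear_combination (starRingEnd ℂ) (a' i) * eq2 - b' i * eq1'
  · rintro ⟨c₀, hc1, h | h⟩
    · -- linear case
      have hc0ne : c₀ ≠ 0 := fun h' => by simp [h'] at hc1
      obtain ⟨d, hd⟩ := IsAlgClosed.exists_pow_nat_eq c₀ (n := 2) (by norm_num)
      have hdne : d ≠ 0 := fun h' => hc0ne (by rw [← hd, h']; ring)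
      have hdcne : (starRingEnd ℂ) d ≠ 0 := by simpa using hdne
      have habs : ‖d‖ ^ 2 = 1 := by rw [← norm_pow, hd, hc1]
      have hdc : d * (starRingEnd ℂ) d = 1 := by
        rw [Complex.mul_conj, ← Complex.sq_norm, habs]
        norm_num
      refine ⟨fun j => if j = 0 then d else d * a j / a' j,
          fun j z => (if j = 0 then d else d * a j / a' j) * z, ?_,
          Or.inl fun _ _ _ => rfl, ?_⟩
      · intro j hjle
        by_cases hj : j = 0
        · simp [hj, hdne]
        · have h1 : 1 ≤ j := Nat.one_le_iff_ne_zero.mpr hj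
          beta_reduce
          rw [if_neg hj]
          exact div_ne_zero (mul_ne_zero hdne (hane j h1 hjle)) (hane' j h1 hjle)
      · intro i h1 h2 z
        have ha := hane i h1 h2
        have ha' := hane' i h1 h2
        have hac : (starRingEnd ℂ) (a i) ≠ 0 := by simpa using ha
        have hac' : (starRingEnd ℂ) (a' i) ≠ 0 := by simpa using ha'
        have him := h i h1 h2
        rw [hμ, hμ'] at him
        have h2' : b' i * (starRingEnd ℂ) (a i) = c₀ * b i * (starRingEnd ℂ) (a' i) := by
          field_simp at him
          linear_combination him
        have hstar : b' i * ((starRingEnd ℂ) d * (starRingEnd ℂ) (a i))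
            = d * (b i * (starRingEnd ℂ) (a' i)) := by
          linear_combination (starRingEnd ℂ) d * h2'
            - b i * (starRingEnd ℂ) (a' i) * (starRingEnd ℂ) d * hd
            + b i * (starRingEnd ℂ) (a' i) * d * hdc
        have hine : i ≠ 0 := by omega
        simp only [if_neg hine, if_pos rfl, if_true, map_mul, map_div₀]
        field_simp
        linear_combination (starRingEnd ℂ) z * hstar
    · -- antilinear case
      have hc0ne : c₀ ≠ 0 := fun h' => by simp [h'] at hc1
      obtain ⟨d, hd⟩ := IsAlgClosed.exists_pow_nat_eq c₀ (n := 2) (by norm_num)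
      have hdne : d ≠ 0 := fun h' => hc0ne (by rw [← hd, h']; ring)
      have hdcne : (starRingEnd ℂ) d ≠ 0 := by simpa using hdne
      have habs : ‖d‖ ^ 2 = 1 := by rw [← norm_pow, hd, hc1]
      have hdc : d * (starRingEnd ℂ) d = 1 := by
        rw [Complex.mul_conj, ← Complex.sq_norm, habs]
        norm_num
      refine ⟨fun j => if j = 0 then d else d * (starRingEnd ℂ) (a j) / a' j,
          fun j z => (if j = 0 then d else d * (starRingEnd ℂ) (a j) / a' j)
            * (starRingEnd ℂ) z, ?_,
          Or.inr fun _ _ _ => rfl, ?_⟩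
      · intro j hjle
        by_cases hj : j = 0
        · simp [hj, hdne]
        · have h1 : 1 ≤ j := Nat.one_le_iff_ne_zero.mpr hj
          beta_reduce
          rw [if_neg hj]
          have : (starRingEnd ℂ) (a j) ≠ 0 := by simpa using hane j h1 hjle
          exact div_ne_zero (mul_ne_zero hdne this) (hane' j h1 hjle)
      · intro i h1 h2 z
        have ha := hane i h1 h2
        have ha' := hane' i h1 h2
        have hac : (starRingEnd ℂ) (a i) ≠ 0 := by simpa using ha
        have hac' : (starRingEnd ℂ) (a' i) ≠ 0 := by simpa using ha'
        have him := h i h1 h2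
        rw [hμ, hμ', map_div₀, Complex.conj_conj] at him
        have h2' : b' i * a i = c₀ * (starRingEnd ℂ) (b i) * (starRingEnd ℂ) (a' i) := by
          field_simp at him
          linear_combination him
        have hstar : b' i * ((starRingEnd ℂ) d * a i)
            = d * ((starRingEnd ℂ) (b i) * (starRingEnd ℂ) (a' i)) := by
          linear_combination (starRingEnd ℂ) d * h2'
            - (starRingEnd ℂ) (b i) * (starRingEnd ℂ) (a' i) * (starRingEnd ℂ) d * hd
            + (starRingEnd ℂ) (b i) * (starRingEnd ℂ) (a' i) * d * hdc
        have hine : i ≠ 0 := by omega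
        simp only [if_neg hine, if_pos rfl, if_true, map_mul, map_div₀, map_add, Complex.conj_conj]
        field_simp
        linear_combination z * hstar
end

section
/- Let a, b, a', b' ∈ ℂ satisfy |a| > |b| and |a'| > |b'|. Then the following are equivalent: (1) there exist nonzero complex numbers c₀, c₁ and maps ψ₀, ψ₁ : ℂ → ℂ with either ψⱼ(z) = cⱼ·z for both j = 0, 1, or ψⱼ(z) = cⱼ·conj(z) for both j = 0, 1, such that for every z ∈ ℂ: a'·ψ₁(z) + b'·conj(ψ₁(z)) = ψ₀(a·z + b·conj(z)); (2) |b/a| = |b'/a'|. -/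
open Complex

private lemma absrel (x y u v c₀ c₁ : ℂ) (hc₀ : c₀ ≠ 0) (hc₁ : c₁ ≠ 0)
    (hx : x ≠ 0) (hu : u ≠ 0)
    (hA : u * c₁ = c₀ * x)
    (hB : v * (starRingEnd ℂ) c₁ = c₀ * y) :
    ‖y / x‖ = ‖v / u‖ := by
  have hA' : ‖u‖ * ‖c₁‖ = ‖c₀‖ * ‖x‖ := by
    rw [← norm_mul, ← norm_mul, hA]
  have hB' : ‖v‖ * ‖c₁‖ = ‖c₀‖ * ‖y‖ := by
    rw [← Complex.norm_conj c₁, ← norm_mul, ← norm_mul, hB]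
  rw [norm_div, norm_div]
  have h1 : ‖c₀‖ ≠ 0 := by simpa using hc₀
  have h2 : ‖c₁‖ ≠ 0 := by simpa using hc₁
  have h3 : ‖x‖ ≠ 0 := by simpa using hx
  have h4 : ‖u‖ ≠ 0 := by simpa using hu
  field_simp
  apply mul_left_cancel₀ (mul_ne_zero h1 h2)
  linear_combination (‖c₁‖ * ‖v‖) * hA' - (‖c₁‖ * ‖u‖) * hB'

/-- The `n = 2` case of the classification of orbits of orientation-preserving
`1`-jets under the left-right action of liftable `1`-jets: `a·z + b·conj z` and
`a'·z + b'·conj z` (with `|a| > |b|`, `|a'| > |b'|`) lie in the same orbit if and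
only if `|b/a| = |b'/a'|`. -/
theorem statement6 (a b a' b' : ℂ)
    (hab : ‖b‖ < ‖a‖)
    (hab' : ‖b'‖ < ‖a'‖) :
    (∃ (c₀ c₁ : ℂ) (ψ₀ ψ₁ : ℂ → ℂ), c₀ ≠ 0 ∧ c₁ ≠ 0 ∧
        (((∀ z, ψ₀ z = c₀ * z) ∧ (∀ z, ψ₁ z = c₁ * z)) ∨
         ((∀ z, ψ₀ z = c₀ * (starRingEnd ℂ) z) ∧
          (∀ z, ψ₁ z = c₁ * (starRingEnd ℂ) z))) ∧
        ∀ z : ℂ, a' * ψ₁ z + b' * (starRingEnd ℂ) (ψ₁ z) =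
          ψ₀ (a * z + b * (starRingEnd ℂ) z)) ↔
    ‖b / a‖ = ‖b' / a'‖ := by
  have ha : a ≠ 0 := by
    intro h; rw [h, norm_zero] at hab; exact absurd hab (not_lt.mpr (norm_nonneg b))
  have ha' : a' ≠ 0 := by
    intro h; rw [h, norm_zero] at hab'; exact absurd hab' (not_lt.mpr (norm_nonneg b'))
  constructor
  · rintro ⟨c₀, c₁, ψ₀, ψ₁, hc₀, hc₁, (⟨h0, h1⟩ | ⟨h0, h1⟩), heq⟩
    · -- linear case
      simp only [h0, h1] at heq
      have e1 := heq 1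
      have e2 := heq Complex.I
      simp only [mul_one, map_mul, Complex.conj_I, map_one, map_neg] at e1 e2
      have hA : a' * c₁ = c₀ * a := by
        linear_combination e1 / 2 - Complex.I / 2 * e2 +
          ((a' * c₁ - b' * (starRingEnd ℂ) c₁ - c₀ * a + c₀ * b) / 2) * Complex.I_mul_I
      have hB : b' * (starRingEnd ℂ) c₁ = c₀ * b := by
        linear_combination e1 - hA
      exact absrel a b a' b' c₀ c₁ hc₀ hc₁ ha ha' hA hB
    · -- antilinear case
      simp only [h0, h1] at heq
      have e1 := heq 1
      have e2 := heq Complex.I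
      simp only [mul_one, map_mul, map_add, Complex.conj_I, map_one, map_neg, Complex.conj_neg_I, neg_neg] at e1 e2
      have hA : a' * c₁ = c₀ * (starRingEnd ℂ) a := by
        linear_combination e1 / 2 + Complex.I / 2 * e2 +
          ((a' * c₁ - b' * (starRingEnd ℂ) c₁ - c₀ * (starRingEnd ℂ) a + c₀ * (starRingEnd ℂ) b) / 2) * Complex.I_mul_I
      have hB : b' * (starRingEnd ℂ) c₁ = c₀ * (starRingEnd ℂ) b := by
        linear_combination e1 - hA
      have := absrel ((starRingEnd ℂ) a) ((starRingEnd ℂ) b) a' b' c₀ c₁ hc₀ hc₁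
        (by simpa using ha) ha' hA hB
      rwa [← map_div₀, Complex.norm_conj] at this
  · intro h
    by_cases hb' : b' = 0
    · have hb : b = 0 := by
        rw [hb', zero_div, norm_zero, norm_div, div_eq_zero_iff] at h
        rcases h with h | h
        · exact norm_eq_zero.mp h
        · exact absurd (norm_eq_zero.mp h) ha
      refine ⟨a' / a, 1, fun z => (a' / a) * z, fun z => 1 * z,
        div_ne_zero ha' ha, one_ne_zero, Or.inl ⟨fun z => rfl, fun z => rfl⟩, fun z => ?_⟩
      rw [hb, hb']
      field_simp
      ring
    · have hb : b ≠ 0 := by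
        intro hb
        rw [hb, zero_div, norm_zero, eq_comm, norm_div, div_eq_zero_iff] at h
        rcases h with h | h
        · exact hb' (norm_eq_zero.mp h)
        · exact ha' (norm_eq_zero.mp h)
      set u : ℂ := a' * b / (a * b') with hu_def
      have hu0 : u ≠ 0 := div_ne_zero (mul_ne_zero ha' hb) (mul_ne_zero ha hb')
      have huabs : Complex.normSq u = 1 := by
        rw [norm_div, norm_div] at h
        have : ‖u‖ = 1 := by
          rw [hu_def, norm_div, norm_mul, norm_mul]
          rw [div_eq_one_iff_eq (mul_ne_zero (by simpa using ha) (by simpa using hb'))]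
          have hba : ‖b‖ / ‖a‖ = ‖b'‖ / ‖a'‖ := h
          have k1 : ‖a‖ ≠ 0 := by simpa using ha
          have k2 : ‖a'‖ ≠ 0 := by simpa using ha'
          field_simp at hba
          linear_combination hba
        rw [← Complex.sq_norm, this, one_pow]
      obtain ⟨t, ht⟩ := IsAlgClosed.exists_pow_nat_eq ((starRingEnd ℂ) u) (n := 2) (by norm_num)
      have ht0 : t ≠ 0 := by
        intro h0
        apply hu0
        have hcu : (starRingEnd ℂ) u = 0 := by rw [← ht, h0]; ring
        simpa using hcu
      have htnorm : (starRingEnd ℂ) t * t = 1 := by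
        have h1 : Complex.normSq t ^ 2 = 1 := by
          have := congrArg Complex.normSq ht
          rw [map_pow, Complex.normSq_conj, huabs] at this
          exact this
        have h2 : Complex.normSq t = 1 := by
          nlinarith [Complex.normSq_nonneg t]
        calc (starRingEnd ℂ) t * t = (Complex.normSq t : ℂ) := by
              rw [mul_comm, Complex.mul_conj]
          _ = 1 := by rw [h2]; norm_num
      have hconj : (starRingEnd ℂ) t = u * t := by
        have : u = ((starRingEnd ℂ) t) ^ 2 := by
          have := congrArg (starRingEnd ℂ) ht
          rw [map_pow, Complex.conj_conj] at this
          exact this.symm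
        calc (starRingEnd ℂ) t = (starRingEnd ℂ) t * ((starRingEnd ℂ) t * t) := by
              rw [htnorm, mul_one]
          _ = ((starRingEnd ℂ) t) ^ 2 * t := by ring
          _ = u * t := by rw [← this]
      refine ⟨a' * t / a, t, fun z => (a' * t / a) * z, fun z => t * z,
        div_ne_zero (mul_ne_zero ha' ht0) ha, ht0,
        Or.inl ⟨fun z => rfl, fun z => rfl⟩, fun z => ?_⟩
      have hA : a' * t = (a' * t / a) * a := by field_simp
      have hB : b' * (starRingEnd ℂ) t = (a' * t / a) * b := by
        rw [hconj, hu_def]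
        field_simp
      rw [map_mul]
      linear_combination z * hA + (starRingEnd ℂ) z * hB
end

section
/- Let f : ℂ → ℝ be C^∞-smooth on a neighborhood of 0 with f(0) = 0 and nonzero real Fréchet derivative at 0. Then there exists a function h : ℂ → ℂ, C^∞-smooth on a neighborhood of 0, with h(0) ≠ 0, such that Im(z·h(z)) = f(z) for all z in a neighborhood of 0. In particular, the map ψ(z) := z·h(z) satisfies ψ(0) = 0, has invertible real Fréchet derivative at 0, and Im(ψ(z)) = f(z) near 0. -/
set_option synthInstance.maxHeartbeats 1000000
set_option maxHeartbeats 1000000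
open Complex Filter Topology MeasureTheory Metric Set ContDiff intervalIntegral

private lemma paramInt (n : ℕ) : ∀ {F : Type} [NormedAddCommGroup F] [NormedSpace ℝ F]
    [CompleteSpace F] (g : ℝ × ℂ → F), ContDiff ℝ (n : WithTop ℕ∞) g →
    ContDiff ℝ (n : WithTop ℕ∞) fun z : ℂ => ∫ t in (0:ℝ)..1, g (t, z) := by
  induction n with
  | zero =>
    intro F _ _ _ g hg
    simp only [Nat.cast_zero, contDiff_zero] at hg ⊢
    exact intervalIntegral.continuous_parametric_intervalIntegral_of_continuous'
      (μ := volume) (f := fun (z : ℂ) (t : ℝ) => g (t, z))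
      (by fun_prop) 0 1
  | succ n ih =>
    intro F _ _ _ g hg
    set G : ℝ × ℂ → ℂ →L[ℝ] F := fun p => fderiv ℝ (fun z => g (p.1, z)) p.2 with hGdef
    have hGsmooth : ContDiff ℝ (n : WithTop ℕ∞) G := by
      apply ContDiff.fderiv (f := fun (p : ℝ × ℂ) (z : ℂ) => g (p.1, z))
        (g := fun p : ℝ × ℂ => p.2)
      · exact hg.comp (ContDiff.prodMk (ContDiff.fst contDiff_fst) contDiff_snd)
      · exact contDiff_snd
      · exact_mod_cast le_refl _
    have hdiffg : ∀ (t : ℝ) (x : ℂ), HasFDerivAt (fun y => g (t, y)) (G (t, x)) x := by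
      intro t x
      have : DifferentiableAt ℝ (fun y => g (t, y)) x := by
        exact ((hg.differentiable (by simp)).comp
          ((differentiable_const t).prodMk differentiable_id)) x
      exact this.hasFDerivAt
    have key : ∀ z₀ : ℂ, HasFDerivAt (fun z => ∫ t in (0:ℝ)..1, g (t, z))
        (∫ t in (0:ℝ)..1, G (t, z₀)) z₀ := by
      intro z₀
      obtain ⟨C, hC⟩ := (isCompact_Icc.prod (isCompact_closedBall z₀ 1)).exists_bound_of_continuousOn
        (hGsmooth.continuous.comp (continuous_id)).continuousOn
      refine hasFDerivAt_integral_of_dominated_of_fderiv_le''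
        (F := fun (x : ℂ) (t : ℝ) => g (t, x)) (F' := fun (x : ℂ) (t : ℝ) => G (t, x))
        (bound := fun _ => C) (s := ball z₀ 1) (ball_mem_nhds z₀ one_pos) ?_ ?_ ?_ ?_ ?_ ?_
      · exact Eventually.of_forall fun x =>
          (hg.continuous.comp (continuous_id.prodMk continuous_const)).aestronglyMeasurable
      · exact (hg.continuous.comp (continuous_id.prodMk continuous_const)).intervalIntegrable 0 1
      · exact (hGsmooth.continuous.comp (continuous_id.prodMk continuous_const)).aestronglyMeasurable
      · filter_upwards [ae_restrict_mem measurableSet_uIoc] with t ht x hx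
        refine hC (t, x) ⟨?_, ball_subset_closedBall hx⟩
        rw [uIoc_of_le (zero_le_one)] at ht
        exact ⟨ht.1.le, ht.2⟩
      · exact intervalIntegrable_const
      · exact Eventually.of_forall fun t => fun x _ => hdiffg t x
    rw [show ((n+1 : ℕ) : WithTop ℕ∞) = (n : WithTop ℕ∞) + 1 by exact_mod_cast rfl,
      contDiff_succ_iff_fderiv]
    refine ⟨fun z => (key z).differentiableAt, by simp, ?_⟩
    have : (fderiv ℝ fun z => ∫ t in (0:ℝ)..1, g (t, z))
        = fun z₀ => ∫ t in (0:ℝ)..1, G (t, z₀) := funext fun z₀ => (key z₀).fderiv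
    rw [this]
    exact ih G hGsmooth

private lemma extendSmooth {m : ℕ} {g : ℂ → ℂ} (hgm : ContDiffAt ℝ (m : WithTop ℕ∞) g 0) :
    ∃ G : ℂ → ℂ, ContDiff ℝ (m : WithTop ℕ∞) G ∧ ∀ᶠ w in 𝓝 0, G w = g w := by
  obtain ⟨u, hu_mem, hu⟩ := hgm.contDiffOn le_rfl (by simp)
  obtain ⟨ε, hε, hball⟩ := Metric.mem_nhds_iff.1 hu_mem
  have hrr : (0:ℝ) < ε/2 := by linarith
  let c : ContDiffBump (0:ℂ) := ⟨ε/2, 3*ε/4, hrr, by linarith⟩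
  refine ⟨fun w => c w • g w, ?_, ?_⟩
  · rw [contDiff_iff_contDiffAt]
    intro w
    by_cases hw : w ∈ ball (0:ℂ) ε
    · exact (((c.contDiff (n := (m : ℕ∞))).of_le (by exact_mod_cast le_rfl)).contDiffAt).smul
        (hu.contDiffAt (Filter.mem_of_superset (Metric.isOpen_ball.mem_nhds hw) hball))
    · have hw' : w ∉ tsupport (c : ℂ → ℝ) := by
        rw [c.tsupport_eq]
        intro hmem
        have h34 : c.rOut = 3*ε/4 := rfl
        exact hw (Metric.mem_ball.2 (lt_of_le_of_lt (Metric.mem_closedBall.1 hmem)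
          (by rw [h34]; linarith)))
      have : ∀ᶠ y in 𝓝 w, c y • g y = 0 := by
        filter_upwards [(isClosed_tsupport (c : ℂ → ℝ)).isOpen_compl.mem_nhds hw'] with y hy
        rw [image_eq_zero_of_notMem_tsupport hy, zero_smul]
      exact (contDiffAt_const (c := (0:ℂ))).congr_of_eventuallyEq this
  · filter_upwards [Metric.ball_mem_nhds (0:ℂ) hrr] with w hw
    have h2 : c.rIn = ε/2 := rfl
    rw [c.one_of_mem_closedBall (by rw [h2]; exact Metric.ball_subset_closedBall hw),
      one_smul]

private lemma hlinR (T : ℂ →L[ℝ] ℝ) (w : ℂ) :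
    T w = w.re • T 1 + w.im • T Complex.I := by
  have hw : w = w.re • (1:ℂ) + w.im • Complex.I := by
    simp [Complex.real_smul, Complex.re_add_im]
  conv_lhs => rw [hw]
  rw [map_add, _root_.map_smul, _root_.map_smul]

/-- For any germ `f : (ℂ, 0) → (ℝ, 0)` with nonzero real Fréchet derivative at `0`
there is a smooth `h` with `h 0 ≠ 0` such that `Im (z·h z) = f z` near `0`.
In particular `ψ z := z·h z` is an orientation-preserving liftable local
diffeomorphism germ (it fixes `0` and has invertible derivative at `0`) whose
imaginary part is `f`. -/
theorem statement7 (f : ℂ → ℝ) (hf : ContDiffAt ℝ (⊤ : ℕ∞) f 0) (hf0 : f 0 = 0)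
    (hD : fderiv ℝ f 0 ≠ 0) :
    ∃ h : ℂ → ℂ, ContDiffAt ℝ (⊤ : ℕ∞) h 0 ∧ h 0 ≠ 0 ∧
      (∀ᶠ z in 𝓝 0, (z * h z).im = f z) ∧
      (fun z : ℂ => z * h z) 0 = 0 ∧
      IsUnit (fderiv ℝ (fun z : ℂ => z * h z) 0) := by
  have hD' : ContDiffAt ℝ (⊤ : ℕ∞) (fderiv ℝ f) 0 := hf.fderiv_right (by simp)
  set g : ℂ → ℂ := fun w =>
    ((fderiv ℝ f w Complex.I : ℝ) : ℂ) + ((fderiv ℝ f w 1 : ℝ) : ℂ) * Complex.I with hgdef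
  have hg : ContDiffAt ℝ (⊤ : ℕ∞) g 0 := by
    apply ContDiffAt.add
    · exact Complex.ofRealCLM.contDiff.comp_contDiffAt _ (hD'.clm_apply contDiffAt_const)
    · exact (Complex.ofRealCLM.contDiff.comp_contDiffAt _
        (hD'.clm_apply contDiffAt_const)).mul contDiffAt_const
  set h : ℂ → ℂ := fun z => ∫ t in (0:ℝ)..1, g (t • z) with hhdef
  have h0eq : h 0 = g 0 := by
    simp [hhdef, smul_zero]
  have hg0ne : g 0 ≠ 0 := by
    intro hq
    apply hD
    have hre : fderiv ℝ f 0 Complex.I = 0 := by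
      have := congrArg Complex.re hq
      simpa [hgdef] using this
    have him : fderiv ℝ f 0 1 = 0 := by
      have := congrArg Complex.im hq
      simpa [hgdef] using this
    ext w
    rw [ContinuousLinearMap.zero_apply, hlinR (fderiv ℝ f 0) w, hre, him]
    simp
  have hsmooth : ContDiffAt ℝ (⊤ : ℕ∞) h 0 := by
    rw [show ((⊤ : ℕ∞) : WithTop ℕ∞) = ∞ from rfl, contDiffAt_infty]
    intro m
    obtain ⟨G, hG, hGg⟩ := extendSmooth (m := m) (hg.of_le (by exact_mod_cast le_top))
    have hsm : ContDiff ℝ (m : WithTop ℕ∞) (fun z : ℂ => ∫ t in (0:ℝ)..1, G (t • z)) := by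
      have := paramInt m (fun p : ℝ × ℂ => G (p.1 • p.2))
        (hG.comp (contDiff_fst.smul contDiff_snd))
      exact this
    apply hsm.contDiffAt.congr_of_eventuallyEq
    obtain ⟨δ, hδ, hδball⟩ := Metric.eventually_nhds_iff_ball.1 hGg
    filter_upwards [Metric.ball_mem_nhds (0:ℂ) hδ] with z hz
    apply intervalIntegral.integral_congr
    intro t ht
    rw [Set.uIcc_of_le (zero_le_one)] at ht
    apply (hδball _ _).symm
    rw [Metric.mem_ball, dist_zero_right] at hz ⊢
    calc ‖t • z‖ = |t| * ‖z‖ := by rw [norm_smul, Real.norm_eq_abs]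
    _ ≤ 1 * ‖z‖ := by
        apply mul_le_mul_of_nonneg_right _ (norm_nonneg z)
        rw [abs_le]; exact ⟨by linarith [ht.1], ht.2⟩
    _ < δ := by rw [one_mul]; exact hz
  refine ⟨h, hsmooth, by rw [h0eq]; exact hg0ne, ?_, by simp, ?_⟩
  · -- the imaginary part identity near 0
    obtain ⟨u₁, hu₁mem, hu₁⟩ := hf.contDiffOn (m := 1) (by exact_mod_cast le_top) (by simp)
    obtain ⟨u₂, hu₂mem, hu₂⟩ := hD'.contDiffOn (m := 1) (by exact_mod_cast le_top) (by simp)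
    have hmem : interior u₁ ∩ interior u₂ ∈ 𝓝 (0:ℂ) :=
      Filter.inter_mem (interior_mem_nhds.2 hu₁mem) (interior_mem_nhds.2 hu₂mem)
    obtain ⟨ε, hε, hεsub⟩ := Metric.mem_nhds_iff.1 hmem
    filter_upwards [Metric.ball_mem_nhds (0:ℂ) hε] with z hz
    have hsub : ∀ t ∈ Set.uIcc (0:ℝ) 1, t • z ∈ ball (0:ℂ) ε := by
      intro t ht
      rw [Set.uIcc_of_le zero_le_one] at ht
      rw [Metric.mem_ball, dist_zero_right] at hz ⊢
      calc ‖t • z‖ = |t| * ‖z‖ := by rw [norm_smul, Real.norm_eq_abs]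
      _ ≤ 1 * ‖z‖ := by
          apply mul_le_mul_of_nonneg_right _ (norm_nonneg z)
          rw [abs_le]; exact ⟨by linarith [ht.1], ht.2⟩
      _ < ε := by rw [one_mul]; exact hz
    have hdiff : ∀ w ∈ ball (0:ℂ) ε, DifferentiableAt ℝ f w := by
      intro w hw
      exact (hu₁.contDiffAt (mem_interior_iff_mem_nhds.1 (hεsub hw).1)).differentiableAt
        (by simp)
    have hcontD : ContinuousOn (fun t : ℝ => fderiv ℝ f (t • z)) (Set.uIcc (0:ℝ) 1) := by
      apply (hu₂.continuousOn).comp (by fun_prop)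
      intro t ht
      exact interior_subset (hεsub (hsub t ht)).2
    have hint1 : IntervalIntegrable (fun t : ℝ => fderiv ℝ f (t • z) z) MeasureTheory.volume 0 1 :=
      ((ContinuousLinearMap.apply ℝ ℝ z).continuous.comp_continuousOn hcontD).intervalIntegrable
    have hcontg : ContinuousOn (fun t : ℝ => g (t • z)) (Set.uIcc (0:ℝ) 1) := by
      rw [hgdef]
      apply ContinuousOn.add
      · exact Complex.continuous_ofReal.comp_continuousOn
          ((ContinuousLinearMap.apply ℝ ℝ Complex.I).continuous.comp_continuousOn hcontD)
      · exact (Complex.continuous_ofReal.comp_continuousOn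
          ((ContinuousLinearMap.apply ℝ ℝ 1).continuous.comp_continuousOn hcontD)).mul
          continuousOn_const
    have hint2 : IntervalIntegrable (fun t : ℝ => g (t • z)) MeasureTheory.volume 0 1 :=
      hcontg.intervalIntegrable
    have hderiv : ∀ t ∈ Set.uIcc (0:ℝ) 1,
        HasDerivAt (fun s : ℝ => f (s • z)) (fderiv ℝ f (t • z) z) t := by
      intro t ht
      have h1 : HasDerivAt (fun s : ℝ => s • z) z t := by
        simpa using (hasDerivAt_id t).smul_const z
      have h2 : HasFDerivAt f (fderiv ℝ f (t • z)) (t • z) :=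
        (hdiff _ (hsub t ht)).hasFDerivAt
      exact h2.comp_hasDerivAt t h1
    have hFTC : ∫ t in (0:ℝ)..1, fderiv ℝ f (t • z) z = f z := by
      rw [intervalIntegral.integral_eq_sub_of_hasDerivAt hderiv hint1]
      simp [hf0]
    have hpt : ∀ w : ℂ, (z * g w).im = fderiv ℝ f w z := by
      intro w
      rw [hlinR (fderiv ℝ f w) z, hgdef]
      simp [Complex.mul_im]
    set L : ℂ →L[ℝ] ℝ := Complex.imCLM.comp (ContinuousLinearMap.mul ℝ ℂ z) with hLdef
    have hLh : (z * h z).im = L (h z) := rfl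
    rw [hLh, hhdef, ← L.intervalIntegral_comp_comm hint2]
    have : ∀ t : ℝ, L (g (t • z)) = fderiv ℝ f (t • z) z := fun t => hpt (t • z)
    rw [show (fun t : ℝ => L (g (t • z))) = fun t : ℝ => fderiv ℝ f (t • z) z from funext this]
    exact hFTC
  · -- invertibility of the derivative
    have hh0 : h 0 ≠ 0 := by rw [h0eq]; exact hg0ne
    have hdiffh : DifferentiableAt ℝ h 0 :=
      hsmooth.differentiableAt (by simp)
    have hψ : HasFDerivAt (fun z : ℂ => z * h z)
        ((ContinuousLinearMap.id ℝ ℂ).smulRight (h 0)) 0 := by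
      have := (hasFDerivAt_id (0:ℂ)).mul hdiffh.hasFDerivAt
      exact this.congr_fderiv (by ext w; simp [mul_comm])
    rw [hψ.fderiv]
    refine isUnit_iff_exists.mpr ⟨(ContinuousLinearMap.id ℝ ℂ).smulRight ((h 0)⁻¹), ?_, ?_⟩ <;>
    · ext w
      simp [ContinuousLinearMap.mul_apply, smul_eq_mul, mul_assoc,
        inv_mul_cancel₀ hh0, mul_inv_cancel₀ hh0]
end

section
/- Let φ : ℂ → ℂ be C^∞-smooth on a neighborhood of 0 with φ(0) = 0 and invertible real Fréchet derivative at 0. Then there exist maps φ̃ : ℂ → ℂ and h : ℂ → ℂ, both C^∞-smooth on a neighborhood of 0, with φ̃(0) = 0, φ̃ having invertible real Fréchet derivative at 0, h(0) ≠ 0, such that Im(φ̃(w)) = Im(w) for all w in a neighborhood of 0 and φ(z) = φ̃(z·h(z)) for all z in a neighborhood of 0. -/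
open Complex Filter Topology
open Set MeasureTheory ContDiff

lemma contDiff_param_integral {n : ℕ∞} {u : ℂ → ℝ} (hu : ContDiff ℝ n u) :
    ContDiff ℝ n fun z : ℂ => ∫ t in (0:ℝ)..1, u (t • z) := by
  set χ : ContDiffBump (-(1/2) : ℝ) := ⟨1/2, 1, by norm_num, by norm_num⟩ with hχ
  set g : ℂ → ℝ → ℝ := fun z s => χ s * u ((-s) • z) with hg
  set f : ℝ → ℝ := Set.indicator (Set.Ioc (0:ℝ) 1) (fun _ => (1:ℝ)) with hf
  have hgs : ∀ p : ℂ, ∀ x : ℝ, p ∈ (univ : Set ℂ) → x ∉ Metric.closedBall (-(1/2):ℝ) 1 →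
      g p x = 0 := by
    intro p x _ hx
    have : χ x = 0 := χ.zero_of_le_dist (le_of_lt (by simpa [Metric.mem_closedBall] using hx))
    simp [hg, this]
  have hfl : LocallyIntegrable f volume := by
    have : Integrable f volume := by
      rw [hf, integrable_indicator_iff measurableSet_Ioc]
      exact integrableOn_const (by simp [Real.volume_Ioc])
    exact this.locallyIntegrable
  have hgc : ContDiffOn ℝ n (Function.uncurry g) ((univ : Set ℂ) ×ˢ (univ : Set ℝ)) := by
    apply ContDiff.contDiffOn
    exact (χ.contDiff.comp contDiff_snd).mul (hu.comp ((contDiff_snd.neg).smul contDiff_fst))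
  have key := contDiffOn_convolution_right_with_param (μ := volume)
    (ContinuousLinearMap.lsmul ℝ ℝ) isOpen_univ (isCompact_closedBall _ _) hgs hfl hgc
  have key2 : ContDiff ℝ n fun z : ℂ =>
      convolution f (g z) (ContinuousLinearMap.lsmul ℝ ℝ) volume 0 := by
    have hpair : ContDiff ℝ n (fun z : ℂ => ((z, (0:ℝ)) : ℂ × ℝ)) := contDiff_id.prodMk contDiff_const
    have := key.comp (s := (univ : Set ℂ)) hpair.contDiffOn
      (by rw [univ_prod_univ]; exact mapsTo_univ _ _)
    exact contDiffOn_univ.mp this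
  have hval : ∀ z : ℂ, convolution f (g z) (ContinuousLinearMap.lsmul ℝ ℝ) volume 0
      = ∫ t in (0:ℝ)..1, u (t • z) := by
    intro z
    rw [convolution_def]
    have e1 : (fun t : ℝ => (ContinuousLinearMap.lsmul ℝ ℝ) (f t) (g z (0 - t)))
        = Set.indicator (Set.Ioc (0:ℝ) 1) (fun t => g z (-t)) := by
      funext t
      by_cases ht : t ∈ Set.Ioc (0:ℝ) 1 <;>
        simp [hf, Set.indicator_of_mem, Set.indicator_of_notMem, ht]
    rw [e1, integral_indicator measurableSet_Ioc,
      intervalIntegral.integral_of_le (by norm_num : (0:ℝ) ≤ 1)]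
    apply setIntegral_congr_fun measurableSet_Ioc
    intro t ht
    have h1 : χ (-t) = 1 := by
      apply χ.one_of_mem_closedBall
      rw [Metric.mem_closedBall]
      rw [Set.mem_Ioc] at ht
      rw [Real.dist_eq]
      rw [abs_le]; constructor <;> [linarith [ht.2]; linarith [ht.1]]
    simp [hg, h1]
  exact (funext hval ▸ key2 : _)

lemma lin_decomp (L : ℂ →L[ℝ] ℝ) (z : ℂ) : L z = z.re • L 1 + z.im • L I := by
  rw [← _root_.map_smul L, ← _root_.map_smul L, ← map_add]
  congr 1
  apply Complex.ext <;> simp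

lemma cutoff (φ : ℂ → ℂ) {m : ℕ∞} {r : ℝ} (hr : 0 < r)
    (hcd : ContDiffOn ℝ m φ (Metric.ball 0 r)) :
    ∃ Φ : ℂ → ℂ, ContDiff ℝ m Φ ∧ EqOn Φ φ (Metric.ball 0 (r/2)) := by
  have h1 : (0:ℝ) < r/2 := by linarith
  have h2 : (r/2 : ℝ) < 3*r/4 := by linarith
  set χ : ContDiffBump (0:ℂ) := ⟨r/2, 3*r/4, h1, h2⟩ with hχ
  refine ⟨fun z => χ z • φ z, ?_, ?_⟩
  · rw [contDiff_iff_contDiffAt]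
    intro z
    rcases lt_or_ge (dist z 0) r with hz | hz
    · exact χ.contDiff.contDiffAt.smul
        (hcd.contDiffAt (Metric.isOpen_ball.mem_nhds (by simpa [Metric.mem_ball] using hz)))
    · have hev : ∀ᶠ w in 𝓝 z, χ w • φ w = 0 := by
        have hop : IsOpen {w : ℂ | 3*r/4 < dist w 0} :=
          isOpen_lt continuous_const (by fun_prop)
        have hzm : z ∈ {w : ℂ | 3*r/4 < dist w 0} := by
          simp only [mem_setOf_eq]; linarith
        filter_upwards [hop.mem_nhds hzm] with w hw
        have : χ w = 0 := χ.zero_of_le_dist (le_of_lt hw)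
        simp [this]
      exact contDiffAt_const.congr_of_eventuallyEq hev
  · intro z hz
    have : χ z = 1 := χ.one_of_mem_closedBall (Metric.ball_subset_closedBall hz)
    simp [this]

lemma Fsmooth (φ : ℂ → ℂ) (hφ : ContDiffAt ℝ (⊤ : ℕ∞) φ 0) (v : ℂ) :
    ContDiffAt ℝ (⊤ : ℕ∞)
      (fun z => ∫ t in (0:ℝ)..1, fderiv ℝ (fun w => (φ w).im) (t • z) v) 0 := by
  rw [contDiffAt_infty]
  intro n
  obtain ⟨s, hs, hcd⟩ := hφ.contDiffOn (m := ((n+1 : ℕ) : ℕ∞))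
    (by exact_mod_cast le_top) (by simp)
  obtain ⟨r, hr, hball⟩ := Metric.mem_nhds_iff.1 hs
  obtain ⟨Φ, hΦ, hEq⟩ := cutoff φ hr (hcd.mono hball)
  have hG : ContDiff ℝ ((n+1 : ℕ) : ℕ∞) fun w => (Φ w).im :=
    (Complex.imCLM.contDiff).comp hΦ
  have hD : ContDiff ℝ (n : ℕ∞) (fderiv ℝ fun w => (Φ w).im) :=
    hG.fderiv_right (by norm_cast)
  have hu : ContDiff ℝ (n : ℕ∞) fun w => fderiv ℝ (fun x => (Φ x).im) w v :=
    hD.clm_apply contDiff_const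
  have hconv := contDiff_param_integral hu
  apply hconv.contDiffAt.congr_of_eventuallyEq
  have hmem : Metric.ball (0:ℂ) (r/2) ∈ 𝓝 (0:ℂ) :=
    Metric.ball_mem_nhds _ (by linarith)
  filter_upwards [hmem] with z hz
  apply intervalIntegral.integral_congr
  intro t ht
  rw [uIcc_of_le (by norm_num : (0:ℝ) ≤ 1)] at ht
  have htz : t • z ∈ Metric.ball (0:ℂ) (r/2) := by
    rw [mem_ball_zero_iff] at hz ⊢
    rw [norm_smul]
    calc ‖t‖ * ‖z‖ ≤ 1 * ‖z‖ := by
          apply mul_le_mul_of_nonneg_right _ (norm_nonneg _)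
          rw [Real.norm_eq_abs, abs_le]; exact ⟨by linarith [ht.1], ht.2⟩
      _ < r/2 := by rwa [one_mul]
  have heq : (fun x => (φ x).im) =ᶠ[𝓝 (t • z)] fun x => (Φ x).im := by
    filter_upwards [Metric.isOpen_ball.mem_nhds htz] with w hw
    rw [hEq hw]
  simp only []
  rw [heq.fderiv_eq]

/-- Every local diffeomorphism germ `φ` of `(ℂ, 0)` factors as `φ = φ̃ ∘ ψ`, where
`ψ z = z·h z` (with `h` smooth near `0`, `h 0 ≠ 0`) is an orientation-preserving
liftable germ and `φ̃` is a local diffeomorphism germ preserving the imaginary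
part. -/
theorem statement8 (φ : ℂ → ℂ) (hφ : ContDiffAt ℝ (⊤ : ℕ∞) φ 0) (hφ0 : φ 0 = 0)
    (hD : IsUnit (fderiv ℝ φ 0)) :
    ∃ φt h : ℂ → ℂ,
      ContDiffAt ℝ (⊤ : ℕ∞) φt 0 ∧ ContDiffAt ℝ (⊤ : ℕ∞) h 0 ∧
      φt 0 = 0 ∧ IsUnit (fderiv ℝ φt 0) ∧ h 0 ≠ 0 ∧
      (∀ᶠ w in 𝓝 0, (φt w).im = w.im) ∧
      (∀ᶠ z in 𝓝 0, φ z = φt (z * h z)) := by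
  have hone : ((⊤ : ℕ∞) : WithTop ℕ∞) ≠ 0 := by simp
  set G : ℂ → ℝ := fun w => (φ w).im with hGdef
  set D : ℂ → ℂ →L[ℝ] ℝ := fderiv ℝ G with hDdef
  set F₁ : ℂ → ℝ := fun z => ∫ t in (0:ℝ)..1, D (t • z) 1 with hF1def
  set F₂ : ℂ → ℝ := fun z => ∫ t in (0:ℝ)..1, D (t • z) I with hF2def
  set h : ℂ → ℂ := fun z => (F₂ z : ℂ) + (F₁ z : ℂ) * I with hhdef
  set ψ : ℂ → ℂ := fun z => z * h z with hψdef
  have hF1s : ContDiffAt ℝ (⊤ : ℕ∞) F₁ 0 := Fsmooth φ hφ 1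
  have hF2s : ContDiffAt ℝ (⊤ : ℕ∞) F₂ 0 := Fsmooth φ hφ I
  have hhs : ContDiffAt ℝ (⊤ : ℕ∞) h 0 := by
    apply ContDiffAt.add
    · exact ContDiffAt.comp 0 (Complex.ofRealCLM.contDiff.contDiffAt) hF2s
    · exact (ContDiffAt.comp 0 (Complex.ofRealCLM.contDiff.contDiffAt) hF1s).mul contDiffAt_const
  -- ball where φ is C²
  obtain ⟨s2, hs2, hcd2⟩ := hφ.contDiffOn (m := (2 : ℕ∞)) (by exact_mod_cast le_top) (by simp)
  obtain ⟨r₀, hr₀, hball2⟩ := Metric.mem_nhds_iff.1 hs2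
  have hG2 : ContDiffOn ℝ 2 G (Metric.ball 0 r₀) :=
    (Complex.imCLM.contDiff).comp_contDiffOn (hcd2.mono hball2)
  have hDc : ContinuousOn D (Metric.ball 0 r₀) :=
    hG2.continuousOn_fderiv_of_isOpen Metric.isOpen_ball (by norm_num)
  have hstar : ∀ z ∈ Metric.ball (0:ℂ) r₀, ∀ t ∈ Set.uIcc (0:ℝ) 1,
      t • z ∈ Metric.ball (0:ℂ) r₀ := by
    intro z hz t ht
    rw [uIcc_of_le (by norm_num : (0:ℝ) ≤ 1)] at ht
    rw [mem_ball_zero_iff] at hz ⊢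
    rw [norm_smul]
    calc ‖t‖ * ‖z‖ ≤ 1 * ‖z‖ := by
          apply mul_le_mul_of_nonneg_right _ (norm_nonneg _)
          rw [Real.norm_eq_abs, abs_le]; exact ⟨by linarith [ht.1], ht.2⟩
      _ < r₀ := by rwa [one_mul]
  have hint : ∀ z ∈ Metric.ball (0:ℂ) r₀, ∀ v : ℂ,
      IntervalIntegrable (fun t => D (t • z) v) volume 0 1 := by
    intro z hz v
    apply ContinuousOn.intervalIntegrable
    apply ContinuousOn.clm_apply _ continuousOn_const
    exact hDc.comp (Continuous.continuousOn (by fun_prop)) (fun t ht => hstar z hz t ht)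
  have hdiff : ∀ w ∈ Metric.ball (0:ℂ) r₀, HasFDerivAt G (D w) w := by
    intro w hw
    exact ((hG2.contDiffAt (Metric.isOpen_ball.mem_nhds hw)).differentiableAt
      (by norm_num)).hasFDerivAt
  have hftc : ∀ z ∈ Metric.ball (0:ℂ) r₀, (φ z).im = ∫ t in (0:ℝ)..1, D (t • z) z := by
    intro z hz
    have heq := intervalIntegral.integral_eq_sub_of_hasDerivAt (a := (0:ℝ)) (b := 1)
      (f := fun t : ℝ => G (t • z)) (f' := fun t => D (t • z) z) ?_ ?_
    · rw [heq]
      simp [hGdef, hφ0]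
    · intro t ht
      exact HasFDerivAt.comp_hasDerivAt (l := G) (f := fun t : ℝ => t • z) t (hdiff _ (hstar z hz t ht))
        (by simpa using (hasDerivAt_id t).smul_const z)
    · exact hint z hz z
  have hsum : ∀ z ∈ Metric.ball (0:ℂ) r₀,
      (∫ t in (0:ℝ)..1, D (t • z) z) = z.re * F₁ z + z.im * F₂ z := by
    intro z hz
    calc (∫ t in (0:ℝ)..1, D (t • z) z)
        = ∫ t in (0:ℝ)..1, (z.re • D (t • z) 1 + z.im • D (t • z) I) := by
          apply intervalIntegral.integral_congr
          intro t _; exact lin_decomp _ _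
      _ = (∫ t in (0:ℝ)..1, z.re • D (t • z) 1) + ∫ t in (0:ℝ)..1, z.im • D (t • z) I :=
          intervalIntegral.integral_add ((hint z hz 1).smul z.re) ((hint z hz I).smul z.im)
      _ = z.re * F₁ z + z.im * F₂ z := by
          rw [intervalIntegral.integral_smul, intervalIntegral.integral_smul]
          simp [smul_eq_mul, hF1def, hF2def]
  have hIm : ∀ z ∈ Metric.ball (0:ℂ) r₀, (ψ z).im = (φ z).im := by
    intro z hz
    have h1 : (ψ z).im = z.re * F₁ z + z.im * F₂ z := by
      simp [hψdef, hhdef, Complex.mul_im, Complex.add_im, Complex.add_re]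
    rw [h1, ← hsum z hz, ← hftc z hz]
  -- value of h at 0
  have hdφ0 : HasFDerivAt φ (fderiv ℝ φ 0) 0 := (hφ.differentiableAt hone).hasFDerivAt
  have hD0 : D 0 = Complex.imCLM.comp (fderiv ℝ φ 0) := by
    rw [hDdef]
    exact (Complex.imCLM.hasFDerivAt.comp 0 hdφ0).fderiv
  have hF10 : F₁ 0 = D 0 1 := by
    rw [hF1def]
    simp only [smul_zero]
    rw [intervalIntegral.integral_const]
    simp
  have hF20 : F₂ 0 = D 0 I := by
    rw [hF2def]
    simp only [smul_zero]
    rw [intervalIntegral.integral_const]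
    simp
  have hne : h 0 ≠ 0 := by
    intro h00
    have him : F₁ 0 = 0 := by
      have := congrArg Complex.im h00
      simpa [hhdef] using this
    have hre : F₂ 0 = 0 := by
      have := congrArg Complex.re h00
      simpa [hhdef] using this
    obtain ⟨U, hU⟩ := hD
    have hUI : (fderiv ℝ φ 0) ((↑U⁻¹ : ℂ →L[ℝ] ℂ) I) = I := by
      have h1 : ((U : ℂ →L[ℝ] ℂ) * (↑U⁻¹ : ℂ →L[ℝ] ℂ)) I = I := by
        rw [U.mul_inv]; simp
      rwa [ContinuousLinearMap.mul_apply, hU] at h1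
    have h2 : D 0 ((↑U⁻¹ : ℂ →L[ℝ] ℂ) I) = 1 := by
      rw [hD0, ContinuousLinearMap.comp_apply, hUI]
      simp
    rw [lin_decomp, ← hF10, ← hF20, him, hre] at h2
    simp at h2
  -- derivative of ψ at 0
  set u0 : ℂˣ := Units.mk0 (h 0) hne with hu0
  set e : ℂ ≃L[ℝ] ℂ :=
    ((ContinuousLinearEquiv.unitsEquivAut ℂ u0).toLinearEquiv.restrictScalars
      ℝ).toContinuousLinearEquiv with he
  have heapp : ∀ v : ℂ, e v = v * h 0 := fun v => rfl
  have hψcd : ContDiffAt ℝ (⊤ : ℕ∞) ψ 0 := contDiffAt_id.mul hhs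
  have hψ' : HasFDerivAt ψ (e : ℂ →L[ℝ] ℂ) 0 := by
    have hmul : HasFDerivAt ψ (id (0:ℂ) • fderiv ℝ h 0 + h 0 • ContinuousLinearMap.id ℝ ℂ) 0 :=
      (hasFDerivAt_id (0:ℂ)).mul (hhs.differentiableAt hone).hasFDerivAt
    convert hmul using 1
    ext v
    simp [heapp, mul_comm]
  have hstrict : HasStrictFDerivAt ψ (e : ℂ →L[ℝ] ℂ) 0 := hψcd.hasStrictFDerivAt' hψ' hone
  set ψinv : ℂ → ℂ := hψcd.localInverse hψ' hone with hψinvdef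
  have hψinv_eq : ψinv = hstrict.localInverse ψ e 0 := rfl
  have hψ0 : ψ 0 = 0 := by simp [hψdef]
  have hleft : ∀ᶠ z in 𝓝 (0:ℂ), ψinv (ψ z) = z := by
    rw [hψinv_eq]; exact hstrict.eventually_left_inverse
  have hright : ∀ᶠ w in 𝓝 (0:ℂ), ψ (ψinv w) = w := by
    have := hstrict.eventually_right_inverse
    rw [hψ0] at this
    exact this
  have hinv0 : ψinv 0 = 0 := by
    have := hstrict.localInverse_apply_image
    rw [hψ0] at this
    exact this
  have hinvcd : ContDiffAt ℝ (⊤ : ℕ∞) ψinv 0 := by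
    have := hψcd.to_localInverse hψ' hone
    rw [hψ0] at this
    exact this
  have hinvd' : HasFDerivAt ψinv ((e.symm : ℂ →L[ℝ] ℂ)) 0 := by
    have := hstrict.to_localInverse.hasFDerivAt
    rw [hψ0] at this
    exact this
  refine ⟨fun w => φ (ψinv w), h, ?_, hhs, ?_, ?_, hne, ?_, ?_⟩
  · exact ContDiffAt.comp 0 (by rw [hinv0]; exact hφ) hinvcd
  · simp [hinv0, hφ0]
  · have hdφ' : HasFDerivAt φ (fderiv ℝ φ 0) (ψinv 0) := by rw [hinv0]; exact hdφ0
    have hdφt : HasFDerivAt (fun w => φ (ψinv w))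
        ((fderiv ℝ φ 0).comp (e.symm : ℂ →L[ℝ] ℂ)) 0 := hdφ'.comp 0 hinvd'
    rw [hdφt.fderiv, ← ContinuousLinearMap.mul_def]
    refine hD.mul ⟨⟨(e.symm : ℂ →L[ℝ] ℂ), (e : ℂ →L[ℝ] ℂ), ?_, ?_⟩, rfl⟩
    · ext v; simp [ContinuousLinearMap.mul_apply]
    · ext v; simp [ContinuousLinearMap.mul_apply]
  · have hcont : ContinuousAt ψinv 0 := hinvcd.continuousAt
    have hball_ev : ∀ᶠ w in 𝓝 (0:ℂ), ψinv w ∈ Metric.ball (0:ℂ) r₀ := by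
      have : Metric.ball (0:ℂ) r₀ ∈ 𝓝 (ψinv 0) := by
        rw [hinv0]; exact Metric.ball_mem_nhds _ hr₀
      exact hcont this
    filter_upwards [hright, hball_ev] with w hw hwb
    calc (φ (ψinv w)).im = (ψ (ψinv w)).im := (hIm _ hwb).symm
      _ = w.im := by rw [hw]
  · filter_upwards [hleft] with z hz
    show φ z = φ (ψinv (z * h z))
    rw [show z * h z = ψ z from rfl, hz]
end

section
/- Let μ be a real number with 0 < |μ| < 1, and let φ : ℂ → ℂ be C^∞-smooth on a neighborhood of 0 with φ(0) = 0, ∂φ/∂z(0) = 1 and ∂φ/∂z̄(0) = μ. Then there exist functions g, h : ℂ → ℂ, C^∞-smooth on a neighborhood of 0, with g(0) ≠ 0 and h(0) ≠ 0, such that for all z in a neighborhood of 0: z·g(z) + μ·conj(z)·conj(g(z)) = φ(z)·h(z). -/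
open Complex Filter Topology

/-- The Wirtinger derivative `∂φ/∂z` at `0` of a map `φ : ℂ → ℂ`, computed from its
real Fréchet derivative `D = fderiv ℝ φ 0` as `(D 1 − i·D i)/2`. -/
noncomputable def wirtingerDz (φ : ℂ → ℂ) : ℂ :=
  (fderiv ℝ φ 0 1 - Complex.I * fderiv ℝ φ 0 Complex.I) / 2

/-- The Wirtinger derivative `∂φ/∂z̄` at `0` of a map `φ : ℂ → ℂ`, computed from its
real Fréchet derivative `D = fderiv ℝ φ 0` as `(D 1 + i·D i)/2`. -/
noncomputable def wirtingerDzbar (φ : ℂ → ℂ) : ℂ :=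
  (fderiv ℝ φ 0 1 + Complex.I * fderiv ℝ φ 0 Complex.I) / 2

open MeasureTheory Metric intervalIntegral

set_option maxHeartbeats 1000000
set_option synthInstance.maxHeartbeats 1000000


lemma keyParam (n : ℕ) {E : Type} [NormedAddCommGroup E] [NormedSpace ℝ E] [CompleteSpace E]
    {r : ℝ} (k : ℕ) (G : ℂ → E) (hG : ContDiffOn ℝ n G (ball (0:ℂ) r)) :
    ContDiffOn ℝ n (fun z : ℂ => ∫ t in (0:ℝ)..1, t ^ k • G ((t:ℝ) • z)) (ball (0:ℂ) r) := by
  induction n generalizing E k G with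
  | zero =>
    rw [show ((0:ℕ) : WithTop ℕ∞) = 0 from rfl, contDiffOn_zero] at hG ⊢
    intro z₀ hz₀
    have hz₀' : ‖z₀‖ < r := mem_ball_zero_iff.1 hz₀
    have hrz : 0 < r - ‖z₀‖ := sub_pos.2 hz₀'
    set ε : ℝ := (r - ‖z₀‖)/2 with hε_def
    have hε : 0 < ε := by positivity
    set ρ : ℝ := ‖z₀‖ + ε with hρ_def
    have hρ0 : 0 ≤ ρ := by positivity
    have hρr : ρ < r := by rw [hρ_def, hε_def]; linarith
    have hKsub : closedBall (0:ℂ) ρ ⊆ ball 0 r := closedBall_subset_ball hρr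
    have hmem : ∀ x ∈ ball z₀ ε, ∀ t : ℝ, t ∈ Set.Icc (0:ℝ) 1 →
        (t:ℝ) • x ∈ closedBall (0:ℂ) ρ := by
      intro x hx t ht
      rw [mem_closedBall_zero_iff]
      have hxz : ‖x - z₀‖ < ε := by rw [← dist_eq_norm]; exact mem_ball.1 hx
      calc ‖(t:ℝ) • x‖ = |t| * ‖x‖ := by rw [norm_smul, Real.norm_eq_abs]
        _ ≤ 1 * ‖x‖ := by
            gcongr
            exact abs_le.2 ⟨by linarith [ht.1], ht.2⟩
        _ = ‖x‖ := one_mul _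
        _ ≤ ‖x - z₀‖ + ‖z₀‖ := by simpa using norm_add_le (x - z₀) z₀
        _ ≤ ρ := by rw [hρ_def]; linarith
    obtain ⟨M, hM⟩ := (isCompact_closedBall (0:ℂ) ρ).exists_bound_of_continuousOn
      (hG.mono hKsub)
    have huIoc : Set.uIoc (0:ℝ) 1 ⊆ Set.Icc (0:ℝ) 1 := by
      rw [Set.uIoc_of_le zero_le_one]; exact Set.Ioc_subset_Icc_self
    apply ContinuousAt.continuousWithinAt
    apply intervalIntegral.continuousAt_of_dominated_interval (bound := fun _ => M)
    · filter_upwards [ball_mem_nhds z₀ hε] with x hx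
      apply ContinuousOn.aestronglyMeasurable ?_ measurableSet_uIoc
      exact ContinuousOn.smul ((continuous_pow k).continuousOn)
        (hG.comp ((continuous_id.smul continuous_const).continuousOn)
          (fun t ht => hKsub (hmem x hx t (huIoc ht))))
    · filter_upwards [ball_mem_nhds z₀ hε] with x hx
      apply Eventually.of_forall
      intro t ht
      have ht' := huIoc ht
      rw [norm_smul]
      calc ‖(t:ℝ)^k‖ * ‖G ((t:ℝ) • x)‖ ≤ 1 * M := by
            apply mul_le_mul _ (hM _ (hmem x hx t ht')) (norm_nonneg _) zero_le_one
            rw [Real.norm_eq_abs, _root_.abs_pow]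
            exact pow_le_one₀ (abs_nonneg t) (abs_le.2 ⟨by linarith [ht'.1], ht'.2⟩)
        _ = M := one_mul _
    · exact intervalIntegrable_const
    · apply Eventually.of_forall
      intro t ht
      have hmem' : (t:ℝ) • z₀ ∈ ball (0:ℂ) r :=
        hKsub (hmem z₀ (mem_ball_self hε) t (huIoc ht))
      exact ((hG.continuousAt (isOpen_ball.mem_nhds hmem')).comp
        (continuous_const_smul (t:ℝ)).continuousAt).const_smul _
  | succ n ih =>
    have hcast : ((n+1 : ℕ) : WithTop ℕ∞) = (n : WithTop ℕ∞) + 1 := by push_cast; rfl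
    rw [hcast] at hG ⊢
    have hG' : ContDiffOn ℝ n (fderiv ℝ G) (ball (0:ℂ) r) :=
      hG.fderiv_of_isOpen isOpen_ball le_rfl
    have hGcont : ContinuousOn G (ball (0:ℂ) r) := hG.continuousOn
    have hG'cont : ContinuousOn (fderiv ℝ G) (ball (0:ℂ) r) := hG'.continuousOn
    have hGdiff : ∀ w ∈ ball (0:ℂ) r, HasFDerivAt G (fderiv ℝ G w) w := fun w hw =>
      ((hG.differentiableOn (by simp)).differentiableAt
        (isOpen_ball.mem_nhds hw)).hasFDerivAt
    have hA' := ih (k+1) (fderiv ℝ G) hG'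
    have hHas : ∀ z₀ ∈ ball (0:ℂ) r,
        HasFDerivAt (fun z : ℂ => ∫ t in (0:ℝ)..1, t ^ k • G ((t:ℝ) • z))
          (∫ t in (0:ℝ)..1, t ^ (k+1) • fderiv ℝ G ((t:ℝ) • z₀)) z₀ := by
      intro z₀ hz₀
      have hz₀' : ‖z₀‖ < r := mem_ball_zero_iff.1 hz₀
      have hrz : 0 < r - ‖z₀‖ := sub_pos.2 hz₀'
      set ε : ℝ := (r - ‖z₀‖)/2 with hε_def
      have hε : 0 < ε := by positivity
      set ρ : ℝ := ‖z₀‖ + ε with hρ_def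
      have hρ0 : 0 ≤ ρ := by positivity
      have hρr : ρ < r := by rw [hρ_def, hε_def]; linarith
      have hKsub : closedBall (0:ℂ) ρ ⊆ ball 0 r := closedBall_subset_ball hρr
      have hmem : ∀ x ∈ ball z₀ ε, ∀ t : ℝ, t ∈ Set.Icc (0:ℝ) 1 →
          (t:ℝ) • x ∈ closedBall (0:ℂ) ρ := by
        intro x hx t ht
        rw [mem_closedBall_zero_iff]
        have hxz : ‖x - z₀‖ < ε := by rw [← dist_eq_norm]; exact mem_ball.1 hx
        calc ‖(t:ℝ) • x‖ = |t| * ‖x‖ := by rw [norm_smul, Real.norm_eq_abs]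
          _ ≤ 1 * ‖x‖ := by
              gcongr
              exact abs_le.2 ⟨by linarith [ht.1], ht.2⟩
          _ = ‖x‖ := one_mul _
          _ ≤ ‖x - z₀‖ + ‖z₀‖ := by simpa using norm_add_le (x - z₀) z₀
          _ ≤ ρ := by rw [hρ_def]; linarith
      obtain ⟨M, hM⟩ := (isCompact_closedBall (0:ℂ) ρ).exists_bound_of_continuousOn
        (hG'cont.mono hKsub)
      have huIoc : Set.uIoc (0:ℝ) 1 ⊆ Set.Icc (0:ℝ) 1 := by
        rw [Set.uIoc_of_le zero_le_one]; exact Set.Ioc_subset_Icc_self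
      have habs : ∀ t : ℝ, t ∈ Set.Icc (0:ℝ) 1 → ∀ m : ℕ, ‖(t:ℝ)^m‖ ≤ 1 := by
        intro t ht m
        rw [Real.norm_eq_abs, _root_.abs_pow]
        exact pow_le_one₀ (abs_nonneg t) (abs_le.2 ⟨by linarith [ht.1], ht.2⟩)
      apply intervalIntegral.hasFDerivAt_integral_of_dominated_of_fderiv_le
        (𝕜 := ℝ) (μ := MeasureTheory.volume) (bound := fun _ => M)
        (F' := fun x t => (t:ℝ) ^ (k+1) • fderiv ℝ G ((t:ℝ) • x)) (ball_mem_nhds z₀ hε)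
      · filter_upwards [ball_mem_nhds z₀ hε] with x hx
        apply ContinuousOn.aestronglyMeasurable ?_ measurableSet_uIoc
        exact ContinuousOn.smul ((continuous_pow k).continuousOn)
          (hGcont.comp ((continuous_id.smul continuous_const).continuousOn)
            (fun t ht => hKsub (hmem x hx t (huIoc ht))))
      · apply ContinuousOn.intervalIntegrable
        have huIcc : Set.uIcc (0:ℝ) 1 = Set.Icc (0:ℝ) 1 := Set.uIcc_of_le zero_le_one
        rw [huIcc]
        exact ContinuousOn.smul ((continuous_pow k).continuousOn)
          (hGcont.comp ((continuous_id.smul continuous_const).continuousOn)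
            (fun t ht => hKsub (hmem z₀ (mem_ball_self hε) t ht)))
      · apply ContinuousOn.aestronglyMeasurable ?_ measurableSet_uIoc
        exact ContinuousOn.smul ((continuous_pow (k+1)).continuousOn)
          (hG'cont.comp ((continuous_id.smul continuous_const).continuousOn)
            (fun t ht => hKsub (hmem z₀ (mem_ball_self hε) t (huIoc ht))))
      · apply Eventually.of_forall
        intro t ht x hx
        apply le_trans (le_of_eq (norm_smul ((t:ℝ)^(k+1)) (fderiv ℝ G ((t:ℝ) • x))))
        calc ‖(t:ℝ)^(k+1)‖ * ‖fderiv ℝ G ((t:ℝ) • x)‖ ≤ 1 * M :=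
              mul_le_mul (habs t (huIoc ht) (k+1)) (hM _ (hmem x hx t (huIoc ht)))
                (norm_nonneg _) zero_le_one
          _ = M := one_mul _
      · exact intervalIntegrable_const
      · apply Eventually.of_forall
        intro t ht x hx
        have h1 : HasFDerivAt G (fderiv ℝ G ((t:ℝ)•x)) ((t:ℝ)•x) :=
          hGdiff _ (hKsub (hmem x hx t (huIoc ht)))
        have h2 : HasFDerivAt (fun y : ℂ => (t:ℝ) • y)
            ((t:ℝ) • ContinuousLinearMap.id ℝ ℂ) x := (hasFDerivAt_id x).const_smul (t:ℝ)
        have h3 := (h1.comp x h2).const_smul ((t:ℝ)^k)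
        convert h3 using 1
        · rfl
        ext v
        simp only [Function.comp, ContinuousLinearMap.coe_smul', Pi.smul_apply,
          ContinuousLinearMap.coe_comp', ContinuousLinearMap.smul_apply,
          ContinuousLinearMap.coe_id', id_eq, pow_succ, mul_smul]
        rw [ContinuousLinearMap.map_smul, smul_comm]
    rw [contDiffOn_succ_iff_fderiv_of_isOpen isOpen_ball]
    refine ⟨fun z hz => (hHas z hz).differentiableAt.differentiableWithinAt, ?_, ?_⟩
    · intro h; exact absurd h (by simp)
    · exact hA'.congr (fun z hz => (hHas z hz).fderiv)

lemma linId (L : ℂ →L[ℝ] ℂ) (z : ℂ) :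
    z * ((L 1 - Complex.I * L Complex.I)/2)
      + (starRingEnd ℂ) z * ((L 1 + Complex.I * L Complex.I)/2) = L z := by
  set x := z.re with hx
  set y := z.im with hy
  have hzxy : z = (x:ℂ) + (y:ℂ)*Complex.I := (Complex.re_add_im z).symm
  have hLz : L z = (x:ℝ) • L 1 + (y:ℝ) • L Complex.I := by
    rw [hzxy, show ((x:ℂ) + (y:ℂ)*Complex.I) = (x:ℝ) • (1:ℂ) + (y:ℝ) • Complex.I by
      simp [Complex.real_smul], map_add, L.map_smul, L.map_smul]
  rw [hLz, hzxy]
  simp only [map_add, map_mul, Complex.conj_ofReal, Complex.conj_I, Complex.real_smul]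
  linear_combination (-(y:ℂ) * L Complex.I) * Complex.I_sq

lemma linear_combination_helper (L : ℂ →L[ℝ] ℂ) (z : ℂ) :
    z * ((L 1 + (-Complex.I) * L Complex.I)/2)
      + (starRingEnd ℂ) z * ((L 1 + Complex.I * L Complex.I)/2) = L z := by
  linear_combination linId L z

lemma hadamard {φ : ℂ → ℂ} (hφ : ContDiffAt ℝ (⊤ : ℕ∞) φ 0) (hφ0 : φ 0 = 0) :
    ∃ a b : ℂ → ℂ, ContDiffAt ℝ (⊤ : ℕ∞) a 0 ∧ ContDiffAt ℝ (⊤ : ℕ∞) b 0 ∧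
      a 0 = wirtingerDz φ ∧ b 0 = wirtingerDzbar φ ∧
      ∀ᶠ z in 𝓝 (0:ℂ), φ z = z * a z + (starRingEnd ℂ) z * b z := by
  have key2 : ∀ c : ℂ, ContDiffAt ℝ (⊤ : ℕ∞)
      (fun z : ℂ => ∫ t in (0:ℝ)..1,
        (fderiv ℝ φ ((t:ℝ) • z) 1 + c * fderiv ℝ φ ((t:ℝ) • z) Complex.I)/2) 0 := by
    intro c
    apply contDiffAt_infty.2
    intro n
    obtain ⟨u, hu, hφu⟩ := hφ.contDiffOn
      (show (((n+1:ℕ) : WithTop ℕ∞)) ≤ ((⊤:ℕ∞) : WithTop ℕ∞) by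
        exact_mod_cast le_top) (by simp)
    rcases Metric.mem_nhds_iff.1 hu with ⟨r, hr, hball⟩
    have hφr : ContDiffOn ℝ ((n+1:ℕ)) φ (ball 0 r) := hφu.mono hball
    have hD : ContDiffOn ℝ n (fderiv ℝ φ) (ball 0 r) :=
      hφr.fderiv_of_isOpen isOpen_ball (by push_cast; exact le_rfl)
    have hwD : ContDiffOn ℝ n
        (fun w => (fderiv ℝ φ w 1 + c * fderiv ℝ φ w Complex.I)/2) (ball 0 r) :=
      ((hD.clm_apply contDiffOn_const).add
        (contDiffOn_const.mul (hD.clm_apply contDiffOn_const))).div_const 2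
    apply ContDiffOn.contDiffAt _ (isOpen_ball.mem_nhds (mem_ball_self hr))
    apply ContDiffOn.congr (keyParam n 0 _ hwD)
    intro z hz
    simp only [pow_zero, one_smul]
  refine ⟨fun z => ∫ t in (0:ℝ)..1,
      (fderiv ℝ φ ((t:ℝ) • z) 1 + (-Complex.I) * fderiv ℝ φ ((t:ℝ) • z) Complex.I)/2,
    fun z => ∫ t in (0:ℝ)..1,
      (fderiv ℝ φ ((t:ℝ) • z) 1 + Complex.I * fderiv ℝ φ ((t:ℝ) • z) Complex.I)/2,
    key2 (-Complex.I), key2 Complex.I, ?_, ?_, ?_⟩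
  · simp only [smul_zero]
    rw [intervalIntegral.integral_const]
    simp [wirtingerDz]
    ring
  · simp only [smul_zero]
    rw [intervalIntegral.integral_const]
    simp [wirtingerDzbar]
  · obtain ⟨u, hu, hφu⟩ := hφ.contDiffOn
      (show (((1:ℕ) : WithTop ℕ∞)) ≤ ((⊤:ℕ∞) : WithTop ℕ∞) by
        exact_mod_cast le_top) (by simp)
    rcases Metric.mem_nhds_iff.1 hu with ⟨r, hr, hball⟩
    have hφ1 : ContDiffOn ℝ ((1:ℕ)) φ (ball 0 r) := hφu.mono hball
    have hDcont : ContinuousOn (fderiv ℝ φ) (ball 0 r) :=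
      hφ1.continuousOn_fderiv_of_isOpen isOpen_ball (by exact_mod_cast le_rfl)
    filter_upwards [ball_mem_nhds (0:ℂ) hr] with z hz
    have hzr : ‖z‖ < r := mem_ball_zero_iff.1 hz
    have hmem : ∀ t : ℝ, t ∈ Set.uIcc (0:ℝ) 1 → (t:ℝ) • z ∈ ball (0:ℂ) r := by
      intro t ht
      rw [Set.uIcc_of_le zero_le_one] at ht
      rw [mem_ball_zero_iff, norm_smul, Real.norm_eq_abs]
      apply lt_of_le_of_lt _ hzr
      calc |t| * ‖z‖ ≤ 1 * ‖z‖ := by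
            gcongr
            exact abs_le.2 ⟨by linarith [ht.1], ht.2⟩
        _ = ‖z‖ := one_mul _
    have hDc : ContinuousOn (fun t : ℝ => fderiv ℝ φ ((t:ℝ) • z)) (Set.uIcc (0:ℝ) 1) :=
      hDcont.comp ((continuous_id.smul continuous_const).continuousOn) hmem
    have hint : IntervalIntegrable (fun t : ℝ => (fderiv ℝ φ ((t:ℝ) • z)) z)
        MeasureTheory.volume 0 1 :=
      (hDc.clm_apply continuousOn_const).intervalIntegrable
    have hderiv : ∀ t ∈ Set.uIcc (0:ℝ) 1,
        HasDerivAt (fun s : ℝ => φ ((s:ℝ) • z)) ((fderiv ℝ φ ((t:ℝ) • z)) z) t := by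
      intro t ht
      have h1 : HasFDerivAt φ (fderiv ℝ φ ((t:ℝ) • z)) ((t:ℝ) • z) :=
        ((hφ1.differentiableOn (by simp)).differentiableAt
          (isOpen_ball.mem_nhds (hmem t ht))).hasFDerivAt
      have h2 : HasDerivAt (fun s : ℝ => (s:ℝ) • z) z t := by
        simpa using (hasDerivAt_id t).smul_const z
      exact h1.comp_hasDerivAt t h2
    have hFTC := intervalIntegral.integral_eq_sub_of_hasDerivAt hderiv hint
    rw [one_smul, zero_smul, hφ0, sub_zero] at hFTC
    rw [← hFTC, ← intervalIntegral.integral_const_mul, ← intervalIntegral.integral_const_mul,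
      ← intervalIntegral.integral_add]
    · apply intervalIntegral.integral_congr
      intro t ht
      exact (linear_combination_helper (fderiv ℝ φ ((t:ℝ) • z)) z).symm
    · apply ContinuousOn.intervalIntegrable
      exact continuousOn_const.mul (((hDc.clm_apply continuousOn_const).add
        (continuousOn_const.mul (hDc.clm_apply continuousOn_const))).div_const 2)
    · apply ContinuousOn.intervalIntegrable
      exact continuousOn_const.mul (((hDc.clm_apply continuousOn_const).add
        (continuousOn_const.mul (hDc.clm_apply continuousOn_const))).div_const 2)

/-- For `0 < |μ| < 1` real and a germ `φ` of `(ℂ, 0)` with linear part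
`z ↦ z + μ·conj z`, there are smooth `g, h`, nonvanishing at `0`, such that
`z·g z + μ·conj z·conj (g z) = φ z·h z` near `0` (equation (14) of the paper). -/
theorem statement10 (μ : ℝ) (hμ0 : 0 < |μ|) (hμ1 : |μ| < 1)
    (φ : ℂ → ℂ) (hφ : ContDiffAt ℝ (⊤ : ℕ∞) φ 0) (hφ0 : φ 0 = 0)
    (hdz : wirtingerDz φ = 1) (hdzbar : wirtingerDzbar φ = (μ : ℂ)) :
    ∃ g h : ℂ → ℂ, ContDiffAt ℝ (⊤ : ℕ∞) g 0 ∧ ContDiffAt ℝ (⊤ : ℕ∞) h 0 ∧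
      g 0 ≠ 0 ∧ h 0 ≠ 0 ∧
      ∀ᶠ z in 𝓝 0,
        z * g z + (μ : ℂ) * (starRingEnd ℂ) z * (starRingEnd ℂ) (g z)
          = φ z * h z := by
  have hμne : μ ≠ 0 := abs_pos.mp hμ0
  have hμC : (μ:ℂ) ≠ 0 := Complex.ofReal_ne_zero.2 hμne
  have hsq : μ^2 < 1 := by nlinarith [_root_.sq_abs μ, abs_nonneg μ]
  have hμsq : (1:ℂ) - (μ:ℂ)^2 ≠ 0 := by
    have h1 : ((1 - μ^2 : ℝ) : ℂ) ≠ 0 := Complex.ofReal_ne_zero.2 (by linarith)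
    simpa using h1
  have hconjsm : ∀ {f : ℂ → ℂ}, ContDiffAt ℝ (⊤ : ℕ∞) f 0 →
      ContDiffAt ℝ (⊤ : ℕ∞) (fun z => (starRingEnd ℂ) (f z)) 0 := by
    intro f hf
    have h1 : ContDiff ℝ (⊤ : ℕ∞) (fun w : ℂ => (starRingEnd ℂ) w) := by
      have h0 : (fun w : ℂ => Complex.conjCLE w) = fun w : ℂ => (starRingEnd ℂ) w :=
        funext fun w => Complex.conjCLE_apply w
      rw [← h0]
      exact Complex.conjCLE.contDiff
    exact h1.contDiffAt.comp 0 hf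
  obtain ⟨a, b, ha, hb, ha0, hb0, hab⟩ := hadamard hφ hφ0
  rw [hdz] at ha0
  rw [hdzbar] at hb0
  have hb0ne : b 0 ≠ 0 := by rw [hb0]; exact hμC
  have hc : ContDiffAt ℝ (⊤ : ℕ∞) (fun z => b z - (μ:ℂ) * (starRingEnd ℂ) (a z)) 0 :=
    hb.sub (contDiffAt_const.mul (hconjsm ha))
  have hc0 : (fun z => b z - (μ:ℂ) * (starRingEnd ℂ) (a z)) 0 = 0 := by
    simp [hb0, ha0]
  obtain ⟨p, q, hp, hq, _, _, hpq⟩ := hadamard hc hc0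
  have hbne : ∀ᶠ z in 𝓝 (0:ℂ), b z ≠ 0 := hb.continuousAt.eventually_ne hb0ne
  have hvq : ContDiffAt ℝ (⊤ : ℕ∞) (fun z => -(q z) * (b z)⁻¹) 0 := hq.neg.mul (hb.inv hb0ne)
  have hhh : ContDiffAt ℝ (⊤ : ℕ∞)
      (fun z => 1 + (starRingEnd ℂ) z * (-(q z) * (b z)⁻¹)) 0 :=
    contDiffAt_const.add ((hconjsm contDiffAt_id).mul hvq)
  refine ⟨fun z => (a z * (1 + (starRingEnd ℂ) z * (-(q z) * (b z)⁻¹))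
      - (μ:ℂ) * (starRingEnd ℂ) (b z)
        * (starRingEnd ℂ) (1 + (starRingEnd ℂ) z * (-(q z) * (b z)⁻¹))
      + (starRingEnd ℂ) z * (p z - (μ:ℂ) * (starRingEnd ℂ) (a z)
        * (starRingEnd ℂ) (-(q z) * (b z)⁻¹))) / (1 - (μ:ℂ)^2),
    fun z => 1 + (starRingEnd ℂ) z * (-(q z) * (b z)⁻¹), ?_, hhh, ?_, ?_, ?_⟩
  · exact (((ha.mul hhh).sub ((contDiffAt_const.mul (hconjsm hb)).mul (hconjsm hhh))).add
      ((hconjsm contDiffAt_id).mul (hp.sub ((contDiffAt_const.mul (hconjsm ha)).mul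
        (hconjsm hvq))))).div_const _
  · simp only [map_zero, zero_mul, add_zero, mul_zero, ha0, hb0, map_one, one_mul,
      Complex.conj_ofReal]
    rw [show (1:ℂ) - (μ:ℂ) * (μ:ℂ) * 1 = 1 - (μ:ℂ)^2 by ring]
    exact div_ne_zero hμsq hμsq
  · simp
  · filter_upwards [hab, hpq, hbne] with z hE1 hE2 hB
    set W := (starRingEnd ℂ) z with hW
    set A := a z with hA
    set B := b z with hB2
    set P := p z with hP
    set Q := q z with hQ
    set V : ℂ := -Q * B⁻¹ with hV
    set H : ℂ := 1 + W * V with hH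
    set K : ℂ := P - (μ:ℂ) * (starRingEnd ℂ) A * (starRingEnd ℂ) V with hK
    set Gg : ℂ := (A * H - (μ:ℂ) * (starRingEnd ℂ) B * (starRingEnd ℂ) H + W * K)
      / (1 - (μ:ℂ)^2) with hGg
    have hWc : (starRingEnd ℂ) W = z := by rw [hW]; exact Complex.conj_conj z
    have hBV : B * V = -Q := by rw [hV]; field_simp
    have hBVc : (starRingEnd ℂ) B * (starRingEnd ℂ) V = -((starRingEnd ℂ) Q) := by
      rw [← map_mul, hBV, map_neg]
    have hHc : (starRingEnd ℂ) H = 1 + z * (starRingEnd ℂ) V := by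
      rw [hH]; simp only [map_add, map_mul, map_one, hWc]
    have hKc : (starRingEnd ℂ) K = (starRingEnd ℂ) P - (μ:ℂ) * A * V := by
      rw [hK]; simp only [map_sub, map_mul, Complex.conj_ofReal, Complex.conj_conj]
    have hE2c : (starRingEnd ℂ) B - (μ:ℂ) * A
        = W * (starRingEnd ℂ) P + z * (starRingEnd ℂ) Q := by
      have h := congrArg (starRingEnd ℂ) hE2
      simpa only [map_sub, map_add, map_mul, Complex.conj_ofReal, Complex.conj_conj,
        ← hW, hWc] using h
    have hE : B * H - (μ:ℂ) * (starRingEnd ℂ) A * (starRingEnd ℂ) H = z * K := by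
      rw [hHc, hH, hK]
      linear_combination hE2 + W * hBV
    have hEc : (starRingEnd ℂ) B * (starRingEnd ℂ) H - (μ:ℂ) * A * H
        = W * (starRingEnd ℂ) K := by
      rw [hKc, hHc, hH]
      linear_combination hE2c + z * hBVc
    have hG1 : (1 - (μ:ℂ)^2) * Gg
        = A * H - (μ:ℂ) * (starRingEnd ℂ) B * (starRingEnd ℂ) H + W * K := by
      rw [hGg]; field_simp
    have hG1c : (1 - (μ:ℂ)^2) * (starRingEnd ℂ) Gg
        = (starRingEnd ℂ) A * (starRingEnd ℂ) H - (μ:ℂ) * B * H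
          + z * (starRingEnd ℂ) K := by
      have h := congrArg (starRingEnd ℂ) hG1
      simpa only [map_mul, map_sub, map_add, map_one, map_pow, Complex.conj_ofReal,
        Complex.conj_conj, hWc] using h
    have hfinal : (1 - (μ:ℂ)^2) * (z * Gg + (μ:ℂ) * W * (starRingEnd ℂ) Gg)
        = (1 - (μ:ℂ)^2) * (φ z * H) := by
      linear_combination z * hG1 + (μ:ℂ) * W * hG1c - W * hE - (μ:ℂ) * z * hEc
        - (1 - (μ:ℂ)^2) * H * hE1
    exact mul_left_cancel₀ hμsq hfinal
end

section
/- Let f : ℂ → ℂ be C^∞-smooth on a neighborhood of 0 and flat at 0, i.e., all iterated (real) derivatives of f at 0 vanish (so f(0) = 0 and iteratedFDeriv ℝ n f 0 = 0 for every n). Then there exists a function g : ℂ → ℂ, C^∞-smooth on a neighborhood of 0 and flat at 0, such that f(z) = z·g(z) for all z in a neighborhood of 0. -/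
open Complex Filter Topology Set ContDiff Asymptotics

section helpers
variable {F G : Type} [NormedAddCommGroup F] [NormedSpace ℝ F]
  [NormedAddCommGroup G] [NormedSpace ℝ G]

lemma flat_val (h : ℂ → F) (h0 : iteratedFDeriv ℝ 0 h 0 = 0) : h 0 = 0 := by
  have := iteratedFDeriv_zero_apply (𝕜 := ℝ) (f := h) (x := (0:ℂ)) (fun _ => 0)
  rw [h0] at this
  simpa using this.symm

lemma flat_fderiv (h : ℂ → F) (hflat : ∀ n, iteratedFDeriv ℝ n h 0 = 0) (n : ℕ) :
    iteratedFDeriv ℝ n (fderiv ℝ h) 0 = 0 := by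
  have h0 := hflat (n + 1)
  rw [iteratedFDeriv_succ_eq_comp_right] at h0
  exact (LinearIsometryEquiv.map_eq_zero_iff _).mp h0

lemma iteratedFDeriv_congr_nhds {h1 h2 : ℂ → F} (he : h1 =ᶠ[𝓝 0] h2) (n : ℕ) :
    iteratedFDeriv ℝ n h1 0 = iteratedFDeriv ℝ n h2 0 := by
  rw [← iteratedFDerivWithin_univ, ← iteratedFDerivWithin_univ]
  exact Filter.EventuallyEq.iteratedFDerivWithin_eq
    (by simpa [nhdsWithin_univ] using he) he.eq_of_nhds n

lemma flat_clm_comp (L : F →L[ℝ] G) (h : ℂ → F) (hs : ContDiffAt ℝ (⊤:ℕ∞) h 0)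
    (hflat : ∀ n, iteratedFDeriv ℝ n h 0 = 0) (n : ℕ) :
    iteratedFDeriv ℝ n (fun z => L (h z)) 0 = 0 := by
  obtain ⟨u, hu, hcd⟩ := hs.contDiffOn (m := n) (by exact_mod_cast le_top) (by simp)
  have hmem : (0:ℂ) ∈ interior u := mem_interior_iff_mem_nhds.2 hu
  have hcd' : ContDiffOn ℝ n h (interior u) := hcd.mono interior_subset
  have key := L.iteratedFDerivWithin_comp_left (hcd' 0 hmem) isOpen_interior.uniqueDiffOn hmem le_rfl
  rw [iteratedFDerivWithin_of_isOpen _ isOpen_interior hmem,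
      iteratedFDerivWithin_of_isOpen _ isOpen_interior hmem] at key
  rw [show (fun z => L (h z)) = L ∘ h from rfl, key, hflat n]
  ext m
  simp

lemma iteratedFDeriv_add_at (a b : ℂ → F) (i : ℕ) (ha : ContDiffAt ℝ i a 0)
    (hb : ContDiffAt ℝ i b 0) :
    iteratedFDeriv ℝ i (fun z => a z + b z) 0 =
      iteratedFDeriv ℝ i a 0 + iteratedFDeriv ℝ i b 0 := by
  obtain ⟨u, hu, hau⟩ := ha.contDiffOn le_rfl (by simp)
  obtain ⟨v, hv, hbv⟩ := hb.contDiffOn le_rfl (by simp)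
  have hmem : (0:ℂ) ∈ interior (u ∩ v) :=
    mem_interior_iff_mem_nhds.2 (Filter.inter_mem hu hv)
  have hau' : ContDiffOn ℝ i a (interior (u ∩ v)) :=
    hau.mono ((interior_subset).trans inter_subset_left)
  have hbv' : ContDiffOn ℝ i b (interior (u ∩ v)) :=
    hbv.mono ((interior_subset).trans inter_subset_right)
  have key := iteratedFDerivWithin_add_apply (hau' 0 hmem) (hbv' 0 hmem) isOpen_interior.uniqueDiffOn hmem
  rw [iteratedFDerivWithin_of_isOpen _ isOpen_interior hmem,
      iteratedFDerivWithin_of_isOpen _ isOpen_interior hmem,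
      iteratedFDerivWithin_of_isOpen _ isOpen_interior hmem] at key
  exact key
end helpers


lemma flat_val' {F : Type} [NormedAddCommGroup F] [NormedSpace ℝ F]
    (h : ℂ → F) (h0 : iteratedFDeriv ℝ 0 h 0 = 0) : h 0 = 0 := by
  have := iteratedFDeriv_zero_apply (𝕜 := ℝ) (f := h) (x := (0:ℂ)) (fun _ => 0)
  rw [h0] at this
  simpa using this.symm

lemma flat_fderiv' {F : Type} [NormedAddCommGroup F] [NormedSpace ℝ F]
    (h : ℂ → F) (hflat : ∀ n, iteratedFDeriv ℝ n h 0 = 0) (n : ℕ) :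
    iteratedFDeriv ℝ n (fderiv ℝ h) 0 = 0 := by
  have h0 := hflat (n + 1)
  rw [iteratedFDeriv_succ_eq_comp_right] at h0
  exact (LinearIsometryEquiv.map_eq_zero_iff _).mp h0

lemma flat_isLittleO : ∀ (M : ℕ) (F : Type) [NormedAddCommGroup F] [NormedSpace ℝ F]
    (h : ℂ → F), ContDiffAt ℝ (⊤:ℕ∞) h 0 → (∀ n, iteratedFDeriv ℝ n h 0 = 0) →
    h =o[𝓝 0] fun z : ℂ => ‖z‖ ^ M := by
  intro M
  induction M with
  | zero =>
    intro F _ _ h hs hflat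
    have h0 : h 0 = 0 := flat_val' h (hflat 0)
    simp only [pow_zero]
    rw [isLittleO_one_iff]
    have := hs.continuousAt.tendsto
    rwa [h0] at this
  | succ M IH =>
    intro F _ _ h hs hflat
    have hD : ContDiffAt ℝ (⊤:ℕ∞) (fderiv ℝ h) 0 := hs.fderiv_right (by simp)
    have IHD := IH _ (fderiv ℝ h) hD (flat_fderiv' h hflat)
    have h0 : h 0 = 0 := flat_val' h (hflat 0)
    rw [isLittleO_iff] at IHD ⊢
    intro ε hε
    obtain ⟨u, hu, hcd⟩ := hs.contDiffOn (m := 1) (by exact_mod_cast le_top) (by simp)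
    have hu' : interior u ∈ 𝓝 (0:ℂ) := isOpen_interior.mem_nhds (mem_interior_iff_mem_nhds.2 hu)
    have hbd := IHD hε
    obtain ⟨r, hr, hball⟩ := Metric.mem_nhds_iff.1 (Filter.inter_mem hu' hbd)
    have hballmem : Metric.ball (0:ℂ) r ∈ 𝓝 (0:ℂ) := Metric.ball_mem_nhds _ hr
    filter_upwards [hballmem] with z hz
    have hseg : segment ℝ (0:ℂ) z ⊆ Metric.ball (0:ℂ) r :=
      (convex_ball _ _).segment_subset (Metric.mem_ball_self hr) hz
    have hdiff : ∀ w ∈ segment ℝ (0:ℂ) z,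
        HasFDerivWithinAt h (fderiv ℝ h w) (segment ℝ (0:ℂ) z) w := by
      intro w hw
      have hwu : w ∈ interior u := (hball (hseg hw)).1
      have : DifferentiableAt ℝ h w :=
        ((hcd.mono interior_subset).differentiableOn (by simp)).differentiableAt
          (isOpen_interior.mem_nhds hwu)
      exact this.hasFDerivAt.hasFDerivWithinAt
    have hbound : ∀ w ∈ segment ℝ (0:ℂ) z, ‖fderiv ℝ h w‖ ≤ ε * ‖z‖ ^ M := by
      intro w hw
      have h1 : ‖fderiv ℝ h w‖ ≤ ε * ‖(‖w‖ ^ M)‖ := (hball (hseg hw)).2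
      have hwz : ‖w‖ ≤ ‖z‖ := by
        obtain ⟨a, b, ha, hb, hab, rfl⟩ := hw
        simp only [smul_zero, zero_add, norm_smul, Real.norm_eq_abs, _root_.abs_of_nonneg hb]
        nlinarith [norm_nonneg z]
      calc ‖fderiv ℝ h w‖ ≤ ε * ‖w‖ ^ M := by
            rwa [Real.norm_eq_abs, _root_.abs_of_nonneg (pow_nonneg (norm_nonneg w) M)] at h1
        _ ≤ ε * ‖z‖ ^ M := by
            gcongr
    have hmvt := Convex.norm_image_sub_le_of_norm_hasFDerivWithin_le hdiff hbound
      (convex_segment _ _) (left_mem_segment ℝ (0:ℂ) z) (right_mem_segment ℝ (0:ℂ) z)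
    rw [h0, sub_zero, sub_zero] at hmvt
    calc ‖h z‖ ≤ ε * ‖z‖ ^ M * ‖z‖ := hmvt
      _ = ε * ‖z‖ ^ (M + 1) := by ring
      _ ≤ ε * ‖(‖z‖ ^ (M + 1))‖ := by
          rw [Real.norm_eq_abs, _root_.abs_of_nonneg (pow_nonneg (norm_nonneg z) _)]

lemma G_isLittleO {F : Type} [NormedAddCommGroup F] [NormedSpace ℂ F] (m M : ℕ)
    (h : ℂ → F) (hs : ContDiffAt ℝ (⊤:ℕ∞) h 0) (hflat : ∀ n, iteratedFDeriv ℝ n h 0 = 0) :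
    (fun z : ℂ => (z ^ m)⁻¹ • h z) =o[𝓝 0] fun z : ℂ => ‖z‖ ^ M := by
  have h0 : h 0 = 0 := flat_val' h (hflat 0)
  have hID := flat_isLittleO (M + m) F h hs hflat
  rw [isLittleO_iff] at hID ⊢
  intro ε hε
  filter_upwards [hID hε] with z hz
  rcases eq_or_ne z 0 with rfl | hzne
  · simp only [h0, smul_zero, norm_zero]
    positivity
  · have hzm : ‖z‖ ^ m ≠ 0 := pow_ne_zero _ (norm_ne_zero_iff.2 hzne)
    rw [Real.norm_eq_abs, _root_.abs_of_nonneg (pow_nonneg (norm_nonneg z) _)] at hz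
    rw [Real.norm_eq_abs, _root_.abs_of_nonneg (pow_nonneg (norm_nonneg z) _)]
    rw [norm_smul, norm_inv, norm_pow]
    rw [pow_add] at hz
    calc (‖z‖ ^ m)⁻¹ * ‖h z‖ ≤ (‖z‖ ^ m)⁻¹ * (ε * (‖z‖ ^ M * ‖z‖ ^ m)) := by
          gcongr
        _ = ε * ‖z‖ ^ M := by
          rw [show ε * (‖z‖ ^ M * ‖z‖ ^ m) = ‖z‖ ^ m * (ε * ‖z‖ ^ M) by ring,
            inv_mul_cancel_left₀ hzm]

lemma key_div : ∀ (k : ℕ) (E : Type) [NormedAddCommGroup E] [NormedSpace ℂ E] (m : ℕ)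
    (h : ℂ → E), ContDiffAt ℝ (⊤:ℕ∞) h 0 → (∀ n, iteratedFDeriv ℝ n h 0 = 0) →
    ContDiffAt ℝ k (fun z : ℂ => (z ^ m)⁻¹ • h z) 0 ∧
      ∀ j ≤ k, iteratedFDeriv ℝ j (fun z : ℂ => (z ^ m)⁻¹ • h z) 0 = 0 := by
  intro k
  induction k with
  | zero =>
    intro E _ _ m h hs hflat
    have h0 : h 0 = 0 := flat_val' h (hflat 0)
    have hG0 : (fun z : ℂ => (z ^ m)⁻¹ • h z) 0 = 0 := by simp [h0]
    have htend : Tendsto (fun z : ℂ => (z ^ m)⁻¹ • h z) (𝓝 0) (𝓝 0) := by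
      have := G_isLittleO m 0 h hs hflat
      simpa [isLittleO_one_iff] using this
    constructor
    · rw [show ((0:ℕ) : WithTop ℕ∞) = 0 by norm_cast, contDiffAt_zero]
      obtain ⟨u, hu, hcd⟩ := hs.contDiffOn (m := 1) (by exact_mod_cast le_top) (by simp)
      refine ⟨interior u, isOpen_interior.mem_nhds (mem_interior_iff_mem_nhds.2 hu), ?_⟩
      intro w hw
      rcases eq_or_ne w 0 with rfl | hwne
      · have htend' : Tendsto (fun z : ℂ => (z ^ m)⁻¹ • h z) (𝓝[interior u] 0) (𝓝 0) :=
          htend.mono_left nhdsWithin_le_nhds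
        simpa [ContinuousWithinAt, h0] using htend'
      · refine ContinuousAt.continuousWithinAt ?_
        have hch : ContinuousAt h w :=
          ((hcd.mono interior_subset).continuousOn).continuousAt (isOpen_interior.mem_nhds hw)
        exact ((continuousAt_id.pow m).inv₀ (pow_ne_zero _ hwne)).smul hch
    · intro j hj
      interval_cases j
      ext mm
      simp [hG0]
  | succ k IH =>
    intro E _ _ m h hs hflat
    have h0 : h 0 = 0 := flat_val' h (hflat 0)
    set G : ℂ → E := fun z => (z ^ m)⁻¹ • h z with hGdef
    have hG0 : G 0 = 0 := by simp [hGdef, h0]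
    -- the two pieces of the derivative
    set Φ : E →L[ℝ] (ℂ →L[ℝ] E) := (ContinuousLinearMap.lsmul ℝ ℂ).flip with hΦdef
    set h' : ℂ → (ℂ →L[ℝ] E) := fderiv ℝ h with hh'def
    set h'' : ℂ → (ℂ →L[ℝ] E) := fun z => Φ ((-(m:ℝ)) • h z) with hh''def
    have hh''L : h'' = fun z => ((-(m:ℝ)) • Φ) (h z) := by
      funext z
      simp [hh''def, map_smul]
    have hs' : ContDiffAt ℝ (⊤:ℕ∞) h' 0 := hs.fderiv_right (by simp)
    have hflat' : ∀ n, iteratedFDeriv ℝ n h' 0 = 0 := flat_fderiv' h hflat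
    have hs'' : ContDiffAt ℝ (⊤:ℕ∞) h'' 0 := by
      rw [hh''L]
      exact (hs.continuousLinearMap_comp ((-(m:ℝ)) • Φ))
    have hflat'' : ∀ n, iteratedFDeriv ℝ n h'' 0 = 0 := by
      rw [hh''L]
      exact flat_clm_comp ((-(m:ℝ)) • Φ) h hs hflat
    set A : ℂ → (ℂ →L[ℝ] E) := fun z => (z ^ m)⁻¹ • h' z with hAdef
    set B : ℂ → (ℂ →L[ℝ] E) := fun z => (z ^ (m + 1))⁻¹ • h'' z with hBdef
    obtain ⟨hA, hAflat⟩ := IH (ℂ →L[ℝ] E) m h' hs' hflat'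
    obtain ⟨hB, hBflat⟩ := IH (ℂ →L[ℝ] E) (m + 1) h'' hs'' hflat''
    have hAB0 : A 0 + B 0 = 0 := by
      have hB0 : B 0 = 0 := by simp [hBdef]
      have hA0 : A 0 = 0 := by
        rcases Nat.eq_zero_or_pos m with rfl | hm
        · simp [hAdef, flat_val' h' (hflat' 0)]
        · simp [hAdef, zero_pow (Nat.pos_iff_ne_zero.mp hm)]
      rw [hA0, hB0, add_zero]
    -- derivative at 0
    have H0 : HasFDerivAt G (0 : ℂ →L[ℝ] E) 0 := by
      rw [hasFDerivAt_iff_isLittleO_nhds_zero]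
      have hlo := G_isLittleO m 1 h hs hflat
      simp only [pow_one] at hlo
      have : G =o[𝓝 0] fun z : ℂ => z := isLittleO_norm_right.mp hlo
      simpa [hG0] using this
    -- derivative away from 0
    obtain ⟨u, hu, hcd⟩ := hs.contDiffOn (m := 1) (by exact_mod_cast le_top) (by simp)
    have humem : (0:ℂ) ∈ interior u := mem_interior_iff_mem_nhds.2 hu
    have Hd : ∀ y ∈ interior u, HasFDerivAt G (A y + B y) y := by
      intro z hz
      rcases eq_or_ne z 0 with rfl | hzne
      · rw [hAB0]; exact H0
      · have hdh : HasFDerivAt h (h' z) z := by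
          have : DifferentiableAt ℝ h z :=
            ((hcd.mono interior_subset).differentiableOn
              (by simp)).differentiableAt (isOpen_interior.mem_nhds hz)
          exact this.hasFDerivAt
        have hzpow : z ^ m ≠ 0 := pow_ne_zero _ hzne
        have hcderiv : HasDerivAt (fun y : ℂ => (y ^ m)⁻¹)
            (-((m:ℂ) * z ^ (m - 1)) / (z ^ m) ^ 2) z := (hasDerivAt_pow m z).inv hzpow
        have hcF : HasFDerivAt (fun y : ℂ => (y ^ m)⁻¹)
            (((ContinuousLinearMap.id ℂ ℂ).smulRight
              (-((m:ℂ) * z ^ (m - 1)) / (z ^ m) ^ 2)).restrictScalars ℝ) z :=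
          hcderiv.hasFDerivAt.restrictScalars ℝ
        have hmain := hcF.smul hdh
        have hGeq : ((fun y : ℂ => (y ^ m)⁻¹) • h) = G := rfl
        rw [hGeq] at hmain
        refine hmain.congr_fderiv ?_
        symm
        ext w
        have hscal : w * (-((m:ℂ) * z ^ (m - 1)) / (z ^ m) ^ 2)
            = (z ^ (m + 1))⁻¹ * (w * -(m:ℂ)) := by
          rcases m with _ | m
          · simp
          · have hz1 : z ^ (m + 1 + 1) ≠ 0 := pow_ne_zero _ hzne
            simp only [Nat.add_sub_cancel]
            field_simp
            ring
        simp only [ContinuousLinearMap.add_apply, ContinuousLinearMap.coe_smul', Pi.smul_apply,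
          ContinuousLinearMap.coe_restrictScalars', ContinuousLinearMap.smulRight_apply,
          ContinuousLinearMap.coe_id', id_eq, hAdef, hBdef, hh''def, hΦdef,
          ContinuousLinearMap.flip_apply, ContinuousLinearMap.lsmul_apply]
        rw [show ((-(m:ℝ)) • h z) = ((-(m:ℂ)) • h z) by
          rw [← algebraMap_smul ℂ (-(m:ℝ)) (h z)]; norm_num]
        congr 1
        rw [smul_smul, smul_eq_mul, hscal]
        rw [smul_smul, mul_assoc]
    have hABc : ContDiffAt ℝ k (fun z => A z + B z) 0 := hA.add hB
    constructor
    · rw [show ((k + 1 : ℕ) : WithTop ℕ∞) = (k : ℕ) + 1 by push_cast; ring]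
      exact contDiffAt_succ_iff_hasFDerivAt.mpr ⟨fun z => A z + B z,
        ⟨interior u, isOpen_interior.mem_nhds humem, Hd⟩, hABc⟩
    · intro j hj
      rcases j with _ | j
      · ext mm
        simp [hG0]
      · have hj' : j ≤ k := Nat.succ_le_succ_iff.mp hj
        rw [iteratedFDeriv_succ_eq_comp_right]
        have hfd : fderiv ℝ G =ᶠ[𝓝 0] fun z => A z + B z := by
          filter_upwards [isOpen_interior.mem_nhds humem] with y hy
          exact (Hd y hy).fderiv
        have e1 : iteratedFDeriv ℝ j (fderiv ℝ G) 0 = 0 := by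
          rw [iteratedFDeriv_congr_nhds hfd j,
            iteratedFDeriv_add_at A B j (hA.of_le (by exact_mod_cast hj'))
              (hB.of_le (by exact_mod_cast hj')),
            hAflat j hj', hBflat j hj', add_zero]
        rw [Function.comp_apply, e1]
        exact (continuousMultilinearCurryRightEquiv' ℝ j ℂ E).symm.map_zero

/-- A smooth function `f : ℂ → ℂ` that is flat at `0` (all iterated real derivatives
at `0` vanish) is divisible by `z`: `f z = z·g z` near `0` for some smooth `g` which
is again flat at `0`. -/
theorem statement12 (f : ℂ → ℂ) (hf : ContDiffAt ℝ (⊤ : ℕ∞) f 0) (hf0 : f 0 = 0)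
    (hflat : ∀ n : ℕ, iteratedFDeriv ℝ n f 0 = 0) :
    ∃ g : ℂ → ℂ, ContDiffAt ℝ (⊤ : ℕ∞) g 0 ∧ g 0 = 0 ∧
      (∀ n : ℕ, iteratedFDeriv ℝ n g 0 = 0) ∧
      ∀ᶠ z in 𝓝 0, f z = z * g z := by
  refine ⟨fun z => (z ^ 1)⁻¹ • f z, ?_, ?_, ?_, ?_⟩
  · exact contDiffAt_infty.mpr fun n => (key_div n ℂ 1 f hf hflat).1
  · simp [hf0]
  · exact fun n => (key_div n ℂ 1 f hf hflat).2 n le_rfl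
  · refine Eventually.of_forall fun z => ?_
    rcases eq_or_ne z 0 with rfl | hz
    · simp [hf0]
    · simp only [pow_one, smul_eq_mul]
      field_simp
end

section
/- Let μ ∈ ℂ with |μ| < 1. Let A : ℂ → ℂ be the real-linear map A(z) = z + μ·conj(z), let J₁ : ℂ → ℂ be the real-linear map J₁(z) = i·z, and let J₂ := A ∘ J₁ ∘ A⁻¹ (A is invertible since |μ| < 1). Then the trace of the real-linear endomorphism J₂ ∘ J₁⁻¹ of ℂ (regarded as a 2-dimensional real vector space) equals 2·(1 + |μ|²)/(1 − |μ|²). -/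
open Complex

/-- Relation between the `μ`-invariant of a double-pinched focus-focus singularity
and the induced pair of complex structures: if `A z = z + μ·conj z` (invertible for
`|μ| < 1`), `J₁ z = i·z` is the standard complex structure on `ℂ ≅ ℝ²`, and
`J₂ = A ∘ J₁ ∘ A⁻¹`, then the trace of the real-linear endomorphism `J₂ ∘ J₁⁻¹`
equals `2·(1 + |μ|²)/(1 − |μ|²)`. -/
theorem statement13 (μ : ℂ) (hμ : ‖μ‖ < 1)
    (A J₁ : ℂ ≃ₗ[ℝ] ℂ)
    (hA : ∀ z, A z = z + μ * (starRingEnd ℂ) z)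
    (hJ₁ : ∀ z, J₁ z = Complex.I * z)
    (J₂ : ℂ →ₗ[ℝ] ℂ)
    (hJ₂ : J₂ = A.toLinearMap ∘ₗ J₁.toLinearMap ∘ₗ A.symm.toLinearMap) :
    LinearMap.trace ℝ ℂ (J₂ ∘ₗ J₁.symm.toLinearMap)
      = 2 * (1 + ‖μ‖ ^ 2) / (1 - ‖μ‖ ^ 2) := by
  set d : ℝ := 1 - ‖μ‖ ^ 2 with hdd
  have hd : d ≠ 0 := by nlinarith [norm_nonneg μ]
  have hdc : (d : ℂ) ≠ 0 := by exact_mod_cast hd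
  have hmc : μ * (starRingEnd ℂ) μ = ((‖μ‖ ^ 2 : ℝ) : ℂ) := by
    rw [Complex.mul_conj, Complex.sq_norm]
  have hAs : ∀ w, A.symm w = (w - μ * (starRingEnd ℂ) w) / (d : ℂ) := by
    intro w
    apply A.injective
    rw [A.apply_symm_apply, hA]
    simp only [map_div₀, map_sub, map_mul, Complex.conj_conj, Complex.conj_ofReal]
    field_simp
    have : ((d : ℝ) : ℂ) = 1 - μ * (starRingEnd ℂ) μ := by
      rw [hmc, hdd]; push_cast; ring
    rw [this]; ring
  have hJs : ∀ w, J₁.symm w = -Complex.I * w := by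
    intro w
    apply J₁.injective
    rw [J₁.apply_symm_apply, hJ₁]
    ring_nf
    rw [Complex.I_sq]
    ring
  have hfval : ∀ w : ℂ, (J₂ ∘ₗ J₁.symm.toLinearMap) w = A (Complex.I * A.symm (-Complex.I * w)) := by
    intro w
    simp only [LinearMap.comp_apply, LinearEquiv.coe_coe, hJ₂, hJs, hJ₁]
  rw [LinearMap.trace_eq_matrix_trace ℝ Complex.basisOneI, Matrix.trace_fin_two]
  rw [LinearMap.toMatrix_apply, LinearMap.toMatrix_apply]
  simp only [Complex.coe_basisOneI_repr, Complex.coe_basisOneI]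
  simp only [Matrix.cons_val_zero, Matrix.cons_val_one, Matrix.head_cons]
  rw [hfval, hfval, hAs, hAs, hA, hA]
  simp only [map_div₀, map_sub, map_mul, Complex.conj_conj, Complex.conj_ofReal, map_one,
    Complex.conj_I, map_neg]
  have hmu2 : ‖μ‖ ^ 2 = μ.re ^ 2 + μ.im ^ 2 := by
    rw [Complex.sq_norm, Complex.normSq_apply]; ring
  have hd2 : d = 1 - (μ.re ^ 2 + μ.im ^ 2) := by rw [hdd, hmu2]
  simp only [Complex.div_re, Complex.div_im, Complex.add_re, Complex.add_im, Complex.mul_re,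
    Complex.mul_im, Complex.normSq_apply, Complex.I_re, Complex.I_im, Complex.neg_re,
    Complex.neg_im, Complex.one_re, Complex.one_im, Complex.ofReal_re, Complex.ofReal_im,
    Complex.sub_re, Complex.sub_im, Complex.conj_re, Complex.conj_im, hmu2]
  rw [hd2] at hd ⊢
  field_simp
  ring
end

section
/- Let n ≥ 2 and let μ₁, …, μ_{n−1} ∈ ℂ be nonzero. Let c₀, c₁, …, c_{n−1} be nonzero complex numbers such that for every i ∈ {1, …, n−1} and every z ∈ ℂ: cᵢ·z + μᵢ·conj(cᵢ·z) = c₀·(z + μᵢ·conj(z)). Then cᵢ = c₀ for all i, and c₀ is a real number. -/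
/-- The complex-linear stabilizer of the tuple of normal forms `z + μᵢ·conj z`
(with all `μᵢ ≠ 0`) under the left-right action of liftable `1`-jets `z ↦ cⱼ·z` is
one-dimensional: if `cᵢ·z + μᵢ·conj (cᵢ·z) = c₀·(z + μᵢ·conj z)` for all
`i = 1, …, n−1` and all `z`, then all `cᵢ` equal `c₀` and `c₀` is real. -/
theorem statement16 (n : ℕ) (hn : 2 ≤ n) (μ : ℕ → ℂ)
    (hμ : ∀ i, 1 ≤ i → i ≤ n - 1 → μ i ≠ 0)
    (c : ℕ → ℂ) (hc : ∀ j, j ≤ n - 1 → c j ≠ 0)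
    (heq : ∀ i, 1 ≤ i → i ≤ n - 1 → ∀ z : ℂ,
      c i * z + μ i * (starRingEnd ℂ) (c i * z)
        = c 0 * (z + μ i * (starRingEnd ℂ) z)) :
    (∀ i, 1 ≤ i → i ≤ n - 1 → c i = c 0) ∧ (c 0).im = 0 := by
    have key : ∀ i, 1 ≤ i → i ≤ n - 1 →
      c i = c 0 ∧ μ i * (starRingEnd ℂ) (c i) = c 0 * μ i := by
      intro i h1i hin
      have e1 := heq i h1i hin 1
      have e2 := heq i h1i hin Complex.I
      simp only [map_mul, map_one, mul_one, Complex.conj_I] at e1 e2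
      have hI := Complex.I_ne_zero
      have e2' : c i - μ i * (starRingEnd ℂ) (c i) = c 0 * (1 - μ i) := by
        have h : (c i - μ i * (starRingEnd ℂ) (c i)) * Complex.I
            = c 0 * (1 - μ i) * Complex.I := by linear_combination e2
        exact mul_right_cancel₀ hI h
      constructor
      · linear_combination (e1 + e2') / 2
      · linear_combination (e1 - e2') / 2
    refine ⟨fun i h1i hin => (key i h1i hin).1, ?_⟩
    have h1n : 1 ≤ n - 1 := by omega
    obtain ⟨h1, h2⟩ := key 1 le_rfl h1n
    rw [h1] at h2
    rw [mul_comm (μ 1)] at h2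
    have := mul_right_cancel₀ (hμ 1 le_rfl h1n) h2
    rwa [Complex.conj_eq_iff_im] at this
end

section
/- Let h : ℂ → ℂ be C^∞-smooth on a neighborhood of 0 with h(0) ≠ 0, and suppose the map ψ(z) := z·h(z) has invertible real Fréchet derivative at 0. Then there exists a function k : ℂ → ℂ, C^∞-smooth on a neighborhood of 0, with k(0) ≠ 0, such that ψ(w·k(w)) = w for all w in a neighborhood of 0; i.e., the local inverse of ψ is again of the form w ↦ w·k(w). -/
open Complex Filter Topology

/-- The local inverse of an orientation-preserving liftable local diffeomorphism
germ `ψ z = z·h z` (with `h` smooth near `0`, `h 0 ≠ 0`, and `ψ` having invertible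
real Fréchet derivative at `0`) is again of the same form: there is `k`, smooth near
`0` with `k 0 ≠ 0`, such that `ψ (w·k w) = w` near `0`. -/
theorem statement17 (h : ℂ → ℂ) (hsm : ContDiffAt ℝ (⊤ : ℕ∞) h 0) (h0 : h 0 ≠ 0)
    (ψ : ℂ → ℂ) (hψ : ∀ z, ψ z = z * h z)
    (hD : IsUnit (fderiv ℝ ψ 0)) :
    ∃ k : ℂ → ℂ, ContDiffAt ℝ (⊤ : ℕ∞) k 0 ∧ k 0 ≠ 0 ∧
      ∀ᶠ w in 𝓝 0, ψ (w * k w) = w := by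
  have hψfun : ψ = fun z => z * h z := funext hψ
  have hψ0 : ψ 0 = 0 := by simp [hψ]
  have hψsm : ContDiffAt ℝ (⊤ : ℕ∞) ψ 0 := by
    rw [hψfun]; exact contDiffAt_id.mul hsm
  obtain ⟨u, hu⟩ := hD
  set e : ℂ ≃L[ℝ] ℂ := ContinuousLinearEquiv.ofUnit u with he
  have hn : ((⊤ : ℕ∞) : WithTop ℕ∞) ≠ 0 := by
    simp
  have hder : HasFDerivAt ψ (e : ℂ →L[ℝ] ℂ) 0 := by
    have : (e : ℂ →L[ℝ] ℂ) = fderiv ℝ ψ 0 := hu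
    rw [this]
    exact (hψsm.differentiableAt hn).hasFDerivAt
  set φ : ℂ → ℂ := hψsm.localInverse hder hn with hφ
  have hφsm : ContDiffAt ℝ (⊤ : ℕ∞) φ (ψ 0) := hψsm.to_localInverse (hf' := hder) (hn := hn)
  rw [hψ0] at hφsm
  have hφ0 : φ 0 = 0 := by
    have := hψsm.localInverse_apply_image hder hn
    rwa [hψ0] at this
  have hinv : ∀ᶠ w in 𝓝 (ψ 0), ψ (φ w) = w :=
    (hψsm.hasStrictFDerivAt' hder hn).eventually_right_inverse
  rw [hψ0] at hinv
  have hφcont : ContinuousAt φ 0 := hφsm.continuousAt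
  have hcomp : ContDiffAt ℝ (⊤ : ℕ∞) (fun w => h (φ w)) 0 :=
    ContDiffAt.comp 0 (hφ0.symm ▸ hsm) hφsm
  have hφne : ∀ᶠ w in 𝓝 (0 : ℂ), h (φ w) ≠ 0 :=
    hcomp.continuousAt.eventually_ne (by simpa [hφ0] using h0)
  refine ⟨fun w => (h (φ w))⁻¹, ?_, by simp [hφ0, h0], ?_⟩
  · have hne : (fun w => h (φ w)) 0 ≠ 0 := by simpa [hφ0] using h0
    exact hcomp.inv hne
  · filter_upwards [hinv, hφne] with w hw hne
    have hkey : w * (h (φ w))⁻¹ = φ w := by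
      have hww : φ w * h (φ w) = w := by rw [← hψ (φ w)]; exact hw
      exact (mul_inv_eq_iff_eq_mul₀ hne).mpr hww.symm
    rw [hkey, hw]
end

section
/- Let k, m ≥ 2 be integers with k ≠ m, and define φ(z) := z + conj(z)^k and φ̃(z) := z + conj(z)^m. Then there do NOT exist functions ψ₁, ψ₂ : ℂ → ℂ, each C^∞-smooth on a neighborhood of 0 and of the form ψⱼ(z) = z·hⱼ(z) or ψⱼ(z) = conj(z)·hⱼ(z) with hⱼ smooth near 0 and hⱼ(0) ≠ 0, such that φ̃(ψ₂(z)) = ψ₁(φ(z)) for all z in a neighborhood of 0. -/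
open Complex Filter Topology

noncomputable section Aux18

/-- Eventual finite-order smoothness near `0` for functions `ℝ → ℂ`. -/
def EvS (f : ℝ → ℂ) : Prop := ∀ q : ℕ, ∀ᶠ t in 𝓝 (0:ℝ), ContDiffAt ℝ q f t

theorem EvS.add {f g : ℝ → ℂ} (hf : EvS f) (hg : EvS g) : EvS (fun t => f t + g t) :=
  fun q => ((hf q).and (hg q)).mono fun _ h => h.1.add h.2

theorem EvS.mul {f g : ℝ → ℂ} (hf : EvS f) (hg : EvS g) : EvS (fun t => f t * g t) :=
  fun q => ((hf q).and (hg q)).mono fun _ h => h.1.mul h.2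

theorem evs_of_contDiff {f : ℝ → ℂ} (hf : ContDiff ℝ (⊤:ℕ∞) f) : EvS f :=
  fun q => Filter.Eventually.of_forall fun _ => hf.contDiffAt.of_le (by exact_mod_cast le_top)

theorem EvS.const_mul {f : ℝ → ℂ} (hf : EvS f) (c : ℂ) : EvS (fun t => c * f t) :=
  (evs_of_contDiff contDiff_const).mul hf

theorem evs_ofReal : EvS (fun t : ℝ => (t:ℂ)) :=
  evs_of_contDiff Complex.ofRealCLM.contDiff

theorem evs_tpow (q : ℕ) : EvS (fun t : ℝ => (t:ℂ)^q) :=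
  evs_of_contDiff (Complex.ofRealCLM.contDiff.pow q)

theorem EvS.deriv {f : ℝ → ℂ} (hf : EvS f) : EvS (_root_.deriv f) := by
  intro q
  filter_upwards [hf (q+1)] with t ht
  have h1 : ContDiffAt ℝ q (fun y => fderiv ℝ f y 1) t := by
    apply ContDiffAt.clm_apply _ contDiffAt_const
    exact ht.fderiv_right (by exact_mod_cast le_refl _)
  exact h1

theorem evs_comp {u : ℂ → ℂ} (hu : ContDiffAt ℝ (⊤:ℕ∞) u 0) {γ : ℝ → ℂ} (hγ : ContDiff ℝ (⊤:ℕ∞) γ)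
    (h0 : γ 0 = 0) : EvS (fun t => u (γ t)) := by
  intro q
  have h1 : ∀ᶠ z in 𝓝 (0:ℂ), ContDiffAt ℝ q u z :=
    (hu.of_le (by exact_mod_cast le_top)).eventually (by simp)
  have h2 : Tendsto γ (𝓝 0) (𝓝 (0:ℂ)) := by
    simpa [h0] using (hγ.continuous.tendsto 0)
  filter_upwards [h2.eventually h1] with t ht
  exact ht.comp t (hγ.contDiffAt.of_le (by exact_mod_cast le_top))


theorem hasDerivAt_ofReal (t : ℝ) : HasDerivAt (fun s : ℝ => (s:ℂ)) 1 t := by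
  simpa using (hasDerivAt_id t).ofReal_comp

theorem iter_zero_fun (n : ℕ) : iteratedDeriv n (fun _ : ℝ => (0:ℂ)) 0 = 0 := by
  have h : iteratedDeriv n (fun _ : ℝ => (0:ℂ)) 0
      = (iteratedFDeriv ℝ n (fun _ : ℝ => (0:ℂ)) 0) (fun _ => 1) := rfl
  rw [h, iteratedFDeriv_zero_fun]
  rfl

theorem iter_add {f g : ℝ → ℂ} (n : ℕ) (hf : EvS f) (hg : EvS g) :
    iteratedDeriv n (fun t => f t + g t) 0 = iteratedDeriv n f 0 + iteratedDeriv n g 0 := by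
  induction n generalizing f g with
  | zero => simp [iteratedDeriv_zero]
  | succ n ih =>
    rw [iteratedDeriv_succ', iteratedDeriv_succ', iteratedDeriv_succ']
    have h : deriv (fun t => f t + g t) =ᶠ[𝓝 (0:ℝ)] fun t => deriv f t + deriv g t := by
      filter_upwards [hf 1, hg 1] with t h1 h2
      exact deriv_fun_add (h1.differentiableAt (by simp))
        (h2.differentiableAt (by simp))
    rw [h.iteratedDeriv_eq n]
    exact ih hf.deriv hg.deriv

theorem iter_constmul {f : ℝ → ℂ} (n : ℕ) (hf : EvS f) (c : ℂ) :
    iteratedDeriv n (fun t => c * f t) 0 = c * iteratedDeriv n f 0 := by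
  induction n generalizing f with
  | zero => simp [iteratedDeriv_zero]
  | succ n ih =>
    rw [iteratedDeriv_succ', iteratedDeriv_succ']
    have h : deriv (fun t => c * f t) =ᶠ[𝓝 (0:ℝ)] fun t => c * deriv f t := by
      filter_upwards [hf 1] with t h1
      exact deriv_const_mul c (h1.differentiableAt (by simp))
    rw [h.iteratedDeriv_eq n]
    exact ih hf.deriv

theorem iter_sub {f g : ℝ → ℂ} (n : ℕ) (hf : EvS f) (hg : EvS g) :
    iteratedDeriv n (fun t => f t - g t) 0 = iteratedDeriv n f 0 - iteratedDeriv n g 0 := by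
  have h1 : (fun t => f t - g t) = fun t => f t + (-1 : ℂ) * g t := by funext t; ring
  rw [h1, iter_add n hf (hg.const_mul (-1)), iter_constmul n hg (-1)]
  ring

theorem iter_tmul {f : ℝ → ℂ} (n : ℕ) (hf : EvS f) :
    iteratedDeriv (n+1) (fun t : ℝ => (t:ℂ) * f t) 0 = (n+1 : ℂ) * iteratedDeriv n f 0 := by
  induction n generalizing f with
  | zero =>
    rw [iteratedDeriv_one]
    have hd : DifferentiableAt ℝ f 0 :=
      ((hf 1).self_of_nhds).differentiableAt (by simp)
    have h : HasDerivAt (fun t : ℝ => (t:ℂ) * f t)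
        ((1:ℂ) * f 0 + ((0:ℝ):ℂ) * deriv f 0) 0 := (hasDerivAt_ofReal 0).mul hd.hasDerivAt
    rw [h.deriv]
    simp [iteratedDeriv_zero]
  | succ n ih =>
    rw [iteratedDeriv_succ']
    have h : deriv (fun t : ℝ => (t:ℂ) * f t) =ᶠ[𝓝 (0:ℝ)]
        fun t => f t + (t:ℂ) * deriv f t := by
      filter_upwards [hf 1] with t ht
      have h2 := (hasDerivAt_ofReal t).mul
        ((ht.differentiableAt (by simp)).hasDerivAt)
      simpa using (show deriv (fun t : ℝ => (t:ℂ) * f t) t = _ from h2.deriv)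
    rw [h.iteratedDeriv_eq (n+1), iter_add (n+1) hf (evs_ofReal.mul hf.deriv),
      ih hf.deriv, ← iteratedDeriv_succ']
    push_cast
    ring

theorem iter_tpow_zero (n : ℕ) : ∀ (q : ℕ) (f : ℝ → ℂ), n < q → EvS f →
    iteratedDeriv n (fun t : ℝ => (t:ℂ)^q * f t) 0 = 0 := by
  induction n with
  | zero =>
    intro q f hq _
    rw [iteratedDeriv_zero]
    simp [zero_pow (by omega : q ≠ 0)]
  | succ n ih =>
    intro q f hq hf
    obtain ⟨q', rfl⟩ : ∃ q', q = q' + 1 := ⟨q - 1, by omega⟩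
    have hfun : (fun t : ℝ => (t:ℂ)^(q'+1) * f t) = fun t : ℝ => (t:ℂ) * ((t:ℂ)^q' * f t) := by
      funext t; ring
    rw [hfun, iter_tmul n ((evs_tpow q').mul hf), ih q' f (by omega) hf, mul_zero]

theorem iter_tpow_fact (n : ℕ) : ∀ (f : ℝ → ℂ), EvS f →
    iteratedDeriv n (fun t : ℝ => (t:ℂ)^n * f t) 0 = (Nat.factorial n : ℂ) * f 0 := by
  induction n with
  | zero => intro f _; simp [iteratedDeriv_zero]
  | succ n ih =>
    intro f hf
    have hfun : (fun t : ℝ => (t:ℂ)^(n+1) * f t) = fun t : ℝ => (t:ℂ) * ((t:ℂ)^n * f t) := by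
      funext t; ring
    rw [hfun, iter_tmul n ((evs_tpow n).mul hf), ih f hf, Nat.factorial_succ]
    push_cast
    ring


theorem contDiffAt_fderiv_apply {u : ℂ → ℂ} (hu : ContDiffAt ℝ (⊤:ℕ∞) u 0) (w : ℂ) :
    ContDiffAt ℝ (⊤:ℕ∞) (fun z => fderiv ℝ u z w) 0 := by
  apply ContDiffAt.clm_apply _ contDiffAt_const
  exact hu.fderiv_right (by simp)

theorem contDiff_ray (v : ℂ) : ContDiff ℝ (⊤:ℕ∞) (fun t : ℝ => (t:ℂ) * v) :=
  Complex.ofRealCLM.contDiff.mul contDiff_const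

theorem deriv_comp_curve {u : ℂ → ℂ} (hu : ContDiffAt ℝ (⊤:ℕ∞) u 0) {γ γ' : ℝ → ℂ}
    (hγ : ∀ t, HasDerivAt γ (γ' t) t) (h0 : γ 0 = 0) (hc : Continuous γ) :
    deriv (fun t => u (γ t)) =ᶠ[𝓝 (0:ℝ)] fun t => fderiv ℝ u (γ t) (γ' t) := by
  have h1 : ∀ᶠ z in 𝓝 (0:ℂ), ContDiffAt ℝ 1 u z :=
    (hu.of_le (by exact_mod_cast le_top)).eventually (by simp)
  have h2 : Tendsto γ (𝓝 0) (𝓝 (0:ℂ)) := by simpa [h0] using hc.tendsto 0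
  filter_upwards [h2.eventually h1] with t ht
  have hd : HasFDerivAt u (fderiv ℝ u (γ t)) (γ t) :=
    (ht.differentiableAt (by simp)).hasFDerivAt
  exact (hd.comp_hasDerivAt t (hγ t)).deriv

theorem shift_v (p : ℕ) (c : ℕ → ℂ) (v q : ℂ) :
    v * ∑ a ∈ Finset.range (p+1), c a * v^a * q^(p-a)
    = ∑ a ∈ Finset.range (p+2), (if a = 0 then 0 else c (a-1)) * v^a * q^(p+1-a) := by
  rw [Finset.sum_range_succ' (fun a => (if a = 0 then 0 else c (a-1)) * v^a * q^(p+1-a)) (p+1)]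
  have h0 : (if (0:ℕ) = 0 then (0:ℂ) else c (0-1)) * v^0 * q^(p+1-0) = 0 := by simp
  rw [h0, add_zero, Finset.mul_sum]
  apply Finset.sum_congr rfl
  intro a ha
  rw [Finset.mem_range] at ha
  rw [if_neg (Nat.succ_ne_zero a)]
  have h1 : p + 1 - (a + 1) = p - a := by omega
  rw [Nat.add_sub_cancel, h1]; ring

theorem shift_q (p : ℕ) (c : ℕ → ℂ) (v q : ℂ) :
    q * ∑ a ∈ Finset.range (p+1), c a * v^a * q^(p-a)
    = ∑ a ∈ Finset.range (p+2), (if a = p+1 then 0 else c a) * v^a * q^(p+1-a) := by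
  rw [Finset.sum_range_succ (fun a => (if a = p+1 then 0 else c a) * v^a * q^(p+1-a)) (p+1)]
  rw [if_pos rfl, zero_mul, zero_mul, add_zero, Finset.mul_sum]
  apply Finset.sum_congr rfl
  intro a ha
  rw [Finset.mem_range] at ha
  rw [if_neg (by omega : ¬ a = p + 1)]
  have h1 : p + 1 - a = (p - a) + 1 := by omega
  rw [h1, pow_succ]; ring

theorem rayform (p : ℕ) : ∀ (h : ℂ → ℂ), ContDiffAt ℝ (⊤:ℕ∞) h 0 →
    ∃ c : ℕ → ℂ, ∀ v : ℂ, iteratedDeriv p (fun t : ℝ => h ((t:ℂ) * v)) 0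
      = ∑ a ∈ Finset.range (p+1), c a * v ^ a * ((starRingEnd ℂ) v) ^ (p - a) := by
  induction p with
  | zero =>
    intro h _
    refine ⟨fun _ => h 0, fun v => ?_⟩
    simp [iteratedDeriv_zero]
  | succ p ih =>
    intro h hh
    obtain ⟨cA, hcA⟩ := ih (fun z => fderiv ℝ h z 1) (contDiffAt_fderiv_apply hh 1)
    obtain ⟨cB, hcB⟩ := ih (fun z => fderiv ℝ h z I) (contDiffAt_fderiv_apply hh I)
    refine ⟨fun a => (1/2) * ((if a = 0 then 0 else cA (a-1)) + (if a = p+1 then 0 else cA a))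
      + (1/(2*I)) * ((if a = 0 then 0 else cB (a-1)) - (if a = p+1 then 0 else cB a)),
      fun v => ?_⟩
    have hray : ∀ t : ℝ, HasDerivAt (fun s : ℝ => (s:ℂ) * v) v t := fun t => by
      simpa using (hasDerivAt_ofReal t).mul_const v
    have hray0 : ((0:ℝ):ℂ) * v = 0 := by simp
    have key : deriv (fun t : ℝ => h ((t:ℂ) * v)) =ᶠ[𝓝 (0:ℝ)]
        fun t => (v.re : ℂ) * (fun z => fderiv ℝ h z 1) ((t:ℂ)*v)
          + (v.im : ℂ) * (fun z => fderiv ℝ h z I) ((t:ℂ)*v) := by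
      refine (deriv_comp_curve hh hray hray0 (contDiff_ray v).continuous).trans
        (Filter.Eventually.of_forall fun t => ?_)
      have hv : v = v.re • (1:ℂ) + v.im • I := by
        simp [Complex.real_smul, Complex.re_add_im]
      calc fderiv ℝ h ((t:ℂ)*v) v
          = fderiv ℝ h ((t:ℂ)*v) (v.re • (1:ℂ) + v.im • I) := by rw [← hv]
        _ = v.re • fderiv ℝ h ((t:ℂ)*v) 1 + v.im • fderiv ℝ h ((t:ℂ)*v) I := by
            rw [map_add, map_smul, map_smul]
        _ = _ := by simp [Complex.real_smul]
    have hEA : EvS (fun t : ℝ => (fun z => fderiv ℝ h z 1) ((t:ℂ)*v)) :=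
      evs_comp (contDiffAt_fderiv_apply hh 1) (contDiff_ray v) hray0
    have hEB : EvS (fun t : ℝ => (fun z => fderiv ℝ h z I) ((t:ℂ)*v)) :=
      evs_comp (contDiffAt_fderiv_apply hh I) (contDiff_ray v) hray0
    rw [iteratedDeriv_succ', key.iteratedDeriv_eq p,
      iter_add p (hEA.const_mul _) (hEB.const_mul _),
      iter_constmul p hEA _, iter_constmul p hEB _, hcA v, hcB v]
    -- now pure algebra
    have hre : (v.re : ℂ) = (v + (starRingEnd ℂ) v) / 2 := by
      rw [Complex.add_conj]; push_cast; ring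
    have him : (v.im : ℂ) = (v - (starRingEnd ℂ) v) / (2*I) := by
      rw [Complex.sub_conj]
      field_simp
      push_cast; ring
    set q := (starRingEnd ℂ) v
    rw [hre, him]
    have expand : ∑ a ∈ Finset.range (p+2),
        ((1/2) * ((if a = 0 then 0 else cA (a-1)) + (if a = p+1 then 0 else cA a))
          + (1/(2*I)) * ((if a = 0 then 0 else cB (a-1)) - (if a = p+1 then 0 else cB a)))
          * v^a * q^(p+1-a)
        = (1/2) * (∑ a ∈ Finset.range (p+2), (if a = 0 then 0 else cA (a-1)) * v^a * q^(p+1-a))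
        + (1/2) * (∑ a ∈ Finset.range (p+2), (if a = p+1 then 0 else cA a) * v^a * q^(p+1-a))
        + (1/(2*I)) * (∑ a ∈ Finset.range (p+2), (if a = 0 then 0 else cB (a-1)) * v^a * q^(p+1-a))
        - (1/(2*I)) * (∑ a ∈ Finset.range (p+2), (if a = p+1 then 0 else cB a) * v^a * q^(p+1-a)) := by
      rw [Finset.mul_sum, Finset.mul_sum, Finset.mul_sum, Finset.mul_sum,
        ← Finset.sum_add_distrib, ← Finset.sum_add_distrib, ← Finset.sum_sub_distrib]
      exact Finset.sum_congr rfl fun a _ => by ring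
    rw [expand, ← shift_v p cA v q, ← shift_q p cA v q, ← shift_v p cB v q, ← shift_q p cB v q]
    ring


theorem contDiff_curveK (k : ℕ) (v : ℂ) :
    ContDiff ℝ (⊤:ℕ∞) (fun t : ℝ => (t:ℂ) * v + (t:ℂ)^k * ((starRingEnd ℂ) v)^k) :=
  (contDiff_ray v).add ((Complex.ofRealCLM.contDiff.pow k).mul contDiff_const)

theorem curveK_hasDeriv (k : ℕ) (hk : 1 ≤ k) (v : ℂ) (t : ℝ) :
    HasDerivAt (fun t : ℝ => (t:ℂ) * v + (t:ℂ)^k * ((starRingEnd ℂ) v)^k)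
      (v + (t:ℂ)^(k-1) * ((k:ℂ) * ((starRingEnd ℂ) v)^k)) t := by
  have h1 : HasDerivAt (fun t : ℝ => (t:ℂ) * v) v t := by
    simpa using (hasDerivAt_ofReal t).mul_const v
  have h2 := (hasDerivAt_pow k ((t:ℝ):ℂ)).comp_ofReal
  have h3 := h1.add (h2.mul_const (((starRingEnd ℂ) v)^k))
  exact h3.congr_deriv (by ring)

theorem phikill (k : ℕ) (hk : 2 ≤ k) : ∀ (p : ℕ), p < k → ∀ (u : ℂ → ℂ),
    ContDiffAt ℝ (⊤:ℕ∞) u 0 → ∀ v : ℂ,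
    iteratedDeriv p (fun t : ℝ => u ((t:ℂ)*v + (t:ℂ)^k * ((starRingEnd ℂ) v)^k)) 0
      = iteratedDeriv p (fun t : ℝ => u ((t:ℂ)*v)) 0 := by
  intro p
  induction p with
  | zero =>
    intro _ u _ v
    rw [iteratedDeriv_zero, iteratedDeriv_zero]
    norm_num [zero_pow (by omega : k ≠ 0)]
  | succ p ih =>
    intro hpk u hu v
    have hγ0 : ((0:ℝ):ℂ) * v + ((0:ℝ):ℂ)^k * ((starRingEnd ℂ) v)^k = 0 := by
      norm_num [zero_pow (by omega : k ≠ 0)]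
    have hray0 : ((0:ℝ):ℂ) * v = 0 := by simp
    -- derivative of u along the curve
    have key : deriv (fun t : ℝ => u ((t:ℂ)*v + (t:ℂ)^k * ((starRingEnd ℂ) v)^k)) =ᶠ[𝓝 (0:ℝ)]
        fun t => (fun z => fderiv ℝ u z v) ((t:ℂ)*v + (t:ℂ)^k * ((starRingEnd ℂ) v)^k)
          + (t:ℂ)^(k-1) * ((k:ℂ) *
            (fun z => fderiv ℝ u z (((starRingEnd ℂ) v)^k)) ((t:ℂ)*v + (t:ℂ)^k * ((starRingEnd ℂ) v)^k)) := by
      refine (deriv_comp_curve hu (curveK_hasDeriv k (by omega) v) hγ0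
        (contDiff_curveK k v).continuous).trans (Filter.Eventually.of_forall fun t => ?_)
      dsimp only
      have harg : v + (t:ℂ)^(k-1) * ((k:ℂ) * ((starRingEnd ℂ) v)^k)
          = v + ((k * t^(k-1) : ℝ) : ℂ) * ((starRingEnd ℂ) v)^k := by
        push_cast; ring
      rw [harg]
      have : ((k * t^(k-1) : ℝ) : ℂ) * ((starRingEnd ℂ) v)^k
          = (k * t^(k-1) : ℝ) • (((starRingEnd ℂ) v)^k) := by
        rw [Complex.real_smul]
      rw [this, map_add, map_smul]
      rw [Complex.real_smul]
      push_cast; ring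
    have hUv : EvS (fun t : ℝ =>
        (fun z => fderiv ℝ u z v) ((t:ℂ)*v + (t:ℂ)^k * ((starRingEnd ℂ) v)^k)) :=
      evs_comp (contDiffAt_fderiv_apply hu v) (contDiff_curveK k v) hγ0
    have hUw : EvS (fun t : ℝ =>
        (fun z => fderiv ℝ u z (((starRingEnd ℂ) v)^k)) ((t:ℂ)*v + (t:ℂ)^k * ((starRingEnd ℂ) v)^k)) :=
      evs_comp (contDiffAt_fderiv_apply hu _) (contDiff_curveK k v) hγ0
    -- derivative of u along the ray
    have key2 : deriv (fun t : ℝ => u ((t:ℂ)*v)) =ᶠ[𝓝 (0:ℝ)]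
        fun t => (fun z => fderiv ℝ u z v) ((t:ℂ)*v) := by
      refine (deriv_comp_curve hu (γ' := fun _ => v) (fun t => by
        simpa using (hasDerivAt_ofReal t).mul_const v) hray0
        (contDiff_ray v).continuous).trans (Filter.Eventually.of_forall fun t => rfl)
    rw [iteratedDeriv_succ', iteratedDeriv_succ', key.iteratedDeriv_eq p, key2.iteratedDeriv_eq p,
      iter_add p hUv ((evs_tpow (k-1)).mul (hUw.const_mul _)),
      iter_tpow_zero p (k-1) _ (by omega) (hUw.const_mul _),
      ih (by omega) (fun z => fderiv ℝ u z v) (contDiffAt_fderiv_apply hu v) v, add_zero]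

theorem root_sum (N : ℕ) (hN : 0 < N) {ζ : ℂ} (hζ : IsPrimitiveRoot ζ N) (E : ℤ)
    (hE : ¬ (N:ℤ) ∣ E) : ∑ j ∈ Finset.range N, ((ζ ^ j : ℂ)) ^ E = 0 := by
  have h1 : ∀ j : ℕ, (ζ ^ j : ℂ) ^ E = (ζ ^ E) ^ j := by
    intro j
    rw [← zpow_natCast ζ j, ← zpow_mul, mul_comm, zpow_mul, zpow_natCast]
  simp only [h1]
  have hx1 : ζ ^ E ≠ 1 := fun h => hE ((hζ.zpow_eq_one_iff_dvd E).mp h)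
  rw [geom_sum_eq hx1]
  have hxN : (ζ ^ E) ^ N = 1 := by
    rw [← zpow_natCast (ζ ^ E) N, ← zpow_mul, mul_comm, zpow_mul, zpow_natCast, hζ.pow_eq_one,
      one_zpow]
  rw [hxN, sub_self, zero_div]

def evb (b : Bool) (z : ℂ) : ℂ := if b then (starRingEnd ℂ) z else z

theorem kill (p : ℕ) {ζ : ℂ} (hζ : IsPrimitiveRoot ζ (2*p+3)) (habs : ‖ζ‖ = 1)
    (b : Bool) (d : ℕ → ℂ) (K : ℂ)
    (H : ∀ v : ℂ, evb b v * (∑ a ∈ Finset.range (p+1), d a * v^a * ((starRingEnd ℂ) v) ^ (p-a))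
          + evb (!b) v ^ (p+1) * K = 0) : K = 0 := by
  set N : ℕ := 2*p+3 with hN
  have hζ0 : ζ ≠ 0 := hζ.ne_zero (by omega)
  have hxabs : ∀ j : ℕ, ‖ζ ^ j‖ = 1 := by
    intro j; rw [norm_pow, habs, one_pow]
  have hx0 : ∀ j : ℕ, (ζ:ℂ) ^ j ≠ 0 := fun j => pow_ne_zero j hζ0
  have hconj : ∀ j : ℕ, (starRingEnd ℂ) (ζ ^ j) = (ζ ^ j)⁻¹ := by
    intro j
    have h := Complex.mul_conj (ζ ^ j)
    rw [Complex.normSq_eq_norm_sq, hxabs j] at h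
    field_simp at h ⊢
    push_cast at h
    linear_combination h
  -- the exponent
  set E : ℕ → ℤ := fun a => if b then 2*(a:ℤ) - 2*(p:ℤ) - 2 else 2*(a:ℤ) + 2 with hE
  have hEnd : ∀ a : ℕ, a ≤ p → ¬ (N:ℤ) ∣ E a := by
    intro a ha hdvd
    cases b with
    | false =>
      simp only [hE, Bool.false_eq_true, if_false] at hdvd
      have h2 := Int.le_of_dvd (by omega) hdvd
      omega
    | true =>
      simp only [hE, if_true] at hdvd
      rw [← dvd_neg] at hdvd
      have h2 := Int.le_of_dvd (by omega) hdvd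
      omega
  -- each summand of H, weighted
  have key : ∀ (j a : ℕ), a ≤ p →
      evb b (ζ^j) ^ (p+1) * (evb b (ζ^j) * (d a * (ζ^j)^a * ((starRingEnd ℂ) (ζ^j))^(p-a)))
        = d a * ((ζ^j) ^ (E a)) := by
    intro j a ha
    set x : ℂ := ζ^j with hxdef
    have hx : x ≠ 0 := hx0 j
    cases b with
    | false =>
      have hEa : x ^ (E a) = x ^ (2*a+2 : ℕ) := by
        have h0 : E a = ((2*a+2 : ℕ) : ℤ) := by simp only [hE]; push_cast; ring
        rw [h0, zpow_natCast]
      rw [hEa]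
      simp only [evb, Bool.false_eq_true, if_false, (show (starRingEnd ℂ) x = x⁻¹ from hconj j), ← hxdef, inv_pow]
      apply mul_right_cancel₀ (pow_ne_zero (p-a) hx)
      have hme : (x^(p-a))⁻¹ * x^(p-a) = 1 := inv_mul_cancel₀ (pow_ne_zero _ hx)
      calc x^(p+1) * (x * (d a * x^a * (x^(p-a))⁻¹)) * x^(p-a)
          = x^(p+1) * x * x^a * d a * ((x^(p-a))⁻¹ * x^(p-a)) := by ring
        _ = d a * x^(p+1+1+a) := by rw [hme, pow_add, pow_add]; ring
        _ = d a * x^(2*a+2) * x^(p-a) := by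
            rw [mul_assoc, ← pow_add]
            congr 2
            omega
    | true =>
      have hEa : x ^ (E a) = (x ^ (2*p+2-2*a : ℕ))⁻¹ := by
        have h0 : E a = -((2*p+2-2*a : ℕ) : ℤ) := by
          simp only [hE, if_true]
          rw [Nat.cast_sub (by omega)]
          push_cast; ring
        rw [h0, zpow_neg, zpow_natCast]
      rw [hEa]
      simp only [evb, if_true, (show (starRingEnd ℂ) x = x⁻¹ from hconj j), ← hxdef, inv_pow]
      apply mul_right_cancel₀ (show x^(p+1) * (x * x^(p-a)) ≠ 0 from
        mul_ne_zero (pow_ne_zero _ hx) (mul_ne_zero hx (pow_ne_zero _ hx)))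
      have hmerge : x^(p+1) * (x * x^(p-a)) = x^(2*p+2-2*a) * x^a := by
        have h1 : x * x^(p-a) = x^(p-a+1) := by rw [pow_succ, mul_comm]
        rw [h1, ← pow_add, ← pow_add]
        congr 1
        omega
      calc (x^(p+1))⁻¹ * ((x)⁻¹ * (d a * x^a * (x^(p-a))⁻¹)) * (x^(p+1) * (x * x^(p-a)))
          = d a * x^a * (((x^(p+1))⁻¹ * x^(p+1)) * ((x⁻¹) * x) * ((x^(p-a))⁻¹ * x^(p-a))) := by
            ring
        _ = d a * x^a := by
            rw [inv_mul_cancel₀ (pow_ne_zero _ hx), inv_mul_cancel₀ hx,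
              inv_mul_cancel₀ (pow_ne_zero _ hx)]
            ring
        _ = d a * (x^(2*p+2-2*a))⁻¹ * (x^(p+1) * (x * x^(p-a))) := by
            rw [hmerge, mul_assoc, inv_mul_cancel_left₀ (pow_ne_zero _ hx)]
  -- weighted sum of the hypothesis
  have Hsum : ∑ j ∈ Finset.range N, evb b (ζ^j) ^ (p+1) *
      (evb b (ζ^j) * (∑ a ∈ Finset.range (p+1), d a * (ζ^j)^a * ((starRingEnd ℂ) (ζ^j))^(p-a))
        + evb (!b) (ζ^j) ^ (p+1) * K) = 0 :=
    Finset.sum_eq_zero fun j _ => by rw [H (ζ^j), mul_zero]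
  have hsplit : ∀ j : ℕ, evb b (ζ^j) ^ (p+1) *
      (evb b (ζ^j) * (∑ a ∈ Finset.range (p+1), d a * (ζ^j)^a * ((starRingEnd ℂ) (ζ^j))^(p-a))
        + evb (!b) (ζ^j) ^ (p+1) * K)
      = (∑ a ∈ Finset.range (p+1), d a * ((ζ^j) ^ (E a))) + K := by
    intro j
    rw [mul_add]
    congr 1
    · rw [Finset.mul_sum, Finset.mul_sum]
      refine Finset.sum_congr rfl fun a ha => ?_
      rw [Finset.mem_range] at ha
      rw [← key j a (by omega)]
    · have hbb : evb b (ζ^j) * evb (!b) (ζ^j) = 1 := by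
        have hmc : (ζ^j) * (starRingEnd ℂ) (ζ^j) = 1 := by
          rw [Complex.mul_conj, Complex.normSq_eq_norm_sq, hxabs j]
          norm_num
        cases b
        · simpa [evb] using hmc
        · simpa [evb, mul_comm] using hmc
      calc evb b (ζ^j) ^ (p+1) * (evb (!b) (ζ^j) ^ (p+1) * K)
          = (evb b (ζ^j) * evb (!b) (ζ^j))^(p+1) * K := by rw [mul_pow]; ring
        _ = K := by rw [hbb, one_pow, one_mul]
  rw [Finset.sum_congr rfl (fun j _ => hsplit j), Finset.sum_add_distrib,
    Finset.sum_const, Finset.card_range] at Hsum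
  rw [Finset.sum_comm] at Hsum
  have hz : ∀ a ∈ Finset.range (p+1), ∑ j ∈ Finset.range N, d a * ((ζ^j) ^ (E a)) = 0 := by
    intro a ha
    rw [Finset.mem_range] at ha
    rw [← Finset.mul_sum, root_sum N (by omega) hζ (E a) (hEnd a (by omega)), mul_zero]
  rw [Finset.sum_eq_zero hz, zero_add] at Hsum
  have hNne : (N:ℂ) ≠ 0 := by
    simp only [Nat.cast_ne_zero]; omega
  have := Hsum
  rw [nsmul_eq_mul] at this
  exact (mul_eq_zero.mp this).resolve_left hNne


theorem main_aux (k m : ℕ) (hk : 2 ≤ k) (hm : 2 ≤ m) (hkm : k ≠ m)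
    (h₁ h₂ : ℂ → ℂ) (hh₁ : ContDiffAt ℝ (⊤:ℕ∞) h₁ 0) (hh₂ : ContDiffAt ℝ (⊤:ℕ∞) h₂ 0)
    (h10 : h₁ 0 ≠ 0) (h20 : h₂ 0 ≠ 0) (b₁ b₂ : Bool)
    (heq : ∀ᶠ z in 𝓝 (0:ℂ), evb b₂ z * h₂ z + (starRingEnd ℂ) (evb b₂ z * h₂ z) ^ m
        = evb b₁ (z + (starRingEnd ℂ) z ^ k) * h₁ (z + (starRingEnd ℂ) z ^ k)) : False := by
  have hv0 : ∀ v : ℂ, ((0:ℝ):ℂ) * v = 0 := fun v => by simp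
  have hγ0 : ∀ v : ℂ, ((0:ℝ):ℂ) * v + ((0:ℝ):ℂ)^k * ((starRingEnd ℂ) v)^k = 0 := fun v => by
    norm_num [zero_pow (by omega : k ≠ 0)]
  -- the equation along rays
  have hray : ∀ v : ℂ, ∀ᶠ (t : ℝ) in 𝓝 (0:ℝ),
      ((t:ℂ) * (evb b₂ v * h₂ ((t:ℂ)*v))
        + (t:ℂ)^m * (evb (!b₂) v ^ m * ((starRingEnd ℂ) (h₂ ((t:ℂ)*v))) ^ m))
      - ((t:ℂ) * (evb b₁ v * h₁ ((t:ℂ)*v + (t:ℂ)^k * ((starRingEnd ℂ) v)^k))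
        + (t:ℂ)^k * (evb (!b₁) v ^ k * h₁ ((t:ℂ)*v + (t:ℂ)^k * ((starRingEnd ℂ) v)^k))) = 0 := by
    intro v
    have htend : Tendsto (fun t : ℝ => (t:ℂ)*v) (𝓝 0) (𝓝 0) := by
      have := (contDiff_ray v).continuous.tendsto 0
      simpa using this
    filter_upwards [htend.eventually heq] with t ht
    have e1 : (starRingEnd ℂ) ((t:ℂ)*v) = (t:ℂ) * (starRingEnd ℂ) v := by
      rw [map_mul, Complex.conj_ofReal]
    have e2 : evb b₂ ((t:ℂ)*v) = (t:ℂ) * evb b₂ v := by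
      cases b₂ <;> simp [evb, e1]
    have e3 : (t:ℂ)*v + ((starRingEnd ℂ) ((t:ℂ)*v))^k
        = (t:ℂ)*v + (t:ℂ)^k * ((starRingEnd ℂ) v)^k := by rw [e1, mul_pow]
    rw [e2, e3] at ht
    have e4 : evb b₁ ((t:ℂ)*v + (t:ℂ)^k * ((starRingEnd ℂ) v)^k)
        = (t:ℂ) * evb b₁ v + (t:ℂ)^k * evb (!b₁) v ^ k := by
      cases b₁ <;>
        simp [evb, map_add, map_mul, map_pow, Complex.conj_ofReal, Complex.conj_conj]
    have e5 : (starRingEnd ℂ) ((t:ℂ) * evb b₂ v * h₂ ((t:ℂ)*v)) ^ m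
        = (t:ℂ)^m * (evb (!b₂) v ^ m * ((starRingEnd ℂ) (h₂ ((t:ℂ)*v))) ^ m) := by
      rw [map_mul, map_mul, Complex.conj_ofReal]
      have e6 : (starRingEnd ℂ) (evb b₂ v) = evb (!b₂) v := by
        cases b₂ <;> simp [evb, Complex.conj_conj]
      rw [e6, mul_pow, mul_pow]
      ring
    rw [e4, e5] at ht
    linear_combination ht
  -- smoothness of pieces
  have Eh₂ : ∀ v : ℂ, EvS (fun t : ℝ => h₂ ((t:ℂ)*v)) :=
    fun v => evs_comp hh₂ (contDiff_ray v) (hv0 v)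
  have Eh₂c : ∀ v : ℂ, EvS (fun t : ℝ => ((starRingEnd ℂ) (h₂ ((t:ℂ)*v))) ^ m) := by
    intro v
    have hcu : ContDiffAt ℝ (⊤:ℕ∞) (fun z => ((starRingEnd ℂ) (h₂ z)) ^ m) 0 :=
      (Complex.conjCLE.contDiff.contDiffAt.comp 0 hh₂).pow m
    exact evs_comp hcu (contDiff_ray v) (hv0 v)
  have Eh₁γ : ∀ v : ℂ, EvS (fun t : ℝ => h₁ ((t:ℂ)*v + (t:ℂ)^k * ((starRingEnd ℂ) v)^k)) :=
    fun v => evs_comp hh₁ (contDiff_curveK k v) (hγ0 v)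
  -- the n-th derivative identity, for every order n ≥ 1
  have Phi : ∀ (n : ℕ) (v : ℂ),
      iteratedDeriv (n+1) (fun t : ℝ => (t:ℂ) * (evb b₂ v * h₂ ((t:ℂ)*v))) 0
      + iteratedDeriv (n+1) (fun t : ℝ =>
          (t:ℂ)^m * (evb (!b₂) v ^ m * ((starRingEnd ℂ) (h₂ ((t:ℂ)*v))) ^ m)) 0
      - (iteratedDeriv (n+1) (fun t : ℝ =>
          (t:ℂ) * (evb b₁ v * h₁ ((t:ℂ)*v + (t:ℂ)^k * ((starRingEnd ℂ) v)^k))) 0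
        + iteratedDeriv (n+1) (fun t : ℝ =>
          (t:ℂ)^k * (evb (!b₁) v ^ k * h₁ ((t:ℂ)*v + (t:ℂ)^k * ((starRingEnd ℂ) v)^k))) 0) = 0 := by
    intro n v
    have E1 : EvS (fun t : ℝ => (t:ℂ) * (evb b₂ v * h₂ ((t:ℂ)*v))) :=
      evs_ofReal.mul ((Eh₂ v).const_mul _)
    have E2 : EvS (fun t : ℝ =>
        (t:ℂ)^m * (evb (!b₂) v ^ m * ((starRingEnd ℂ) (h₂ ((t:ℂ)*v))) ^ m)) :=
      (evs_tpow m).mul ((Eh₂c v).const_mul _)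
    have E3 : EvS (fun t : ℝ =>
        (t:ℂ) * (evb b₁ v * h₁ ((t:ℂ)*v + (t:ℂ)^k * ((starRingEnd ℂ) v)^k))) :=
      evs_ofReal.mul ((Eh₁γ v).const_mul _)
    have E4 : EvS (fun t : ℝ =>
        (t:ℂ)^k * (evb (!b₁) v ^ k * h₁ ((t:ℂ)*v + (t:ℂ)^k * ((starRingEnd ℂ) v)^k))) :=
      (evs_tpow k).mul ((Eh₁γ v).const_mul _)
    have hevq : (fun t : ℝ =>
        ((t:ℂ) * (evb b₂ v * h₂ ((t:ℂ)*v))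
          + (t:ℂ)^m * (evb (!b₂) v ^ m * ((starRingEnd ℂ) (h₂ ((t:ℂ)*v))) ^ m))
        - ((t:ℂ) * (evb b₁ v * h₁ ((t:ℂ)*v + (t:ℂ)^k * ((starRingEnd ℂ) v)^k))
          + (t:ℂ)^k * (evb (!b₁) v ^ k * h₁ ((t:ℂ)*v + (t:ℂ)^k * ((starRingEnd ℂ) v)^k))))
        =ᶠ[𝓝 (0:ℝ)] (fun _ => (0:ℂ)) := hray v
    have h0 := hevq.iteratedDeriv_eq (n+1)
    rw [iter_zero_fun (n+1)] at h0
    rw [← iter_add (n+1) E1 E2, ← iter_add (n+1) E3 E4, ← iter_sub (n+1) (E1.add E2) (E3.add E4)]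
    exact h0
  -- order one
  have O1 : ∀ v : ℂ, evb b₂ v * h₂ 0 - evb b₁ v * h₁ 0 = 0 := by
    intro v
    have h := Phi 0 v
    rw [iter_tmul 0 ((Eh₂ v).const_mul _), iter_tmul 0 ((Eh₁γ v).const_mul _),
      iter_tpow_zero 1 m _ (by omega) ((Eh₂c v).const_mul _),
      iter_tpow_zero 1 k _ (by omega) ((Eh₁γ v).const_mul _)] at h
    rw [iteratedDeriv_zero, iteratedDeriv_zero] at h
    rw [hγ0 v, hv0 v] at h
    linear_combination h
  by_cases hb : b₂ = b₁
  · -- same type: use order min k m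
    subst hb
    have hminge : 2 ≤ min k m := le_min hk hm
    set p : ℕ := min k m - 1 with hpdef
    have hp1 : p + 1 = min k m := by omega
    obtain ⟨c₂, hc₂⟩ := rayform p h₂ hh₂
    obtain ⟨c₁, hc₁⟩ := rayform p h₁ hh₁
    have hpk : p < k := by omega
    -- primitive root
    have hζ := Complex.isPrimitiveRoot_exp (2*p+3) (by omega)
    have habs : ‖(Complex.exp (2 * Real.pi * I / (2*p+3 : ℕ)))‖ = 1 := by
      have harg : (2 * (Real.pi:ℂ) * I / ((2*p+3:ℕ):ℂ))
          = ((2*Real.pi/(2*p+3:ℕ) : ℝ):ℂ) * I := by push_cast; ring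
      rw [harg, Complex.norm_exp_ofReal_mul_I]
    -- common pieces at order p+1
    have HF1 : ∀ v : ℂ, iteratedDeriv (p+1)
        (fun t : ℝ => (t:ℂ) * (evb b₂ v * h₂ ((t:ℂ)*v))) 0
        = (p+1 : ℂ) * (evb b₂ v *
            ∑ a ∈ Finset.range (p+1), c₂ a * v ^ a * ((starRingEnd ℂ) v) ^ (p - a)) := by
      intro v
      rw [iter_tmul p ((Eh₂ v).const_mul _), iter_constmul p (Eh₂ v) _, hc₂ v]
    have HG1 : ∀ v : ℂ, iteratedDeriv (p+1)
        (fun t : ℝ => (t:ℂ) * (evb b₂ v * h₁ ((t:ℂ)*v + (t:ℂ)^k * ((starRingEnd ℂ) v)^k))) 0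
        = (p+1 : ℂ) * (evb b₂ v *
            ∑ a ∈ Finset.range (p+1), c₁ a * v ^ a * ((starRingEnd ℂ) v) ^ (p - a)) := by
      intro v
      rw [iter_tmul p ((Eh₁γ v).const_mul _), iter_constmul p (Eh₁γ v) _,
        phikill k hk p hpk h₁ hh₁ v, hc₁ v]
    rcases Nat.lt_or_ge k m with hkm' | hkm'
    · -- k < m : p + 1 = k
      have hpk1 : k = p + 1 := by omega
      have HF2 : ∀ v : ℂ, iteratedDeriv (p+1) (fun t : ℝ =>
          (t:ℂ)^m * (evb (!b₂) v ^ m * ((starRingEnd ℂ) (h₂ ((t:ℂ)*v))) ^ m)) 0 = 0 :=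
        fun v => iter_tpow_zero (p+1) m _ (by omega) ((Eh₂c v).const_mul _)
      have HG2 : ∀ v : ℂ, iteratedDeriv (p+1) (fun t : ℝ =>
          (t:ℂ)^k * (evb (!b₂) v ^ k * h₁ ((t:ℂ)*v + (t:ℂ)^k * ((starRingEnd ℂ) v)^k))) 0
          = (Nat.factorial (p+1) : ℂ) * (evb (!b₂) v ^ k * h₁ 0) := by
        intro v
        rw [show (fun t : ℝ =>
            (t:ℂ)^k * (evb (!b₂) v ^ k * h₁ ((t:ℂ)*v + (t:ℂ)^k * ((starRingEnd ℂ) v)^k)))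
          = fun t : ℝ =>
            (t:ℂ)^(p+1) * (evb (!b₂) v ^ k * h₁ ((t:ℂ)*v + (t:ℂ)^k * ((starRingEnd ℂ) v)^k))
          from by rw [← hpk1]]
        rw [iter_tpow_fact (p+1) _ ((Eh₁γ v).const_mul _)]
        rw [hγ0 v]
      -- assemble the kill hypothesis
      have HK : ∀ v : ℂ, evb b₂ v * (∑ a ∈ Finset.range (p+1),
            ((p+1:ℂ) * (c₂ a - c₁ a)) * v^a * ((starRingEnd ℂ) v) ^ (p-a))
          + evb (!b₂) v ^ (p+1) * (-((Nat.factorial (p+1) : ℂ) * h₁ 0)) = 0 := by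
        intro v
        have h := Phi p v
        rw [HF1 v, HG1 v, HF2 v, HG2 v] at h
        have hsum : ∑ a ∈ Finset.range (p+1),
            ((p+1:ℂ) * (c₂ a - c₁ a)) * v^a * ((starRingEnd ℂ) v) ^ (p-a)
            = (p+1:ℂ) * (∑ a ∈ Finset.range (p+1), c₂ a * v^a * ((starRingEnd ℂ) v) ^ (p-a))
            - (p+1:ℂ) * (∑ a ∈ Finset.range (p+1), c₁ a * v^a * ((starRingEnd ℂ) v) ^ (p-a)) := by
          rw [Finset.mul_sum, Finset.mul_sum, ← Finset.sum_sub_distrib]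
          exact Finset.sum_congr rfl fun a _ => by ring
        rw [hsum]
        rw [hpk1] at h
        linear_combination h
      have hK0 := kill p hζ habs b₂ _ _ HK
      have hfac : ((Nat.factorial (p+1) : ℕ) : ℂ) ≠ 0 :=
        Nat.cast_ne_zero.mpr (Nat.factorial_ne_zero _)
      rw [neg_eq_zero] at hK0
      exact h10 ((mul_eq_zero.mp hK0).resolve_left hfac)
    · -- m < k : p + 1 = m
      have hpm1 : m = p + 1 := by omega
      have HF2 : ∀ v : ℂ, iteratedDeriv (p+1) (fun t : ℝ =>
          (t:ℂ)^m * (evb (!b₂) v ^ m * ((starRingEnd ℂ) (h₂ ((t:ℂ)*v))) ^ m)) 0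
          = (Nat.factorial (p+1) : ℂ) * (evb (!b₂) v ^ m * ((starRingEnd ℂ) (h₂ 0)) ^ m) := by
        intro v
        rw [show (fun t : ℝ =>
            (t:ℂ)^m * (evb (!b₂) v ^ m * ((starRingEnd ℂ) (h₂ ((t:ℂ)*v))) ^ m))
          = fun t : ℝ =>
            (t:ℂ)^(p+1) * (evb (!b₂) v ^ m * ((starRingEnd ℂ) (h₂ ((t:ℂ)*v))) ^ m)
          from by rw [← hpm1]]
        rw [iter_tpow_fact (p+1) _ ((Eh₂c v).const_mul _)]
        rw [hv0 v]
      have HG2 : ∀ v : ℂ, iteratedDeriv (p+1) (fun t : ℝ =>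
          (t:ℂ)^k * (evb (!b₂) v ^ k * h₁ ((t:ℂ)*v + (t:ℂ)^k * ((starRingEnd ℂ) v)^k))) 0 = 0 :=
        fun v => iter_tpow_zero (p+1) k _ (by omega) ((Eh₁γ v).const_mul _)
      have HK : ∀ v : ℂ, evb b₂ v * (∑ a ∈ Finset.range (p+1),
            ((p+1:ℂ) * (c₂ a - c₁ a)) * v^a * ((starRingEnd ℂ) v) ^ (p-a))
          + evb (!b₂) v ^ (p+1) * ((Nat.factorial (p+1) : ℂ) * ((starRingEnd ℂ) (h₂ 0)) ^ (p+1)) = 0 := by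
        intro v
        have h := Phi p v
        rw [HF1 v, HG1 v, HF2 v, HG2 v] at h
        have hsum : ∑ a ∈ Finset.range (p+1),
            ((p+1:ℂ) * (c₂ a - c₁ a)) * v^a * ((starRingEnd ℂ) v) ^ (p-a)
            = (p+1:ℂ) * (∑ a ∈ Finset.range (p+1), c₂ a * v^a * ((starRingEnd ℂ) v) ^ (p-a))
            - (p+1:ℂ) * (∑ a ∈ Finset.range (p+1), c₁ a * v^a * ((starRingEnd ℂ) v) ^ (p-a)) := by
          rw [Finset.mul_sum, Finset.mul_sum, ← Finset.sum_sub_distrib]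
          exact Finset.sum_congr rfl fun a _ => by ring
        rw [hsum]
        rw [hpm1] at h
        linear_combination h
      have hK0 := kill p hζ habs b₂ _ _ HK
      have hfac : ((Nat.factorial (p+1) : ℕ) : ℂ) ≠ 0 :=
        Nat.cast_ne_zero.mpr (Nat.factorial_ne_zero _)
      have hc0 : ((starRingEnd ℂ) (h₂ 0)) ^ (p+1) ≠ 0 := by
        apply pow_ne_zero
        rw [starRingEnd_apply]
        exact fun hcon => h20 (star_eq_zero.mp hcon)
      exact hc0 ((mul_eq_zero.mp hK0).resolve_left hfac)
  · -- different types: contradiction at order one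
    have H1 := O1 1
    have HI := O1 I
    have h2I : (2*I : ℂ) ≠ 0 := by simp [Complex.I_ne_zero]
    cases b₁ <;> cases b₂
    · exact hb rfl
    · -- b₁ = false, b₂ = true
      simp only [evb, if_true, Bool.false_eq_true, if_false, map_one, Complex.conj_I] at H1 HI
      have key : 2*I*h₁ 0 = 0 := by linear_combination (-1 : ℂ) * HI - I * H1
      exact h10 ((mul_eq_zero.mp key).resolve_left h2I)
    · -- b₁ = true, b₂ = false
      simp only [evb, if_true, Bool.false_eq_true, if_false, map_one, Complex.conj_I] at H1 HI
      have key : 2*I*h₁ 0 = 0 := by linear_combination HI - I * H1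
      exact h10 ((mul_eq_zero.mp key).resolve_left h2I)
    · exact hb rfl

end Aux18

/-- A germ `ψ` of `(ℂ, 0)` is liftable (admits a lift through `(u,v) ↦ u·v`) iff it
is smooth near `0` and, near `0`, of the form `ψ z = z·h z` or `ψ z = conj z·h z`
with `h` smooth near `0` and `h 0 ≠ 0`. -/
def LiftableForm (ψ : ℂ → ℂ) : Prop :=
  ContDiffAt ℝ (⊤ : ℕ∞) ψ 0 ∧
  ∃ h : ℂ → ℂ, ContDiffAt ℝ (⊤ : ℕ∞) h 0 ∧ h 0 ≠ 0 ∧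
    ((∀ᶠ z in 𝓝 0, ψ z = z * h z) ∨
     (∀ᶠ z in 𝓝 0, ψ z = (starRingEnd ℂ) z * h z))

/-- The germs `φ z = z + conj z ^ k` for different `k ≥ 2` lie in different orbits
of the left-right action by liftable germs: there are no liftable `ψ₁, ψ₂` with
`φ̃ ∘ ψ₂ = ψ₁ ∘ φ` near `0`, where `φ̃ z = z + conj z ^ m` and `k ≠ m`. -/
theorem statement18 (k m : ℕ) (hk : 2 ≤ k) (hm : 2 ≤ m) (hkm : k ≠ m)
    (φ φt : ℂ → ℂ)
    (hφ : ∀ z, φ z = z + (starRingEnd ℂ) z ^ k)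
    (hφt : ∀ z, φt z = z + (starRingEnd ℂ) z ^ m) :
    ¬∃ ψ₁ ψ₂ : ℂ → ℂ, LiftableForm ψ₁ ∧ LiftableForm ψ₂ ∧
      ∀ᶠ z in 𝓝 0, φt (ψ₂ z) = ψ₁ (φ z) := by
  rintro ⟨ψ₁, ψ₂, ⟨hψ₁s, h₁, hh₁, h10, hform₁⟩, ⟨hψ₂s, h₂, hh₂, h20, hform₂⟩, hE⟩
  have hφc : Tendsto φ (𝓝 0) (𝓝 (0:ℂ)) := by
    have hφeq : φ = fun z => z + (starRingEnd ℂ) z ^ k := funext hφ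
    have hc : Continuous fun z : ℂ => z + (starRingEnd ℂ) z ^ k :=
      continuous_id.add (Complex.continuous_conj.pow k)
    have h0 : (fun z : ℂ => z + (starRingEnd ℂ) z ^ k) 0 = 0 := by
      simp [zero_pow (by omega : k ≠ 0)]
    rw [hφeq]
    simpa [h0, zero_pow (by omega : k ≠ 0)] using hc.tendsto 0
  have hform₂' : ∃ b₂ : Bool, ∀ᶠ z in 𝓝 (0:ℂ), ψ₂ z = evb b₂ z * h₂ z := by
    rcases hform₂ with h | h
    · exact ⟨false, h.mono fun z hz => by simpa [evb] using hz⟩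
    · exact ⟨true, h.mono fun z hz => by simpa [evb] using hz⟩
  have hform₁' : ∃ b₁ : Bool, ∀ᶠ z in 𝓝 (0:ℂ), ψ₁ z = evb b₁ z * h₁ z := by
    rcases hform₁ with h | h
    · exact ⟨false, h.mono fun z hz => by simpa [evb] using hz⟩
    · exact ⟨true, h.mono fun z hz => by simpa [evb] using hz⟩
  obtain ⟨b₂, hf₂⟩ := hform₂'
  obtain ⟨b₁, hf₁⟩ := hform₁'
  refine main_aux k m hk hm hkm h₁ h₂ hh₁ hh₂ h10 h20 b₁ b₂ ?_
  filter_upwards [hE, hf₂, hφc.eventually hf₁] with z e1 e2 e3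
  calc evb b₂ z * h₂ z + (starRingEnd ℂ) (evb b₂ z * h₂ z) ^ m
      = ψ₂ z + (starRingEnd ℂ) (ψ₂ z) ^ m := by rw [e2]
    _ = φt (ψ₂ z) := (hφt _).symm
    _ = ψ₁ (φ z) := e1
    _ = evb b₁ (φ z) * h₁ (φ z) := e3
    _ = _ := by rw [hφ z]
end
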